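/- arXiv:2211.04922 — 9 statements merged into one kernel-verified Lean document; each statement's English description precedes it below -/
import Mathlib

section
/- Let (E, 𝒫) be a set system with 𝒫 ⊆ 2^E, let π : 𝒫 → [0,1], and let ρ, ρ' ∈ [0,1]^E with ρ'_e ≤ ρ_e for all e ∈ E. If there exists a probability distribution x' on 2^E such that ∑_{S ∋ e} x'_S = ρ'_e for all e ∈ E and ∑_{S : S ∩ P ≠ ∅} x'_S ≥ π_P for all P ∈ 𝒫, then there also exists a probability distribution x on 2^E such that ∑_{S ∋ e} x_S = ρ_e for all e ∈ E and ∑_{S : S ∩ P ≠ ∅} x_S ≥ π_P for all P ∈ 𝒫. -/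
open Finset

/-- A feasible decomposition of marginals `ρ` for the set system `(E, Ps)` with
requirements `π`: a probability distribution `x` on `2^E` with marginals `ρ`
hitting each `P ∈ Ps` with probability at least `π P`. -/
def IsFeasibleDecomp {E : Type*} [Fintype E] [DecidableEq E]
    (Ps : Finset (Finset E)) (π : Finset E → ℝ) (ρ : E → ℝ)
    (x : Finset E → ℝ) : Prop :=
  (∀ S, 0 ≤ x S) ∧ (∑ S : Finset E, x S = 1) ∧
  (∀ e : E, ∑ S ∈ Finset.univ.filter (fun S : Finset E => e ∈ S), x S = ρ e) ∧
  (∀ P ∈ Ps, π P ≤ ∑ S ∈ Finset.univ.filter (fun S : Finset E => (S ∩ P).Nonempty), x S)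

lemma sum_erase_bij {E : Type*} [Fintype E] [DecidableEq E] (e : E)
    (p : Finset E → Prop) [DecidablePred p] (g : Finset E → ℝ) :
    ∑ S ∈ univ.filter (fun S => e ∈ S ∧ p S), g (S.erase e) =
    ∑ S ∈ univ.filter (fun S => e ∉ S ∧ p (insert e S)), g S := by
  apply Finset.sum_nbij' (i := fun S => S.erase e) (j := fun S => insert e S)
  · intro S hS
    simp only [mem_filter, mem_univ, true_and] at hS ⊢
    refine ⟨by simp, ?_⟩
    rw [Finset.insert_erase hS.1]; exact hS.2
  · intro S hS
    simp only [mem_filter, mem_univ, true_and] at hS ⊢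
    exact ⟨Finset.mem_insert_self _ _, hS.2⟩
  · intro S hS
    simp only [mem_filter, mem_univ, true_and] at hS
    rw [Finset.insert_erase hS.1]
  · intro S hS
    simp only [mem_filter, mem_univ, true_and] at hS
    rw [Finset.erase_insert hS.1]
  · intro S hS; rfl

lemma sum_erase_bij0 {E : Type*} [Fintype E] [DecidableEq E] (e : E)
    (g : Finset E → ℝ) :
    ∑ S ∈ univ.filter (fun S : Finset E => e ∈ S), g (S.erase e) =
    ∑ S ∈ univ.filter (fun S : Finset E => e ∉ S), g S := by
  have := sum_erase_bij e (fun _ => True) g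
  simpa using this

lemma sum_split {E : Type*} [Fintype E] [DecidableEq E] (e : E)
    (p : Finset E → Prop) [DecidablePred p] (h : Finset E → ℝ) :
    ∑ S ∈ univ.filter p, h S =
      ∑ S ∈ univ.filter (fun S => e ∈ S ∧ p S), h S +
      ∑ S ∈ univ.filter (fun S => e ∉ S ∧ p S), h S := by
  rw [← Finset.sum_filter_add_sum_filter_not (univ.filter p) (fun S => e ∈ S),
    Finset.filter_filter, Finset.filter_filter]
  congr 1 <;> apply Finset.sum_congr _ (fun _ _ => rfl) <;>
    apply Finset.filter_congr <;> intro S _ <;> simp [and_comm]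

lemma step {E : Type*} [Fintype E] [DecidableEq E]
    (Ps : Finset (Finset E)) (π : Finset E → ℝ) (e : E) (ρ ρ' : E → ℝ)
    (heq : ∀ f, f ≠ e → ρ f = ρ' f) (h1 : ρ' e ≤ ρ e) (h2 : ρ e ≤ 1)
    (x' : Finset E → ℝ) (hx' : IsFeasibleDecomp Ps π ρ' x') :
    ∃ x : Finset E → ℝ, IsFeasibleDecomp Ps π ρ x := by
  obtain ⟨hpos, hsum, hmarg, hhit⟩ := hx'
  set t : ℝ := ∑ S ∈ univ.filter (fun S : Finset E => e ∉ S), x' S with ht_def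
  have htsum : ρ' e + t = 1 := by
    rw [← hmarg e, ht_def, Finset.sum_filter_add_sum_filter_not]
    exact hsum
  have ht0 : 0 ≤ t := Finset.sum_nonneg fun S _ => hpos S
  by_cases ht : t = 0
  · have : ρ = ρ' := by
      funext f
      by_cases hf : f = e
      · subst hf; linarith
      · exact heq f hf
    exact ⟨x', this ▸ ⟨hpos, hsum, hmarg, hhit⟩⟩
  · have htpos : 0 < t := lt_of_le_of_ne ht0 (Ne.symm ht)
    set c : ℝ := (ρ e - ρ' e) / t with hc_def
    have hc0 : 0 ≤ c := div_nonneg (by linarith) ht0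
    have hc1 : c ≤ 1 := by
      rw [hc_def, div_le_one htpos]; linarith
    have hct : c * t = ρ e - ρ' e := by
      rw [hc_def]; field_simp
    set x : Finset E → ℝ :=
      fun S => if e ∈ S then x' S + c * x' (S.erase e) else (1 - c) * x' S with hx_def
    have hifpos : ∀ (p : Finset E → Prop) [DecidablePred p],
        ∑ S ∈ univ.filter (fun S => e ∈ S ∧ p S), x S
          = ∑ S ∈ univ.filter (fun S => e ∈ S ∧ p S), (x' S + c * x' (S.erase e)) := by
      intro p _
      apply Finset.sum_congr rfl; intro S hS
      simp only [mem_filter, mem_univ, true_and] at hS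
      rw [hx_def]; simp only [if_pos hS.1]
    have hifneg : ∀ (p : Finset E → Prop) [DecidablePred p],
        ∑ S ∈ univ.filter (fun S => e ∉ S ∧ p S), x S
          = ∑ S ∈ univ.filter (fun S => e ∉ S ∧ p S), (1 - c) * x' S := by
      intro p _
      apply Finset.sum_congr rfl; intro S hS
      simp only [mem_filter, mem_univ, true_and] at hS
      rw [hx_def]; simp only [if_neg hS.1]
    refine ⟨x, ?_, ?_, ?_, ?_⟩
    · intro S
      rw [hx_def]
      by_cases hS : e ∈ S
      · simp only [if_pos hS]
        have := hpos S; have := hpos (S.erase e); positivity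
      · simp only [if_neg hS]
        exact mul_nonneg (by linarith) (hpos S)
    · have : ∑ S : Finset E, x S = ∑ S ∈ univ.filter (fun _ : Finset E => True), x S := by
        simp
      rw [this, sum_split e, hifpos, hifneg, Finset.sum_add_distrib, ← Finset.mul_sum,
        ← Finset.mul_sum, sum_erase_bij e (fun _ => True)]
      have e1 : (univ.filter (fun S : Finset E => e ∈ S ∧ True)) = univ.filter (fun S : Finset E => e ∈ S) := by simp
      have e2 : (univ.filter (fun S : Finset E => e ∉ S ∧ True)) = univ.filter (fun S : Finset E => e ∉ S) := by simp
      rw [e1, e2, hmarg e, ← ht_def]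
      nlinarith [htsum]
    · intro f
      by_cases hf : f = e
      · subst hf
        have : (univ.filter (fun S : Finset E => f ∈ S)) = univ.filter (fun S : Finset E => f ∈ S ∧ True) := by simp
        rw [this, hifpos, Finset.sum_add_distrib, ← Finset.mul_sum]
        have e1 : (univ.filter (fun S : Finset E => f ∈ S ∧ True)) = univ.filter (fun S : Finset E => f ∈ S) := by simp
        rw [e1, hmarg f, sum_erase_bij0 f, ← ht_def]
        linarith [hct]
      · rw [sum_split e (fun S => f ∈ S), hifpos, hifneg, Finset.sum_add_distrib,
          ← Finset.mul_sum, ← Finset.mul_sum, sum_erase_bij e (fun S => f ∈ S)]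
        have e1 : (univ.filter (fun S : Finset E => e ∉ S ∧ f ∈ insert e S))
            = univ.filter (fun S : Finset E => e ∉ S ∧ f ∈ S) := by
          apply Finset.filter_congr; intro S _
          simp [Finset.mem_insert, hf]
        rw [e1]
        have key : ∑ S ∈ univ.filter (fun S => e ∈ S ∧ f ∈ S), x' S
            + ∑ S ∈ univ.filter (fun S => e ∉ S ∧ f ∈ S), x' S = ρ' f := by
          rw [← sum_split e (fun S => f ∈ S), hmarg f]
        rw [heq f hf]
        nlinarith [key]
    · intro P hP
      refine le_trans (hhit P hP) ?_
      rw [sum_split e (fun S => (S ∩ P).Nonempty), sum_split e (fun S => (S ∩ P).Nonempty) x,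
        hifpos, hifneg, Finset.sum_add_distrib, ← Finset.mul_sum, ← Finset.mul_sum,
        sum_erase_bij e (fun S => (S ∩ P).Nonempty)]
      have hsub : ∑ S ∈ univ.filter (fun S => e ∉ S ∧ (S ∩ P).Nonempty), x' S
          ≤ ∑ S ∈ univ.filter (fun S => e ∉ S ∧ ((insert e S) ∩ P).Nonempty), x' S := by
        apply Finset.sum_le_sum_of_subset_of_nonneg
        · intro S hS
          simp only [mem_filter, mem_univ, true_and] at hS ⊢
          exact ⟨hS.1, hS.2.mono (Finset.inter_subset_inter (Finset.subset_insert e S) le_rfl)⟩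
        · intro S _ _; exact hpos S
      have hB0 : 0 ≤ ∑ S ∈ univ.filter (fun S => e ∉ S ∧ (S ∩ P).Nonempty), x' S :=
        Finset.sum_nonneg fun S _ => hpos S
      nlinarith [hsub, hB0]

/-- Monotonicity of feasibility in the marginals: if `ρ' ≤ ρ` pointwise and `ρ'`
admits a feasible decomposition, then so does `ρ`. -/
theorem feasible_of_le {E : Type*} [Fintype E] [DecidableEq E]
    (Ps : Finset (Finset E)) (π : Finset E → ℝ)
    (hπ : ∀ P ∈ Ps, 0 ≤ π P ∧ π P ≤ 1)
    (ρ ρ' : E → ℝ)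
    (hρ : ∀ e, 0 ≤ ρ e ∧ ρ e ≤ 1) (hρ' : ∀ e, 0 ≤ ρ' e ∧ ρ' e ≤ 1)
    (hle : ∀ e, ρ' e ≤ ρ e)
    (x' : Finset E → ℝ) (hx' : IsFeasibleDecomp Ps π ρ' x') :
    ∃ x : Finset E → ℝ, IsFeasibleDecomp Ps π ρ x := by
  have main : ∀ A : Finset E,
      ∃ x, IsFeasibleDecomp Ps π (fun f => if f ∈ A then ρ f else ρ' f) x := by
    intro A
    induction A using Finset.induction_on with
    | empty =>
      refine ⟨x', ?_⟩
      simpa using hx'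
    | insert a A ha ih =>
      obtain ⟨y, hy⟩ := ih
      refine step Ps π a _ _ ?_ ?_ ?_ y hy
      · intro f hf
        simp [Finset.mem_insert, hf]
      · simp only [Finset.mem_insert_self, if_pos, ha, if_neg]
        exact hle a
      · simp only [Finset.mem_insert_self, if_pos]
        exact (hρ a).2
  obtain ⟨x, hx⟩ := main univ
  refine ⟨x, ?_⟩
  simpa using hx
end

section
/- Let E be a finite set and 𝒫 ⊆ 2^E a set system such that the polyhedron Y_𝒫 := {y ∈ ℝ_+^E : ∑_{e∈P} y_e ≥ 1 for all P ∈ 𝒫} is integral (weak max-flow/min-cut property). Let μ ∈ [0,1]^E and define π_P := 1 − ∑_{e∈P} μ_e for P ∈ 𝒫. Then for every ρ ∈ [0,1]^E satisfying ∑_{e∈P} ρ_e ≥ π_P for all P ∈ 𝒫, there exists a probability distribution x on 2^E with ∑_{S ∋ e} x_S = ρ_e for all e ∈ E and ∑_{S : S∩P ≠ ∅} x_S ≥ π_P for all P ∈ 𝒫. -/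
open Finset

/-- The covering polyhedron `Y_𝒫 = {y ∈ ℝ₊^E : ∑_{e ∈ P} y_e ≥ 1 ∀ P ∈ 𝒫}`. -/
def coverPolyhedron {E : Type*} [Fintype E] (Ps : Finset (Finset E)) : Set (E → ℝ) :=
  {y | (∀ e, 0 ≤ y e) ∧ ∀ P ∈ Ps, 1 ≤ ∑ e ∈ P, y e}

open Pointwise

-- L0: truncation
lemma trunc_mem {E : Type*} [Fintype E] (Ps : Finset (Finset E)) {y : E → ℝ}
    (hy : y ∈ coverPolyhedron Ps) : (fun e => min (y e) 1) ∈ coverPolyhedron Ps := by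
  obtain ⟨h0, h1⟩ := hy
  refine ⟨fun e => le_min (h0 e) zero_le_one, fun P hP => ?_⟩
  by_cases h : ∃ e ∈ P, 1 ≤ y e
  · obtain ⟨e, heP, he⟩ := h
    calc (1:ℝ) = min (y e) 1 := (min_eq_right he).symm
    _ ≤ ∑ e ∈ P, min (y e) 1 :=
      Finset.single_le_sum (fun f _ => le_min (h0 f) zero_le_one) heP
  · push_neg at h
    calc (1:ℝ) ≤ ∑ e ∈ P, y e := h1 P hP
    _ = ∑ e ∈ P, min (y e) 1 := by
        apply Finset.sum_congr rfl
        intro e he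
        exact (min_eq_left (le_of_lt (h e he))).symm

-- L1: integral extreme points are transversal indicators
lemma extreme_is_indicator {E : Type*} [Fintype E] [DecidableEq E] (Ps : Finset (Finset E))
    {v : E → ℝ} (hv : v ∈ Set.extremePoints ℝ (coverPolyhedron Ps))
    (hint : ∀ e, ∃ n : ℤ, v e = n) :
    ∃ T : Finset E, (∀ P ∈ Ps, (T ∩ P).Nonempty) ∧ v = fun e => if e ∈ T then 1 else 0 := by
  obtain ⟨hvY, hext⟩ := hv
  have hle1 : ∀ e, v e ≤ 1 := by
    intro e
    by_contra hgt
    push_neg at hgt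
    set ε := v e - 1 with hε
    have hεpos : 0 < ε := by linarith
    set d : E → ℝ := fun f => if f = e then ε else 0 with hd
    have h1 : v - d ∈ coverPolyhedron Ps := by
      constructor
      · intro f
        by_cases hf : f = e
        · simp [hd, hf]; subst hf; linarith [hvY.1 f]
        · simpa [hd, hf] using hvY.1 f
      · intro P hP
        by_cases heP : e ∈ P
        · have hsum : ∑ f ∈ P, (v - d) f = (∑ f ∈ P, v f) - ε := by
            simp only [Pi.sub_apply, Finset.sum_sub_distrib]
            congr 1
            rw [hd]
            rw [Finset.sum_ite_eq' P e (fun _ => ε)]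
            simp [heP]
          have hve : v e ≤ ∑ f ∈ P, v f :=
            Finset.single_le_sum (fun f _ => hvY.1 f) heP
          rw [hsum]; rw [hε]; linarith
        · have hsum : ∑ f ∈ P, (v - d) f = ∑ f ∈ P, v f := by
            simp only [Pi.sub_apply, Finset.sum_sub_distrib]
            rw [hd, Finset.sum_ite_eq' P e (fun _ => ε)]
            simp [heP]
          rw [hsum]; exact hvY.2 P hP
    have h2 : v + d ∈ coverPolyhedron Ps := by
      constructor
      · intro f
        have hd0 : 0 ≤ d f := by
          rw [hd]; dsimp only; split_ifs
          · exact le_of_lt hεpos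
          · exact le_rfl
        have := hvY.1 f
        simp only [Pi.add_apply]
        linarith
      · intro P hP
        refine le_trans (hvY.2 P hP) (Finset.sum_le_sum fun f _ => ?_)
        by_cases hf : f = e
        · simp [hd, hf]; linarith
        · simp [hd, hf]
    have hmem : v ∈ openSegment ℝ (v - d) (v + d) := by
      refine ⟨1/2, 1/2, by norm_num, by norm_num, by norm_num, ?_⟩
      ext f
      simp only [Pi.add_apply, Pi.sub_apply, Pi.smul_apply, smul_eq_mul]
      ring
    have := hext h1 h2 hmem
    have hde : d e = 0 := by
      have := congrFun this e
      simp only [Pi.sub_apply] at this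
      linarith
    rw [hd] at hde; simp at hde; linarith
  refine ⟨Finset.univ.filter (fun e => v e = 1), ?_, ?_⟩
  · intro P hP
    by_contra hemp
    rw [Finset.not_nonempty_iff_eq_empty] at hemp
    have hall : ∀ e ∈ P, v e = 0 := by
      intro e heP
      obtain ⟨n, hn⟩ := hint e
      have h0 : 0 ≤ v e := hvY.1 e
      have h1 : v e ≤ 1 := hle1 e
      have hne : v e ≠ 1 := by
        intro h
        have : e ∈ (Finset.univ.filter (fun e => v e = 1)) ∩ P := by
          simp [h, heP]
        rw [hemp] at this; simp at this
      rw [hn] at h0 h1 hne ⊢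
      have hn0 : (0:ℤ) ≤ n := by exact_mod_cast h0
      have hn1 : n ≤ 1 := by exact_mod_cast h1
      have hne1 : n ≠ 1 := by
        intro hc; apply hne; rw [hc]; norm_num
      have : n = 0 := by omega
      rw [this]; norm_num
    have := hvY.2 P hP
    rw [Finset.sum_congr rfl hall] at this
    simp at this; linarith
  · ext e
    obtain ⟨n, hn⟩ := hint e
    by_cases h : v e = 1
    · simp [h]
    · have h0 : 0 ≤ v e := hvY.1 e
      have h1 : v e ≤ 1 := hle1 e
      have : v e = 0 := by
        rw [hn] at h0 h1 h ⊢
        have hn0 : (0:ℤ) ≤ n := by exact_mod_cast h0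
        have hn1 : (n:ℤ) ≤ 1 := by exact_mod_cast h1
        have : n ≠ 1 := by intro hc; apply h; rw [hc]; norm_num
        have : n = 0 := by omega
        rw [this]; norm_num
      simp [this, h]

lemma closed_cover {E : Type*} [Fintype E] (Ps : Finset (Finset E)) :
    IsClosed (coverPolyhedron Ps) := by
  have : coverPolyhedron Ps =
      (⋂ e, {y : E → ℝ | 0 ≤ y e}) ∩ ⋂ P ∈ Ps, {y : E → ℝ | 1 ≤ ∑ e ∈ P, y e} := by
    ext y; simp [coverPolyhedron, Set.mem_iInter]
  rw [this]
  refine IsClosed.inter (isClosed_iInter fun e => isClosed_le continuous_const (continuous_apply e))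
    (isClosed_biInter fun P _ => isClosed_le continuous_const ?_)
  exact continuous_finset_sum _ fun e _ => continuous_apply e

lemma convex_cover {E : Type*} [Fintype E] (Ps : Finset (Finset E)) :
    Convex ℝ (coverPolyhedron Ps) := by
  intro y1 hy1 y2 hy2 a b ha hb hab
  constructor
  · intro e
    have := hy1.1 e; have := hy2.1 e
    simp only [Pi.add_apply, Pi.smul_apply, smul_eq_mul]
    nlinarith
  · intro P hP
    have h1 := hy1.2 P hP; have h2 := hy2.2 P hP
    simp only [Pi.add_apply, Pi.smul_apply, smul_eq_mul, Finset.sum_add_distrib,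
      ← Finset.mul_sum]
    nlinarith

lemma exists_transversal_min {E : Type*} [Fintype E] [DecidableEq E] (Ps : Finset (Finset E))
    (hMFMC : ∀ y ∈ Set.extremePoints ℝ (coverPolyhedron Ps), ∀ e, ∃ n : ℤ, y e = n)
    {w : E → ℝ} (hw : ∀ e, 0 < w e) {z : E → ℝ} (hz : z ∈ coverPolyhedron Ps)
    (hz1 : ∀ e, z e ≤ 1) :
    ∃ T : Finset E, (∀ P ∈ Ps, (T ∩ P).Nonempty) ∧ ∑ e ∈ T, w e ≤ ∑ e, w e * z e := by
  classical
  set Y := coverPolyhedron Ps with hY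
  set K := Y ∩ Set.Icc (0 : E → ℝ) 1 with hK
  have hzK : z ∈ K := ⟨hz, by
    rw [Set.mem_Icc]
    exact ⟨fun e => hz.1 e, fun e => hz1 e⟩⟩
  have hKcomp : IsCompact K := (isCompact_Icc).inter_left (closed_cover Ps)
  set f : (E → ℝ) → ℝ := fun y => ∑ e, w e * y e with hf
  have hfc : Continuous f := continuous_finset_sum _ fun e _ => (continuous_const.mul (continuous_apply e))
  obtain ⟨v0, hv0K, hv0min⟩ := hKcomp.exists_isMinOn ⟨z, hzK⟩ hfc.continuousOn
  set m := f v0 with hm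
  -- global min over Y
  have hglob : ∀ y ∈ Y, m ≤ f y := by
    intro y hy
    have htr := trunc_mem Ps hy
    have h1 : f (fun e => min (y e) 1) ≤ f y := by
      apply Finset.sum_le_sum
      intro e _
      exact mul_le_mul_of_nonneg_left (min_le_left _ _) (le_of_lt (hw e))
    have h2 : (fun e => min (y e) 1) ∈ K := ⟨htr, by
      rw [Set.mem_Icc]
      refine ⟨fun e => le_min (hy.1 e) zero_le_one, fun e => min_le_right _ _⟩⟩
    exact le_trans (hv0min h2) h1
  -- the face F
  set F := K ∩ {y | f y = m} with hF
  have hFcomp : IsCompact F := hKcomp.inter_right (isClosed_eq hfc continuous_const)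
  have hFne : F.Nonempty := ⟨v0, hv0K, rfl⟩
  have hFconv : Convex ℝ F := by
    refine Convex.inter ((convex_cover Ps).inter (convex_Icc _ _)) ?_
    intro y1 hy1 y2 hy2 a b ha hb hab
    simp only [Set.mem_setOf_eq] at hy1 hy2 ⊢
    have : f (a • y1 + b • y2) = a * f y1 + b * f y2 := by
      simp only [hf, Pi.add_apply, Pi.smul_apply, smul_eq_mul, Finset.mul_sum,
        ← Finset.sum_add_distrib]
      apply Finset.sum_congr rfl
      intro e _; ring
    rw [this, hy1, hy2, ← add_mul, hab, one_mul]
  obtain ⟨v, hvF⟩ := hFcomp.extremePoints_nonempty hFne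
  -- v is an extreme point of Y
  have hvY : v ∈ Set.extremePoints ℝ Y := by
    obtain ⟨⟨hvK, hvm⟩, hvext⟩ := hvF
    refine ⟨hvK.1, ?_⟩
    intro x1 hx1 x2 hx2 hseg
    obtain ⟨a, b, ha, hb, hab, habv⟩ := hseg
    have hfv : f v = m := hvm
    have hfx1 : m ≤ f x1 := hglob _ hx1
    have hfx2 : m ≤ f x2 := hglob _ hx2
    have hlin : f (a • x1 + b • x2) = a * f x1 + b * f x2 := by
      simp only [hf, Pi.add_apply, Pi.smul_apply, smul_eq_mul, Finset.mul_sum,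
        ← Finset.sum_add_distrib]
      apply Finset.sum_congr rfl
      intro e _; ring
    rw [habv] at hlin
    have h := hlin; rw [hfv] at h
    have key : a * (f x1 - m) + b * (f x2 - m) = 0 := by
      linear_combination (-1) * h - m * hab
    have h1 : a * (f x1 - m) = 0 :=
      le_antisymm (by linarith [mul_nonneg hb.le (sub_nonneg.2 hfx2)])
        (mul_nonneg ha.le (sub_nonneg.2 hfx1))
    have h2 : b * (f x2 - m) = 0 :=
      le_antisymm (by linarith [mul_nonneg ha.le (sub_nonneg.2 hfx1)])
        (mul_nonneg hb.le (sub_nonneg.2 hfx2))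
    have hfx1' : f x1 = m := by
      rcases mul_eq_zero.1 h1 with hc | hc
      · exact absurd hc (ne_of_gt ha)
      · linarith
    have hfx2' : f x2 = m := by
      rcases mul_eq_zero.1 h2 with hc | hc
      · exact absurd hc (ne_of_gt hb)
      · linarith
    -- x1, x2 ∈ [0,1]^E
    have hbox : ∀ x ∈ Y, f x = m → x ∈ Set.Icc (0 : E → ℝ) 1 := by
      intro x hx hxm
      rw [Set.mem_Icc]
      refine ⟨fun e => hx.1 e, fun e => ?_⟩
      by_contra hgt
      push_neg at hgt
      have htr := trunc_mem Ps hx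
      have h2 : (fun e => min (x e) 1) ∈ K := ⟨htr, by
        rw [Set.mem_Icc]
        exact ⟨fun e' => le_min (hx.1 e') zero_le_one, fun e' => min_le_right _ _⟩⟩
      have hlt : f (fun e => min (x e) 1) < f x := by
        apply Finset.sum_lt_sum
        · intro i _
          exact mul_le_mul_of_nonneg_left (min_le_left _ _) (le_of_lt (hw i))
        · refine ⟨e, Finset.mem_univ e, ?_⟩
          have hme : min (x e) 1 = 1 := min_eq_right (le_of_lt hgt)
          dsimp only
          rw [hme]
          exact (mul_lt_mul_iff_right₀ (hw e)).2 hgt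
      have h3 : m ≤ f (fun e => min (x e) 1) := hv0min h2
      rw [hxm] at hlt
      linarith
    have hx1F : x1 ∈ F := ⟨⟨hx1, hbox _ hx1 hfx1'⟩, hfx1'⟩
    have hx2F : x2 ∈ F := ⟨⟨hx2, hbox _ hx2 hfx2'⟩, hfx2'⟩
    exact hvext hx1F hx2F ⟨a, b, ha, hb, hab, habv⟩
  obtain ⟨T, hT, hvT⟩ := extreme_is_indicator Ps hvY (hMFMC v hvY)
  refine ⟨T, hT, ?_⟩
  have hfvT : f v = ∑ e ∈ T, w e := by
    rw [hvT]
    simp only [hf, mul_ite, mul_one, mul_zero]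
    rw [Finset.sum_ite_mem]
    congr 1
    exact Finset.univ_inter T
  have : f v = m := hvF.1.2
  calc ∑ e ∈ T, w e = m := by rw [← hfvT, this]
  _ ≤ f z := hv0min hzK

-- L3 : nonneg weights
lemma exists_transversal_min' {E : Type*} [Fintype E] [DecidableEq E] (Ps : Finset (Finset E))
    (hMFMC : ∀ y ∈ Set.extremePoints ℝ (coverPolyhedron Ps), ∀ e, ∃ n : ℤ, y e = n)
    {w : E → ℝ} (hw : ∀ e, 0 ≤ w e) {z : E → ℝ} (hz : z ∈ coverPolyhedron Ps)
    (hz1 : ∀ e, z e ≤ 1) :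
    ∃ T : Finset E, (∀ P ∈ Ps, (T ∩ P).Nonempty) ∧ ∑ e ∈ T, w e ≤ ∑ e, w e * z e := by
  classical
  by_contra hcon
  push_neg at hcon
  -- the set of transversals is a nonempty finite set
  have huniv : ∀ P ∈ Ps, ((Finset.univ : Finset E) ∩ P).Nonempty := by
    intro P hP
    rw [Finset.univ_inter]
    rcases Finset.eq_empty_or_nonempty P with hPe | hPn
    · exfalso
      have := hz.2 P hP
      rw [hPe] at this
      simp only [Finset.sum_empty] at this
      linarith
    · exact hPn
  set Tset : Finset (Finset E) := Finset.univ.filter (fun T => ∀ P ∈ Ps, (T ∩ P).Nonempty)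
    with hTset
  have hTne : Tset.Nonempty := ⟨Finset.univ, by
    rw [hTset, Finset.mem_filter]
    exact ⟨Finset.mem_univ _, huniv⟩⟩
  obtain ⟨T0, hT0, hT0min⟩ := Tset.exists_min_image
    (fun T => ∑ e ∈ T, w e - ∑ e, w e * z e) hTne
  rw [hTset, Finset.mem_filter] at hT0
  set δ := ∑ e ∈ T0, w e - ∑ e, w e * z e with hδ
  have hδpos : 0 < δ := by
    have := hcon T0 hT0.2
    rw [hδ]; linarith
  set ε := δ / (Fintype.card E + 1) with hε
  have hεpos : 0 < ε := by
    apply div_pos hδpos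
    positivity
  obtain ⟨T, hT, hTle⟩ := exists_transversal_min Ps hMFMC
    (w := fun e => w e + ε) (fun e => add_pos_of_nonneg_of_pos (hw e) hεpos) hz hz1
  have hTmem : T ∈ Tset := by
    rw [hTset, Finset.mem_filter]
    exact ⟨Finset.mem_univ _, hT⟩
  have h1 : ∑ e ∈ T, (w e + ε) = (∑ e ∈ T, w e) + ε * T.card := by
    rw [Finset.sum_add_distrib, Finset.sum_const, nsmul_eq_mul]; ring
  have h2 : ∑ e, (w e + ε) * z e = (∑ e, w e * z e) + ε * ∑ e, z e := by
    rw [Finset.mul_sum, ← Finset.sum_add_distrib]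
    apply Finset.sum_congr rfl
    intro e _; ring
  have hzcard : ∑ e, z e ≤ (Fintype.card E : ℝ) := by
    calc ∑ e, z e ≤ ∑ e : E, (1:ℝ) := Finset.sum_le_sum fun e _ => hz1 e
    _ = (Fintype.card E : ℝ) := by simp
  have hcard : (0:ℝ) ≤ ε * T.card := by positivity
  have hδT := hT0min T hTmem
  have hεbound : ε * (Fintype.card E : ℝ) < δ := by
    rw [hε]
    rw [div_mul_eq_mul_div, div_lt_iff₀ (by positivity)]
    have : (0:ℝ) < δ := hδpos
    nlinarith [Nat.cast_nonneg (α := ℝ) (Fintype.card E)]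
  rw [h1, h2] at hTle
  have : ∑ e ∈ T, w e - ∑ e, w e * z e ≤ ε * ∑ e, z e - ε * T.card := by linarith
  have hεz : ε * ∑ e, z e ≤ ε * (Fintype.card E : ℝ) :=
    mul_le_mul_of_nonneg_left hzcard (le_of_lt hεpos)
  linarith

-- L4 : existence of a dominated convex combination of transversals
lemma exists_lambda {E : Type*} [Fintype E] [DecidableEq E] (Ps : Finset (Finset E))
    (hMFMC : ∀ y ∈ Set.extremePoints ℝ (coverPolyhedron Ps), ∀ e, ∃ n : ℤ, y e = n)
    {z : E → ℝ} (hz : z ∈ coverPolyhedron Ps) (hz1 : ∀ e, z e ≤ 1) :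
    ∃ lam : Finset E → ℝ, (∀ T, 0 ≤ lam T) ∧ (∑ T : Finset E, lam T) = 1 ∧
      (∀ T, lam T ≠ 0 → ∀ P ∈ Ps, (T ∩ P).Nonempty) ∧
      (∀ e, (∑ T ∈ Finset.univ.filter (fun T : Finset E => e ∈ T), lam T) ≤ z e) := by
  classical
  set ind : Finset E → (E → ℝ) := fun T e => if e ∈ T then 1 else 0 with hind
  set Tset : Finset (Finset E) := Finset.univ.filter (fun T => ∀ P ∈ Ps, (T ∩ P).Nonempty)
    with hTset
  set V : Finset (E → ℝ) := Tset.image ind with hV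
  have huniv : ∀ P ∈ Ps, ((Finset.univ : Finset E) ∩ P).Nonempty := by
    intro P hP
    rw [Finset.univ_inter]
    rcases Finset.eq_empty_or_nonempty P with hPe | hPn
    · exfalso
      have := hz.2 P hP
      rw [hPe] at this
      simp only [Finset.sum_empty] at this
      linarith
    · exact hPn
  have hTuniv : (Finset.univ : Finset E) ∈ Tset := by
    rw [hTset, Finset.mem_filter]; exact ⟨Finset.mem_univ _, huniv⟩
  set D : Set (E → ℝ) := convexHull ℝ ↑V + Set.Ici (0 : E → ℝ) with hD
  -- z ∈ D
  have hzD : z ∈ D := by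
    by_contra hzD
    have hconv : Convex ℝ D :=
      (convex_convexHull ℝ _).add (convex_Ici _)
    have hclosed : IsClosed D :=
      IsClosed.add_left_of_isCompact isClosed_Ici
        ((V : Set (E → ℝ)).toFinite.isCompact_convexHull (𝕜 := ℝ))
    obtain ⟨f, u, hfu, hub⟩ := geometric_hahn_banach_point_closed hconv hclosed hzD
    set w : E → ℝ := fun e => f (fun j => if e = j then 1 else 0) with hw
    have hfsum : ∀ y : E → ℝ, f y = ∑ e, y e * w e := by
      intro y
      exact LinearMap.pi_apply_eq_sum_univ (f.toLinearMap) y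
    -- D is nonempty and upward closed in each coordinate, so w ≥ 0
    have hDne : ind Finset.univ ∈ D := by
      refine ⟨ind Finset.univ, subset_convexHull ℝ _ ?_, 0, Set.self_mem_Ici, by simp⟩
      rw [hV]
      exact Finset.mem_coe.2 (Finset.mem_image_of_mem ind hTuniv)
    have hwpos : ∀ e, 0 ≤ w e := by
      intro e
      by_contra hneg
      push_neg at hneg
      set b := ind Finset.univ with hb
      set t : ℝ := (f b - u + 1) / (-w e) with ht
      have hub' : u < f b := hub _ hDne
      have htpos : 0 < t := div_pos (by linarith) (by linarith)
      have hmem : b + t • (fun j => if e = j then (1:ℝ) else 0) ∈ D := by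
        obtain ⟨c, hc, r, hr, hcr⟩ := hDne
        refine ⟨c, hc, r + t • (fun j => if e = j then (1:ℝ) else 0), ?_, ?_⟩
        · rw [Set.mem_Ici] at hr ⊢
          intro j
          have := hr j
          simp only [Pi.add_apply, Pi.smul_apply, smul_eq_mul, Pi.zero_apply] at this ⊢
          have h0 : (0:ℝ) ≤ t * (if e = j then (1:ℝ) else 0) := by
            split_ifs
            · linarith
            · simp
          linarith
        · rw [← hcr]; ext j; simp only [Pi.add_apply, Pi.smul_apply, smul_eq_mul]; ring
      have := hub _ hmem
      have hfb : f (b + t • (fun j => if e = j then (1:ℝ) else 0)) = f b + t * w e := by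
        rw [map_add, map_smul]
        simp only [smul_eq_mul, hw]
      rw [hfb] at this
      have hwne : w e ≠ 0 := ne_of_lt hneg
      have hdiv : w e / -w e = -1 := by
        rw [div_neg, div_self hwne]
      have htwe : t * w e = -(f b - u + 1) := by
        rw [ht, div_mul_eq_mul_div, mul_div_assoc, hdiv, mul_neg_one]
      linarith
    -- use L3 to derive a contradiction
    obtain ⟨T, hTt, hTle⟩ := exists_transversal_min' Ps hMFMC hwpos hz hz1
    have hindT : f (ind T) = ∑ e ∈ T, w e := by
      rw [hfsum, hind]
      simp only [ite_mul, one_mul, zero_mul]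
      rw [Finset.sum_ite_mem, Finset.univ_inter]
    have hTD : ind T ∈ D := by
      refine ⟨ind T, subset_convexHull ℝ _ ?_, 0, Set.self_mem_Ici, by simp⟩
      rw [hV]
      refine Finset.mem_coe.2 (Finset.mem_image_of_mem ind ?_)
      rw [hTset, Finset.mem_filter]
      exact ⟨Finset.mem_univ _, hTt⟩
    have h1 : u < f (ind T) := hub _ hTD
    have h2 : ∑ e, w e * z e = f z := by
      rw [hfsum z]
      exact Finset.sum_congr rfl fun e _ => (mul_comm _ _)
    rw [hindT] at h1
    rw [h2] at hTle
    linarith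
  -- extract the convex combination
  obtain ⟨c, hc, r, hr, hcr⟩ := hzD
  rw [Finset.convexHull_eq] at hc
  obtain ⟨wv, hwv0, hwv1, hwc⟩ := hc
  have hindinj : Function.Injective ind := by
    intro S T h
    ext e
    have := congrFun h e
    rw [hind] at this
    simp only at this
    by_cases hS : e ∈ S <;> by_cases hT : e ∈ T <;> simp [hS, hT] at this ⊢
  set lam : Finset E → ℝ := fun T => if T ∈ Tset then wv (ind T) else 0 with hlam
  have hlam0 : ∀ T, 0 ≤ lam T := by
    intro T
    rw [hlam]
    dsimp only
    split_ifs with h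
    · exact hwv0 _ (Finset.mem_image_of_mem ind h)
    · exact le_rfl
  have hlamsum : (∑ T : Finset E, lam T) = 1 := by
    calc (∑ T : Finset E, lam T) = ∑ T ∈ Tset, wv (ind T) := by
          rw [hlam, ← Finset.sum_filter]
          congr 1
          rw [hTset]
          ext T
          simp
    _ = ∑ v ∈ V, wv v := by
          rw [hV]
          exact (Finset.sum_image fun x _ y _ h => hindinj h).symm
    _ = 1 := hwv1
  have hcval : ∀ e, c e = ∑ T ∈ Finset.univ.filter (fun T : Finset E => e ∈ T), lam T := by
    intro e
    have hcc : c = ∑ v ∈ V, wv v • v := by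
      rw [← hwc, Finset.centerMass_eq_of_sum_1 _ _ hwv1]
      simp
    have hce : c e = ∑ v ∈ V, wv v * v e := by
      rw [hcc]
      simp [Finset.sum_apply]
    calc c e = ∑ T ∈ Tset, wv (ind T) * ind T e := by
          rw [hce, hV, Finset.sum_image fun x _ y _ h => hindinj h]
    _ = ∑ T ∈ Tset, (if e ∈ T then lam T else 0) := by
          refine Finset.sum_congr rfl fun T hT => ?_
          rw [hlam, hind]
          dsimp only
          rw [if_pos hT]
          split_ifs <;> ring
    _ = ∑ T ∈ Finset.univ, (if e ∈ T then lam T else 0) := by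
          refine Finset.sum_subset (Finset.subset_univ _) fun T _ hT => ?_
          rw [hlam]
          dsimp only
          rw [if_neg hT]
          simp
    _ = ∑ T ∈ Finset.univ.filter (fun T : Finset E => e ∈ T), lam T :=
          (Finset.sum_filter _ _).symm
  refine ⟨lam, hlam0, hlamsum, ?_, ?_⟩
  · intro T hT P hP
    have : T ∈ Tset := by
      by_contra h
      apply hT
      rw [hlam]; simp [h]
    rw [hTset, Finset.mem_filter] at this
    exact this.2 P hP
  · intro e
    rw [← hcval e]
    have hze : z e = c e + r e := by rw [← hcr]; simp
    rw [Set.mem_Ici] at hr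
    have hre := hr e
    have : (0:ℝ) ≤ r e := hre
    linarith

-- sum over sets avoiding A
lemma sum_prod_avoid {E : Type*} [Fintype E] [DecidableEq E] (f g : E → ℝ) (A : Finset E) :
    ∑ S ∈ Finset.univ.filter (fun S : Finset E => S ∩ A = ∅),
      (∏ e ∈ S, f e) * ∏ e ∈ Sᶜ, g e = (∏ e ∈ A, g e) * ∏ e ∈ Aᶜ, (f e + g e) := by
  classical
  have hfilter : Finset.univ.filter (fun S : Finset E => S ∩ A = ∅) = Aᶜ.powerset := by
    ext S
    simp only [Finset.mem_filter, Finset.mem_univ, true_and, Finset.mem_powerset]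
    rw [← Finset.disjoint_iff_inter_eq_empty]
    exact ⟨fun h => le_compl_iff_disjoint_right.2 h,
      fun h => le_compl_iff_disjoint_right.1 h⟩
  rw [hfilter]
  have hsplit : ∀ S ∈ Aᶜ.powerset, (∏ e ∈ Sᶜ, g e) = (∏ e ∈ A, g e) * ∏ e ∈ Aᶜ \ S, g e := by
    intro S hS
    rw [Finset.mem_powerset] at hS
    have hSc : (Sᶜ : Finset E) = A ∪ (Aᶜ \ S) := by
      ext e
      have h' : e ∈ S → e ∉ A := fun h => Finset.mem_compl.1 (hS h)
      simp only [Finset.mem_compl, Finset.mem_union, Finset.mem_sdiff]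
      tauto
    have hdisj : Disjoint A (Aᶜ \ S) := by
      rw [Finset.disjoint_left]
      intro e heA he2
      exact (Finset.mem_compl.1 (Finset.mem_sdiff.1 he2).1) heA
    rw [hSc, Finset.prod_union hdisj]
  calc ∑ S ∈ Aᶜ.powerset, (∏ e ∈ S, f e) * ∏ e ∈ Sᶜ, g e
      = ∑ S ∈ Aᶜ.powerset, (∏ e ∈ A, g e) * ((∏ e ∈ S, f e) * ∏ e ∈ Aᶜ \ S, g e) := by
        refine Finset.sum_congr rfl fun S hS => ?_
        rw [hsplit S hS]; ring
  _ = (∏ e ∈ A, g e) * ∑ S ∈ Aᶜ.powerset, (∏ e ∈ S, f e) * ∏ e ∈ Aᶜ \ S, g e := by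
        rw [← Finset.mul_sum]
  _ = (∏ e ∈ A, g e) * ∏ e ∈ Aᶜ, (f e + g e) := by rw [Finset.prod_add]

lemma sum_prod_total {E : Type*} [Fintype E] [DecidableEq E] (f g : E → ℝ) :
    ∑ S : Finset E, (∏ e ∈ S, f e) * ∏ e ∈ Sᶜ, g e = ∏ e, (f e + g e) :=
  (Fintype.prod_add f g).symm

/-- If `(E, 𝒫)` has the weak max-flow/min-cut property (the covering polyhedron is
integral), then for affine requirements `π_P = 1 − ∑_{e∈P} μ_e` the necessary
condition (⋆) is sufficient for existence of a feasible decomposition. -/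
theorem mfmc_implies_cond_sufficient {E : Type*} [Fintype E] [DecidableEq E]
    (Ps : Finset (Finset E))
    (hMFMC : ∀ y ∈ Set.extremePoints ℝ (coverPolyhedron Ps), ∀ e, ∃ n : ℤ, y e = n)
    (μ : E → ℝ) (hμ : ∀ e, 0 ≤ μ e ∧ μ e ≤ 1)
    (π : Finset E → ℝ) (hπ : ∀ P ∈ Ps, π P = 1 - ∑ e ∈ P, μ e)
    (ρ : E → ℝ) (hρ : ∀ e, 0 ≤ ρ e ∧ ρ e ≤ 1)
    (hcond : ∀ P ∈ Ps, π P ≤ ∑ e ∈ P, ρ e) :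
    ∃ x : Finset E → ℝ, IsFeasibleDecomp Ps π ρ x := by
  classical
  -- the truncated vector z
  have hy : (fun e => ρ e + μ e) ∈ coverPolyhedron Ps := by
    constructor
    · intro e; have := (hρ e).1; have := (hμ e).1; dsimp only; linarith
    · intro P hP
      have h1 := hcond P hP
      have h2 := hπ P hP
      rw [Finset.sum_add_distrib]
      linarith
  set z : E → ℝ := fun e => min (ρ e + μ e) 1 with hzdef
  have hzY : z ∈ coverPolyhedron Ps := trunc_mem Ps hy
  have hz1 : ∀ e, z e ≤ 1 := fun e => min_le_right _ _
  have hzle : ∀ e, z e ≤ ρ e + μ e := fun e => min_le_left _ _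
  obtain ⟨lam, hlam0, hlamsum, hlamsupp, hlamz⟩ := exists_lambda Ps hMFMC hzY hz1
  set c : E → ℝ := fun e => ∑ T ∈ Finset.univ.filter (fun T : Finset E => e ∈ T), lam T
    with hcdef
  have hc0 : ∀ e, 0 ≤ c e := fun e => Finset.sum_nonneg fun T _ => hlam0 T
  have hc1 : ∀ e, c e ≤ 1 := by
    intro e
    rw [hcdef]
    dsimp only
    rw [← hlamsum]
    exact Finset.sum_le_sum_of_subset_of_nonneg (Finset.filter_subset _ _)
      (fun T _ _ => hlam0 T)
  have hcz : ∀ e, c e ≤ z e := hlamz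
  -- thinning probabilities
  set p : E → ℝ := fun e => if c e = 0 then 0 else min 1 (ρ e / c e) with hpdef
  set q : E → ℝ := fun e => if c e = 1 then 0 else (ρ e - min (c e) (ρ e)) / (1 - c e)
    with hqdef
  have hp01 : ∀ e, 0 ≤ p e ∧ p e ≤ 1 := by
    intro e
    rw [hpdef]; dsimp only
    split_ifs with h
    · exact ⟨le_rfl, zero_le_one⟩
    · have hcpos : 0 < c e := lt_of_le_of_ne (hc0 e) (Ne.symm h)
      exact ⟨le_min zero_le_one (div_nonneg (hρ e).1 (le_of_lt hcpos)), min_le_left _ _⟩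
  have hq01 : ∀ e, 0 ≤ q e ∧ q e ≤ 1 := by
    intro e
    rw [hqdef]; dsimp only
    split_ifs with h
    · exact ⟨le_rfl, zero_le_one⟩
    · have hclt : c e < 1 := lt_of_le_of_ne (hc1 e) h
      have hpos : 0 < 1 - c e := by linarith
      constructor
      · apply div_nonneg _ (le_of_lt hpos)
        have : min (c e) (ρ e) ≤ ρ e := min_le_right _ _
        linarith
      · rw [div_le_one hpos]
        rcases le_total (c e) (ρ e) with hcr | hcr
        · rw [min_eq_left hcr]
          have := (hρ e).2
          linarith
        · rw [min_eq_right hcr]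
          linarith
  have hcp : ∀ e, c e * p e = min (c e) (ρ e) := by
    intro e
    rw [hpdef]; dsimp only
    split_ifs with h
    · rw [h, min_eq_left (hρ e).1]; ring
    · have hcpos : 0 < c e := lt_of_le_of_ne (hc0 e) (Ne.symm h)
      rw [mul_min_of_nonneg _ _ (le_of_lt hcpos), mul_one,
        mul_div_cancel₀ _ (ne_of_gt hcpos)]
  have hqc : ∀ e, q e * (1 - c e) = ρ e - min (c e) (ρ e) := by
    intro e
    rw [hqdef]; dsimp only
    split_ifs with h
    · rw [h, min_eq_right (hρ e).2]; ring
    · have hne : (1 : ℝ) - c e ≠ 0 := by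
        intro hc; apply h; linarith
      rw [div_mul_cancel₀ _ hne]
  -- inclusion probabilities and the distribution
  set r : Finset E → E → ℝ := fun T e => if e ∈ T then p e else q e with hrdef
  have hr01 : ∀ T e, 0 ≤ r T e ∧ r T e ≤ 1 := by
    intro T e
    rw [hrdef]; dsimp only
    split_ifs
    · exact hp01 e
    · exact hq01 e
  set x : Finset E → ℝ :=
    fun S => ∑ T : Finset E, lam T * ((∏ e ∈ S, r T e) * ∏ e ∈ Sᶜ, (1 - r T e)) with hxdef
  have hx0 : ∀ S, 0 ≤ x S := by
    intro S
    apply Finset.sum_nonneg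
    intro T _
    apply mul_nonneg (hlam0 T)
    apply mul_nonneg
    · exact Finset.prod_nonneg fun e _ => (hr01 T e).1
    · exact Finset.prod_nonneg fun e _ => by linarith [(hr01 T e).2]
  -- total mass one
  have hkey1 : ∀ T : Finset E,
      ∑ S : Finset E, (∏ e ∈ S, r T e) * ∏ e ∈ Sᶜ, (1 - r T e) = 1 := by
    intro T
    rw [sum_prod_total]
    have h1 : ∀ e ∈ Finset.univ, r T e + (1 - r T e) = (1:ℝ) := fun e _ => by ring
    rw [Finset.prod_congr rfl h1, Finset.prod_const_one]
  have hxtot : ∑ S : Finset E, x S = 1 := by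
    rw [hxdef]
    dsimp only
    rw [Finset.sum_comm]
    calc ∑ T : Finset E, ∑ S : Finset E, lam T * ((∏ e ∈ S, r T e) * ∏ e ∈ Sᶜ, (1 - r T e))
        = ∑ T : Finset E, lam T * ∑ S : Finset E, (∏ e ∈ S, r T e) * ∏ e ∈ Sᶜ, (1 - r T e) := by
          refine Finset.sum_congr rfl fun T _ => ?_
          rw [Finset.mul_sum]
    _ = ∑ T : Finset E, lam T := by
          refine Finset.sum_congr rfl fun T _ => ?_
          rw [hkey1 T, mul_one]
    _ = 1 := hlamsum
  -- avoiding sums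
  have hmiss : ∀ A : Finset E,
      ∑ S ∈ Finset.univ.filter (fun S : Finset E => S ∩ A = ∅), x S
        = ∑ T : Finset E, lam T * ∏ e ∈ A, (1 - r T e) := by
    intro A
    rw [hxdef]
    dsimp only
    rw [Finset.sum_comm]
    refine Finset.sum_congr rfl fun T _ => ?_
    rw [← Finset.mul_sum, sum_prod_avoid]
    have h1 : ∀ e ∈ Aᶜ, r T e + (1 - r T e) = (1:ℝ) := fun e _ => by ring
    rw [Finset.prod_congr rfl h1, Finset.prod_const_one, mul_one]
  -- per-element mixture sums
  have hmix : ∀ e, ∑ T : Finset E, lam T * r T e = c e * p e + (1 - c e) * q e := by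
    intro e
    rw [← Finset.sum_filter_add_sum_filter_not Finset.univ (fun T : Finset E => e ∈ T)]
    have h1 : ∑ T ∈ Finset.univ.filter (fun T : Finset E => e ∈ T), lam T * r T e
        = c e * p e := by
      rw [hcdef]
      dsimp only
      rw [Finset.sum_mul]
      refine Finset.sum_congr rfl fun T hT => ?_
      rw [Finset.mem_filter] at hT
      rw [hrdef]
      dsimp only
      rw [if_pos hT.2]
    have h2 : ∑ T ∈ Finset.univ.filter (fun T : Finset E => ¬ e ∈ T), lam T * r T e
        = (1 - c e) * q e := by
      have hcompl : ∑ T ∈ Finset.univ.filter (fun T : Finset E => ¬ e ∈ T), lam T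
          = 1 - c e := by
        have := Finset.sum_filter_add_sum_filter_not Finset.univ
          (fun T : Finset E => e ∈ T) lam
        rw [hlamsum] at this
        rw [hcdef]
        dsimp only
        linarith
      rw [← hcompl, Finset.sum_mul]
      refine Finset.sum_congr rfl fun T hT => ?_
      rw [Finset.mem_filter] at hT
      rw [hrdef]
      dsimp only
      rw [if_neg hT.2]
    rw [h1, h2]
  -- marginals
  have hmarg : ∀ e : E,
      ∑ S ∈ Finset.univ.filter (fun S : Finset E => e ∈ S), x S = ρ e := by
    intro e
    have hsplit := Finset.sum_filter_add_sum_filter_not Finset.univ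
      (fun S : Finset E => e ∈ S) x
    rw [hxtot] at hsplit
    have hnot : Finset.univ.filter (fun S : Finset E => ¬ e ∈ S)
        = Finset.univ.filter (fun S : Finset E => S ∩ {e} = ∅) := by
      ext S
      simp only [Finset.mem_filter, Finset.mem_univ, true_and]
      constructor
      · intro h
        ext f
        simp only [Finset.mem_inter, Finset.mem_singleton, Finset.notMem_empty,
          iff_false, not_and]
        intro hfS hfe
        exact h (hfe ▸ hfS)
      · intro h hc
        have : e ∈ S ∩ {e} := Finset.mem_inter.2 ⟨hc, Finset.mem_singleton_self e⟩
        rw [h] at this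
        exact absurd this (Finset.notMem_empty e)
    have hval : ∑ S ∈ Finset.univ.filter (fun S : Finset E => ¬ e ∈ S), x S
        = 1 - (c e * p e + (1 - c e) * q e) := by
      rw [hnot, hmiss {e}]
      have : ∀ T : Finset E, lam T * ∏ f ∈ ({e} : Finset E), (1 - r T f)
          = lam T - lam T * r T e := by
        intro T
        rw [Finset.prod_singleton]
        ring
      rw [Finset.sum_congr rfl fun T _ => this T, Finset.sum_sub_distrib, hlamsum,
        hmix e]
    have := hcp e
    have := hqc e
    have hmin : min (c e) (ρ e) + (ρ e - min (c e) (ρ e)) = ρ e := by ring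
    rw [hval] at hsplit
    nlinarith [hcp e, hqc e]
  -- hitting probabilities
  have hhit : ∀ P ∈ Ps, π P ≤
      ∑ S ∈ Finset.univ.filter (fun S : Finset E => (S ∩ P).Nonempty), x S := by
    intro P hP
    have hsplit := Finset.sum_filter_add_sum_filter_not Finset.univ
      (fun S : Finset E => (S ∩ P).Nonempty) x
    rw [hxtot] at hsplit
    have hnot : Finset.univ.filter (fun S : Finset E => ¬ (S ∩ P).Nonempty)
        = Finset.univ.filter (fun S : Finset E => S ∩ P = ∅) := by
      ext S
      simp [Finset.not_nonempty_iff_eq_empty]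
    -- bound each miss term
    have hbound : ∀ T : Finset E, lam T * ∏ e ∈ P, (1 - r T e)
        ≤ ∑ e ∈ P, (if e ∈ T then (1 - p e) * lam T else 0) := by
      intro T
      by_cases hl : lam T = 0
      · rw [hl]
        simp
      · obtain ⟨e0, he0⟩ := hlamsupp T hl P hP
        rw [Finset.mem_inter] at he0
        have hprodle : ∏ e ∈ P, (1 - r T e) ≤ 1 - p e0 := by
          have he0r : (1 : ℝ) - r T e0 = 1 - p e0 := by
            rw [hrdef]; dsimp only; rw [if_pos he0.1]
          calc ∏ e ∈ P, (1 - r T e) = (1 - r T e0) * ∏ e ∈ P.erase e0, (1 - r T e) :=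
                (Finset.mul_prod_erase P _ he0.2).symm
          _ ≤ (1 - r T e0) * 1 := by
                apply mul_le_mul_of_nonneg_left
                · apply Finset.prod_le_one
                  · intro e _; linarith [(hr01 T e).2]
                  · intro e _; linarith [(hr01 T e).1]
                · linarith [(hr01 T e0).2]
          _ = 1 - p e0 := by rw [mul_one, he0r]
        have hle2 : (1 - p e0) * lam T ≤ ∑ e ∈ P, (if e ∈ T then (1 - p e) * lam T else 0) := by
          have : (if e0 ∈ T then (1 - p e0) * lam T else 0) = (1 - p e0) * lam T := by
            rw [if_pos he0.1]
          rw [← this]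
          apply Finset.single_le_sum _ he0.2
          intro e _
          split_ifs with h
          · apply mul_nonneg _ (hlam0 T)
            linarith [(hp01 e).2]
          · exact le_rfl
        calc lam T * ∏ e ∈ P, (1 - r T e) ≤ lam T * (1 - p e0) :=
              mul_le_mul_of_nonneg_left hprodle (hlam0 T)
        _ = (1 - p e0) * lam T := by ring
        _ ≤ _ := hle2
    have hmissle : ∑ S ∈ Finset.univ.filter (fun S : Finset E => ¬ (S ∩ P).Nonempty), x S
        ≤ ∑ e ∈ P, μ e := by
      rw [hnot, hmiss P]
      calc ∑ T : Finset E, lam T * ∏ e ∈ P, (1 - r T e)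
          ≤ ∑ T : Finset E, ∑ e ∈ P, (if e ∈ T then (1 - p e) * lam T else 0) :=
            Finset.sum_le_sum fun T _ => hbound T
      _ = ∑ e ∈ P, ∑ T : Finset E, (if e ∈ T then (1 - p e) * lam T else 0) :=
            Finset.sum_comm
      _ = ∑ e ∈ P, (1 - p e) * c e := by
            refine Finset.sum_congr rfl fun e _ => ?_
            rw [hcdef]
            dsimp only
            rw [Finset.mul_sum, ← Finset.sum_filter]
      _ ≤ ∑ e ∈ P, μ e := by
            refine Finset.sum_le_sum fun e _ => ?_
            have h1 := hcp e
            have h2 : c e ≤ ρ e + μ e := le_trans (hcz e) (hzle e)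
            rcases le_total (c e) (ρ e) with hcr | hcr
            · rw [min_eq_left hcr] at h1
              nlinarith [(hμ e).1, hc0 e, (hp01 e).2]
            · rw [min_eq_right hcr] at h1
              nlinarith [(hμ e).1, hc0 e, (hp01 e).2]
    rw [hπ P hP]
    linarith
  exact ⟨x, hx0, hxtot, hmarg, hhit⟩
end

section
/- Let E be a finite set and 𝒫 ⊆ 2^E. Suppose that for all μ ∈ [0,1]^E and all ρ ∈ [0,1]^E satisfying ∑_{e∈P} ρ_e ≥ 1 − ∑_{e∈P} μ_e for all P ∈ 𝒫, there exists a probability distribution x on 2^E with ∑_{S∋e} x_S = ρ_e for all e and ∑_{S : S∩P ≠ ∅} x_S ≥ 1 − ∑_{e∈P} μ_e for all P ∈ 𝒫. Then every extreme point of the polyhedron Y_𝒫 := {y ∈ ℝ_+^E : ∑_{e∈P} y_e ≥ 1 ∀P ∈ 𝒫} is a 0-1 vector, i.e., Y_𝒫 is integral. -/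
open Finset

/-- If condition (⋆) is sufficient for feasibility for all affine requirements
`π_P = 1 − ∑_{e∈P} μ_e` with `μ ∈ [0,1]^E`, then every extreme point of the covering
polyhedron `Y_𝒫` is a 0-1 vector, i.e., `Y_𝒫` is integral. -/
theorem cond_sufficient_implies_mfmc {E : Type*} [Fintype E] [DecidableEq E]
    (Ps : Finset (Finset E))
    (hsuff : ∀ μ : E → ℝ, (∀ e, 0 ≤ μ e ∧ μ e ≤ 1) →
      ∀ ρ : E → ℝ, (∀ e, 0 ≤ ρ e ∧ ρ e ≤ 1) →
      (∀ P ∈ Ps, 1 - ∑ e ∈ P, μ e ≤ ∑ e ∈ P, ρ e) →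
      ∃ x : Finset E → ℝ,
        IsFeasibleDecomp Ps (fun P => 1 - ∑ e ∈ P, μ e) ρ x) :
    ∀ y ∈ Set.extremePoints ℝ (coverPolyhedron Ps), ∀ e, y e = 0 ∨ y e = 1 := by
  rintro y ⟨⟨hy0, hyP⟩, hyext⟩ e
  -- Step 1: y ≤ 1 everywhere
  have hy1 : ∀ f, y f ≤ 1 := by
    set z₁ : E → ℝ := fun f => min (y f) 1 with hz₁
    set z₂ : E → ℝ := fun f => 2 * y f - min (y f) 1 with hz₂
    have hz₁mem : z₁ ∈ coverPolyhedron Ps := by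
      constructor
      · intro f; exact le_min (hy0 f) zero_le_one
      · intro P hP
        by_cases hcase : ∀ f ∈ P, y f ≤ 1
        · calc (1:ℝ) ≤ ∑ f ∈ P, y f := hyP P hP
            _ = ∑ f ∈ P, z₁ f := by
                refine Finset.sum_congr rfl fun f hf => ?_
                simp [hz₁, min_eq_left (hcase f hf)]
        · push_neg at hcase
          obtain ⟨f0, hf0, hf0'⟩ := hcase
          have h1 : z₁ f0 = 1 := by simp [hz₁, min_eq_right hf0'.le]
          calc (1:ℝ) = z₁ f0 := h1.symm
            _ ≤ ∑ f ∈ P, z₁ f :=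
                Finset.single_le_sum (fun f _ => le_min (hy0 f) zero_le_one) hf0
    have hz₂mem : z₂ ∈ coverPolyhedron Ps := by
      have hge : ∀ f, y f ≤ z₂ f := by
        intro f
        have : min (y f) 1 ≤ y f := min_le_left _ _
        simp only [hz₂]; linarith
      constructor
      · intro f; exact le_trans (hy0 f) (hge f)
      · intro P hP
        exact le_trans (hyP P hP) (Finset.sum_le_sum fun f _ => hge f)
    have hseg : y ∈ openSegment ℝ z₁ z₂ := by
      refine ⟨1/2, 1/2, by norm_num, by norm_num, by norm_num, ?_⟩
      funext f
      simp only [Pi.add_apply, Pi.smul_apply, smul_eq_mul, hz₁, hz₂]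
      ring
    have := hyext hz₁mem hz₂mem hseg
    intro f
    have hmin : min (y f) 1 = y f := congrFun this f
    exact min_eq_left_iff.mp hmin
  -- Step 2: apply the hypothesis with μ = 0 and ρ = y
  obtain ⟨x, hx0, hxsum, hxmarg, hxP⟩ :=
    hsuff (fun _ => 0) (fun _ => ⟨le_refl 0, zero_le_one⟩) y (fun f => ⟨hy0 f, hy1 f⟩)
      (fun P hP => by simpa using hyP P hP)
  -- every set in the support of x meets every P ∈ Ps
  have hcov : ∀ S : Finset E, ∀ P ∈ Ps, ¬(S ∩ P).Nonempty → x S = 0 := by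
    intro S P hP hSP
    have hxP' : (1:ℝ) ≤ ∑ T ∈ Finset.univ.filter (fun T : Finset E => (T ∩ P).Nonempty), x T := by
      simpa using hxP P hP
    have hsplit :
        ∑ T ∈ Finset.univ.filter (fun T : Finset E => (T ∩ P).Nonempty), x T
          + ∑ T ∈ Finset.univ.filter (fun T : Finset E => ¬(T ∩ P).Nonempty), x T = 1 := by
      rw [Finset.sum_filter_add_sum_filter_not]; exact hxsum
    have hz : ∑ T ∈ Finset.univ.filter (fun T : Finset E => ¬(T ∩ P).Nonempty), x T = 0 := by
      have hle : ∑ T ∈ Finset.univ.filter (fun T : Finset E => ¬(T ∩ P).Nonempty), x T ≤ 0 := by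
        linarith
      have hge : 0 ≤ ∑ T ∈ Finset.univ.filter (fun T : Finset E => ¬(T ∩ P).Nonempty), x T :=
        Finset.sum_nonneg fun T _ => hx0 T
      linarith
    have := (Finset.sum_eq_zero_iff_of_nonneg (fun T _ => hx0 T)).mp hz S
      (by simp [Finset.not_nonempty_iff_eq_empty.mp hSP])
    exact this
  -- Step 3: show y e ∈ {0, 1}
  by_contra h
  push_neg at h
  obtain ⟨hne0, hne1⟩ := h
  set a : ℝ := y e with ha
  have ha0 : 0 < a := lt_of_le_of_ne (hy0 e) (Ne.symm hne0)
  have ha1 : a < 1 := lt_of_le_of_ne (hy1 e) hne1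
  set w₁ : E → ℝ := fun f => a⁻¹ * ∑ S ∈ Finset.univ.filter (fun S : Finset E => e ∈ S),
      (if f ∈ S then x S else 0) with hw₁
  set w₂ : E → ℝ := fun f => (1 - a)⁻¹ * ∑ S ∈ Finset.univ.filter (fun S : Finset E => e ∉ S),
      (if f ∈ S then x S else 0) with hw₂
  have hinner : ∀ (P : Finset E) (S : Finset E),
      ∑ f ∈ P, (if f ∈ S then x S else 0) = ((P ∩ S).card : ℝ) * x S := by
    intro P S
    rw [Finset.sum_ite_mem, Finset.sum_const, nsmul_eq_mul]
  have hcard : ∀ P ∈ Ps, ∀ S : Finset E, x S ≤ ((P ∩ S).card : ℝ) * x S := by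
    intro P hP S
    rcases eq_or_lt_of_le (hx0 S) with hxs | hxs
    · rw [← hxs]; simp
    · have hne : (S ∩ P).Nonempty := by
        by_contra hc
        exact absurd (hcov S P hP hc) (ne_of_gt hxs)
      have : 1 ≤ (P ∩ S).card := by
        rw [Finset.inter_comm]
        exact Finset.card_pos.mpr hne
      have h1 : (1:ℝ) ≤ ((P ∩ S).card : ℝ) := by exact_mod_cast this
      nlinarith
  have hw₁mem : w₁ ∈ coverPolyhedron Ps := by
    constructor
    · intro f
      exact mul_nonneg (inv_nonneg.mpr ha0.le)
        (Finset.sum_nonneg fun S _ => by split_ifs <;> simp [hx0 S])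
    · intro P hP
      have key : a ≤ ∑ S ∈ Finset.univ.filter (fun S : Finset E => e ∈ S),
          ((P ∩ S).card : ℝ) * x S := by
        calc a = ∑ S ∈ Finset.univ.filter (fun S : Finset E => e ∈ S), x S := (hxmarg e).symm
          _ ≤ _ := Finset.sum_le_sum fun S _ => hcard P hP S
      have hsum : ∑ f ∈ P, w₁ f = a⁻¹ * ∑ S ∈ Finset.univ.filter (fun S : Finset E => e ∈ S),
          ((P ∩ S).card : ℝ) * x S := by
        simp only [hw₁]
        rw [← Finset.mul_sum, Finset.sum_comm]
        congr 1
        exact Finset.sum_congr rfl fun S _ => hinner P S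
      rw [hsum]
      calc (1:ℝ) = a⁻¹ * a := (inv_mul_cancel₀ ha0.ne').symm
        _ ≤ _ := by
            apply mul_le_mul_of_nonneg_left key (inv_nonneg.mpr ha0.le)
  have hw₂mem : w₂ ∈ coverPolyhedron Ps := by
    have h1a : (0:ℝ) < 1 - a := by linarith
    constructor
    · intro f
      exact mul_nonneg (inv_nonneg.mpr h1a.le)
        (Finset.sum_nonneg fun S _ => by split_ifs <;> simp [hx0 S])
    · intro P hP
      have hmarg2 : ∑ S ∈ Finset.univ.filter (fun S : Finset E => e ∉ S), x S = 1 - a := by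
        have := Finset.sum_filter_add_sum_filter_not Finset.univ
          (fun S : Finset E => e ∈ S) x
        rw [hxsum, hxmarg e] at this
        linarith
      have key : 1 - a ≤ ∑ S ∈ Finset.univ.filter (fun S : Finset E => e ∉ S),
          ((P ∩ S).card : ℝ) * x S := by
        calc 1 - a = ∑ S ∈ Finset.univ.filter (fun S : Finset E => e ∉ S), x S := hmarg2.symm
          _ ≤ _ := Finset.sum_le_sum fun S _ => hcard P hP S
      have hsum : ∑ f ∈ P, w₂ f = (1-a)⁻¹ * ∑ S ∈ Finset.univ.filter (fun S : Finset E => e ∉ S),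
          ((P ∩ S).card : ℝ) * x S := by
        simp only [hw₂]
        rw [← Finset.mul_sum, Finset.sum_comm]
        congr 1
        exact Finset.sum_congr rfl fun S _ => hinner P S
      rw [hsum]
      calc (1:ℝ) = (1-a)⁻¹ * (1-a) := (inv_mul_cancel₀ h1a.ne').symm
        _ ≤ _ := mul_le_mul_of_nonneg_left key (inv_nonneg.mpr h1a.le)
  have hseg : y ∈ openSegment ℝ w₁ w₂ := by
    refine ⟨a, 1 - a, ha0, by linarith, by ring, ?_⟩
    funext f
    simp only [Pi.add_apply, Pi.smul_apply, smul_eq_mul, hw₁, hw₂]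
    rw [← mul_assoc, ← mul_assoc, mul_inv_cancel₀ ha0.ne',
      mul_inv_cancel₀ (by linarith : (1:ℝ) - a ≠ 0), one_mul, one_mul,
      Finset.sum_filter_add_sum_filter_not Finset.univ (fun S : Finset E => e ∈ S)
        (fun S => if f ∈ S then x S else 0), ← Finset.sum_filter]
    exact hxmarg f
  have hw₂y := hyext hw₂mem hw₁mem (by rwa [openSegment_symm] at hseg)
  have : w₂ e = 0 := by
    simp only [hw₂]
    rw [Finset.sum_eq_zero, mul_zero]
    intro S hS
    simp only [Finset.mem_filter] at hS
    simp [hS.2]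
  rw [hw₂y] at this
  exact hne0 this
end

section
/- Let (E, 𝒫, ⪯) be an abstract network and let ρ, μ ∈ [0,1]^E satisfy ∑_{e∈P}(ρ_e + μ_e) ≥ 1 for all P ∈ 𝒫. Define α'_e := min{∑_{f ∈ (Q,e)} (μ_f + ρ_f) : Q ∈ 𝒫, e ∈ Q} and α_e := min{α'_e, 1 − ρ_e} for each e ∈ E (with α_e := 1 − ρ_e if no path contains e). Then for every P ∈ 𝒫: (1) α_{t_P} + μ_{t_P} + ρ_{t_P} ≥ 1, where t_P is the ⪯_P-maximal element of P; and (2) for every e ∈ P with e ≠ t_P there exists e' ∈ P with e ≺_P e' and α_{e'} ≤ α_e + μ_e + ρ_e. -/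
open Finset

variable {E : Type*} [Fintype E] [DecidableEq E]

/-- The strict prefix `(P,e)` of an abstract path `P` (given as a duplicate-free list)
before the element `e`. -/
def listPre (P : List E) (e : E) : Finset E := (P.takeWhile (· ≠ e)).toFinset

/-- The prefix `[P,e]` of `P` up to and including `e`. -/
def listPreIncl (P : List E) (e : E) : Finset E := listPre P e ∪ {e}

/-- The suffix `[e,P]` of `P` from `e` (inclusive). -/
def listSufIncl (P : List E) (e : E) : Finset E := (P.dropWhile (· ≠ e)).toFinset

/-- The strict suffix `(e,P)` of `P` after `e`. -/
def listSuf (P : List E) (e : E) : Finset E := ((P.dropWhile (· ≠ e)).drop 1).toFinset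

/-- An abstract network: a system of paths, each a nonempty duplicate-free list
(encoding the linear order `⪯_P`), such that for any two paths `P, Q` crossing in an
element `e` there is a path `R ∈ 𝒫` contained in `[P,e] ∪ [e,Q]`. -/
def IsAbstractNetwork (Ps : Finset (List E)) : Prop :=
  (∀ P ∈ Ps, P ≠ [] ∧ P.Nodup) ∧
  ∀ P ∈ Ps, ∀ Q ∈ Ps, ∀ e, e ∈ P → e ∈ Q →
    ∃ R ∈ Ps, R.toFinset ⊆ listPreIncl P e ∪ listSufIncl Q e

private lemma split_tdWhile {T S : List E} {e : E} (hT : e ∉ T) :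
    (T ++ e :: S).takeWhile (· ≠ e) = T ∧ (T ++ e :: S).dropWhile (· ≠ e) = e :: S := by
  induction T with
  | nil => simp [List.takeWhile_cons, List.dropWhile_cons]
  | cons a T ih =>
    simp only [List.mem_cons, not_or] at hT
    have ha : a ≠ e := fun h => hT.1 h.symm
    obtain ⟨h1, h2⟩ := ih hT.2
    constructor
    · rw [List.cons_append, List.takeWhile_cons, if_pos (by simpa using ha), h1]
    · rw [List.cons_append, List.dropWhile_cons, if_pos (by simpa using ha), h2]

private lemma split_mem {P : List E} (hnd : P.Nodup) {e : E} (he : e ∈ P) :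
    ∃ T S, P = T ++ e :: S ∧ e ∉ T ∧ e ∉ S ∧
      listPre P e = T.toFinset ∧ listSuf P e = S.toFinset ∧
      listPreIncl P e = insert e T.toFinset ∧ listSufIncl P e = insert e S.toFinset := by
  obtain ⟨T, S, rfl⟩ := List.append_of_mem he
  rw [List.nodup_append] at hnd
  have heT : e ∉ T := fun h => hnd.2.2 e h e List.mem_cons_self rfl
  have heS : e ∉ S := by
    have := hnd.2.1
    rw [List.nodup_cons] at this
    exact this.1
  obtain ⟨h1, h2⟩ := split_tdWhile (S := S) heT
  refine ⟨T, S, rfl, heT, heS, ?_, ?_, ?_, ?_⟩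
  · rw [listPre, h1]
  · rw [listSuf, h2]; simp
  · rw [listPreIncl, listPre, h1]; ext x; simp [or_comm]
  · rw [listSufIncl, h2]; simp

private lemma dropWhile_head_not {α : Type*} (p : α → Bool) (l : List α) {a : α} {t : List α}
    (h : l.dropWhile p = a :: t) : p a = false := by
  induction l with
  | nil => simp at h
  | cons b l ih =>
    rw [List.dropWhile_cons] at h
    by_cases hb : p b = true
    · rw [if_pos hb] at h; exact ih h
    · rw [if_neg hb] at h
      injection h with h1 _
      subst h1
      simpa using hb

private lemma last_split {T S : List E} {e : E} (hnd : (T ++ e :: S).Nodup)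
    (h : (T ++ e :: S).getLast? = some e) : S = [] := by
  cases S with
  | nil => rfl
  | cons b S' =>
    exfalso
    rw [List.nodup_append, List.nodup_cons] at hnd
    have heS : e ∉ b :: S' := hnd.2.1.1
    apply heS
    have hne : b :: S' ≠ [] := by simp
    have : (T ++ e :: b :: S').getLast? = (e :: b :: S').getLast? := by
      cases T with
      | nil => simp
      | cons a T' =>
        rw [List.getLast?_append_of_ne_nil]
        simp
    rw [this, List.getLast?_cons_cons] at h
    exact List.mem_of_getLast? h

/-- Properties of the truncated shortest-path labels `α` in an abstract network:
(1) at the last element `t_P` of any path, `α_{t_P} + μ_{t_P} + ρ_{t_P} ≥ 1`;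
(2) every non-final element `e` of a path `P` has a successor `e'` (strictly later
on `P`) with `α_{e'} ≤ α_e + μ_e + ρ_e`. -/
theorem abstract_network_alpha_successor
    (Ps : Finset (List E)) (hAN : IsAbstractNetwork Ps)
    (ρ μ : E → ℝ) (hρ : ∀ e, 0 ≤ ρ e ∧ ρ e ≤ 1) (hμ : ∀ e, 0 ≤ μ e ∧ μ e ≤ 1)
    (hcond : ∀ P ∈ Ps, 1 ≤ ∑ e ∈ P.toFinset, (ρ e + μ e))
    (α : E → ℝ)
    -- `α e = min { ∑_{f ∈ (Q,e)} (μ f + ρ f) : Q ∈ 𝒫, e ∈ Q } ∪ {1 - ρ e}`: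
    (hα₁ : ∀ e, α e ≤ 1 - ρ e)
    (hα₂ : ∀ e, ∀ Q ∈ Ps, e ∈ Q → α e ≤ ∑ f ∈ listPre Q e, (μ f + ρ f))
    (hα₃ : ∀ e, α e = 1 - ρ e ∨ ∃ Q ∈ Ps, e ∈ Q ∧ α e = ∑ f ∈ listPre Q e, (μ f + ρ f)) :
    ∀ P ∈ Ps,
      (∀ t, P.getLast? = some t → 1 ≤ α t + μ t + ρ t) ∧
      (∀ e ∈ P, P.getLast? ≠ some e →
        ∃ e' ∈ listSuf P e, α e' ≤ α e + μ e + ρ e) := by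
  obtain ⟨hne, hcross⟩ := hAN
  have hnn : ∀ i : E, 0 ≤ μ i + ρ i := fun i => add_nonneg (hμ i).1 (hρ i).1
  intro P hP
  have hndP := (hne P hP).2
  constructor
  · -- Claim 1
    intro t ht
    have htP : t ∈ P := List.mem_of_getLast? ht
    rcases hα₃ t with h | ⟨Q, hQ, htQ, hEq⟩
    · rw [h]; have := (hμ t).1; linarith
    · obtain ⟨R, hR, hsub⟩ := hcross Q hQ P hP t htQ htP
      obtain ⟨T, S, hPeq, heT, heS, hpre, hsuf, hpreI, hsufI⟩ := split_mem hndP htP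
      have hS : S = [] := last_split (hPeq ▸ hndP) (hPeq ▸ ht)
      have hsub' : R.toFinset ⊆ listPreIncl Q t := by
        intro x hx
        rcases Finset.mem_union.mp (hsub hx) with h | h
        · exact h
        · rw [hsufI, hS] at h
          simp only [List.toFinset_nil, Finset.insert_empty, Finset.mem_singleton] at h
          rw [h]
          simp [listPreIncl]
      have h1 : (1:ℝ) ≤ ∑ f ∈ listPreIncl Q t, (μ f + ρ f) := by
        calc (1:ℝ) ≤ ∑ x ∈ R.toFinset, (ρ x + μ x) := hcond R hR
          _ = ∑ x ∈ R.toFinset, (μ x + ρ x) := by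
              apply Finset.sum_congr rfl; intros; ring
          _ ≤ _ := Finset.sum_le_sum_of_subset_of_nonneg hsub' (fun i _ _ => hnn i)
      have hndQ := (hne Q hQ).2
      obtain ⟨T', S', hQeq, heT', heS', hpre', hsuf', hpreI', hsufI'⟩ := split_mem hndQ htQ
      rw [hpreI', Finset.sum_insert (by simp [heT'])] at h1
      rw [hEq, hpre']
      linarith
  · -- Claim 2
    intro e heP helast
    obtain ⟨T, S, hPeq, heT, heS, hpre, hsuf, hpreI, hsufI⟩ := split_mem hndP heP
    have hS : S ≠ [] := by
      intro h
      subst h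
      exact helast (hPeq ▸ (List.getLast?_concat (l := T)))
    obtain ⟨b, Sr, rfl⟩ := List.exists_cons_of_ne_nil hS
    have hbS : b ∈ listSuf P e := by rw [hsuf]; simp
    have done_of_one : (1:ℝ) ≤ α e + μ e + ρ e →
        ∃ e' ∈ listSuf P e, α e' ≤ α e + μ e + ρ e := by
      intro h1
      exact ⟨b, hbS, le_trans (le_trans (hα₁ b) (by linarith [(hρ b).1])) h1⟩
    rcases hα₃ e with h | ⟨Q, hQ, heQ, hEq⟩
    · exact done_of_one (by rw [h]; linarith [(hμ e).1])
    · obtain ⟨R, hR, hsub⟩ := hcross Q hQ P hP e heQ heP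
      have hndQ := (hne Q hQ).2
      obtain ⟨T', S', hQeq, heT', heS', hpre', hsuf', hpreI', hsufI'⟩ := split_mem hndQ heQ
      have hsumQ : ∑ f ∈ listPreIncl Q e, (μ f + ρ f) = α e + (μ e + ρ e) := by
        rw [hpreI', Finset.sum_insert (by simp [heT']), hEq, hpre']; ring
      set p : E → Bool := fun x => decide (x ∈ listPreIncl Q e) with hp
      by_cases hD : R.dropWhile p = []
      · -- all of R lies in [Q,e]
        have hall : R.toFinset ⊆ listPreIncl Q e := by
          intro x hx
          have hx' := List.dropWhile_eq_nil_iff.mp hD x (List.mem_toFinset.mp hx)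
          rw [hp] at hx'
          simpa using hx'
        apply done_of_one
        have h2 : (1:ℝ) ≤ ∑ f ∈ listPreIncl Q e, (μ f + ρ f) := by
          calc (1:ℝ) ≤ ∑ x ∈ R.toFinset, (ρ x + μ x) := hcond R hR
            _ = ∑ x ∈ R.toFinset, (μ x + ρ x) := by
                apply Finset.sum_congr rfl; intros; ring
            _ ≤ _ := Finset.sum_le_sum_of_subset_of_nonneg hall (fun i _ _ => hnn i)
        rw [hsumQ] at h2
        linarith
      · -- e' := first element of R outside [Q,e]
        obtain ⟨e', D', hD'⟩ := List.exists_cons_of_ne_nil hD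
        have he'np : p e' = false := dropWhile_head_not p R hD'
        have he'Q : e' ∉ listPreIncl Q e := by
          rw [hp] at he'np
          simpa using he'np
        obtain ⟨T₂, hT₂, hT₂p⟩ : ∃ T₂, R = T₂ ++ e' :: D' ∧ ∀ x ∈ T₂, p x = true :=
          ⟨R.takeWhile p, by conv_lhs => rw [← List.takeWhile_append_dropWhile (p := p) (l := R), hD'],
            fun x hx => List.mem_takeWhile_imp hx⟩
        have hndR := (hne R hR).2
        have he'T₂ : e' ∉ T₂ := by
          have h3 := hT₂ ▸ hndR
          rw [List.nodup_append] at h3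
          exact fun h => h3.2.2 e' h e' List.mem_cons_self rfl
        have he'R : e' ∈ R := by rw [hT₂]; exact List.mem_append_right _ List.mem_cons_self
        have hpreR : listPre R e' = T₂.toFinset := by
          rw [listPre, hT₂, (split_tdWhile (S := D') he'T₂).1]
        have hT₂sub : T₂.toFinset ⊆ listPreIncl Q e := by
          intro x hx
          have := hT₂p x (List.mem_toFinset.mp hx)
          rw [hp] at this
          simpa using this
        -- e' lies strictly after e on P
        have he'suf : e' ∈ listSuf P e := by
          have he'fin : e' ∈ R.toFinset := List.mem_toFinset.mpr he'R
          rcases Finset.mem_union.mp (hsub he'fin) with h | h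
          · exact absurd h he'Q
          · rw [hsufI, Finset.mem_insert] at h
            rcases h with h | h
            · exfalso
              apply he'Q
              rw [h]
              simp [listPreIncl]
            · rw [hsuf]; exact h
        refine ⟨e', he'suf, ?_⟩
        have h4 : α e' ≤ ∑ f ∈ listPre R e', (μ f + ρ f) := hα₂ e' R hR he'R
        have h5 : ∑ f ∈ listPre R e', (μ f + ρ f) ≤ ∑ f ∈ listPreIncl Q e, (μ f + ρ f) := by
          rw [hpreR]
          exact Finset.sum_le_sum_of_subset_of_nonneg hT₂sub (fun i _ _ => hnn i)
        rw [hsumQ] at h5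
        linarith
end

section
/- Let (E, 𝒫, ⪯) be an abstract network and let ρ, μ ∈ [0,1]^E satisfy ∑_{e∈P} ρ_e ≥ π_P := 1 − ∑_{e∈P} μ_e for all P ∈ 𝒫. Define α'_e := min{∑_{f ∈ (Q,e)} (μ_f + ρ_f) : Q ∈ 𝒫, e ∈ Q} and α_e := min{α'_e, 1 − ρ_e}. For τ drawn uniformly at random from [0,1], let S_τ := {e ∈ E : α_e ≤ τ < α_e + ρ_e}. Then x defined by x_S := Pr[S_τ = S] is a feasible decomposition of ρ for (E, 𝒫, π): ∑_{S∋e} x_S = ρ_e for all e ∈ E, and Pr[S_τ ∩ P ≠ ∅] ≥ π_P for all P ∈ 𝒫. -/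
open Finset MeasureTheory

variable {E : Type*} [Fintype E] [DecidableEq E]

/-- The level set `S_τ = {e : α_e ≤ τ < α_e + ρ_e}`. -/
noncomputable def levelSet (α ρ : E → ℝ) (τ : ℝ) : Finset E :=
  Finset.univ.filter (fun e => α e ≤ τ ∧ τ < α e + ρ e)

section AuxLemmas

lemma take_drop_ne (xs ys : List E) (e : E) (h : e ∉ xs) :
    (xs ++ e :: ys).takeWhile (· ≠ e) = xs ∧ (xs ++ e :: ys).dropWhile (· ≠ e) = e :: ys := by
  induction xs with
  | nil => simp [List.takeWhile_cons, List.dropWhile_cons]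
  | cons a as ih =>
    have ha : a ≠ e := fun hae => h (by simp [hae])
    obtain ⟨h1, h2⟩ := ih (fun hm => h (List.mem_cons_of_mem a hm))
    simp only [ne_eq, decide_not] at h1 h2 ⊢
    simp [List.takeWhile_cons, List.dropWhile_cons, ha, h1, h2]

lemma exists_split (P : List E) (e : E) (he : e ∈ P) :
    ∃ xs ys, P = xs ++ e :: ys ∧ e ∉ xs := by
  induction P with
  | nil => simp at he
  | cons a l ih =>
    by_cases hae : a = e
    · exact ⟨[], l, by rw [hae]; rfl, by simp⟩
    · have he' : e ∈ l := by
        rcases List.mem_cons.1 he with h | h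
        · exact absurd h.symm hae
        · exact h
      obtain ⟨xs, ys, h1, h2⟩ := ih he'
      refine ⟨a :: xs, ys, by rw [h1]; rfl, ?_⟩
      simp only [List.mem_cons]
      rintro (h | h)
      · exact hae h.symm
      · exact h2 h

lemma listPre_eq (xs ys : List E) (e : E) (h : e ∉ xs) :
    listPre (xs ++ e :: ys) e = xs.toFinset := by
  rw [listPre, (take_drop_ne xs ys e h).1]

lemma listSufIncl_eq (xs ys : List E) (e : E) (h : e ∉ xs) :
    listSufIncl (xs ++ e :: ys) e = insert e ys.toFinset := by
  rw [listSufIncl, (take_drop_ne xs ys e h).2]; simp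

lemma listPre_subset (P : List E) (e : E) : listPre P e ⊆ P.toFinset := by
  intro f hf
  simp only [listPre, List.mem_toFinset] at hf ⊢
  exact ((List.takeWhile_prefix _).sublist).mem hf

lemma listSufIncl_subset (P : List E) (e : E) : listSufIncl P e ⊆ P.toFinset := by
  intro f hf
  simp only [listSufIncl, List.mem_toFinset] at hf ⊢
  exact ((List.dropWhile_suffix _).sublist).mem hf

lemma pre_mono (P : List E) (e f : E) (he : e ∈ P) (hf : f ∈ listPre P e) :
    insert f (listPre P f) ⊆ listPre P e ∧ f ∉ listPre P f := by
  obtain ⟨xs, ys, hP, hex⟩ := exists_split P e he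
  subst hP
  rw [listPre_eq xs ys e hex] at hf ⊢
  have hfxs : f ∈ xs := List.mem_toFinset.1 hf
  obtain ⟨as, bs, hxs, hfas⟩ := exists_split xs f hfxs
  subst hxs
  have hre : as ++ f :: bs ++ e :: ys = as ++ f :: (bs ++ e :: ys) := by simp
  rw [hre, listPre_eq as (bs ++ e :: ys) f hfas]
  constructor
  · intro g hg
    rcases Finset.mem_insert.1 hg with h | h
    · subst h; simp
    · simp only [List.mem_toFinset, List.mem_append, List.mem_cons] at h ⊢
      tauto
  · simpa using hfas

lemma dropWhile_head_false (p : E → Bool) (l : List E) (a : E) (l' : List E)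
    (h : l.dropWhile p = a :: l') : p a = false := by
  induction l with
  | nil => simp at h
  | cons x xs ih =>
    rw [List.dropWhile_cons] at h
    by_cases hx : p x = true
    · rw [if_pos hx] at h; exact ih h
    · rw [if_neg hx] at h
      obtain ⟨h1, _⟩ := List.cons.inj h
      rw [← h1]
      exact Bool.eq_false_iff.2 hx

lemma not_mem_listPre_self (P : List E) (e : E) : e ∉ listPre P e := by
  intro h
  have := List.mem_takeWhile_imp (List.mem_toFinset.1 h)
  simp at this

/-- KEY: the intervals `[α e, α e + ρ e + μ e)` for `e ∈ P` cover `[0,1)`. -/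
lemma key_cover (Ps : Finset (List E)) (hAN : IsAbstractNetwork Ps)
    (ρ μ α : E → ℝ) (hρ0 : ∀ e, 0 ≤ ρ e) (hμ0 : ∀ e, 0 ≤ μ e)
    (hsum : ∀ P ∈ Ps, 1 ≤ ∑ e ∈ P.toFinset, (μ e + ρ e))
    (hα₂ : ∀ e, ∀ Q ∈ Ps, e ∈ Q → α e ≤ ∑ f ∈ listPre Q e, (μ f + ρ f))
    (hα₃ : ∀ e, α e = 1 - ρ e ∨ ∃ Q ∈ Ps, e ∈ Q ∧ α e = ∑ f ∈ listPre Q e, (μ f + ρ f))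
    (τ : ℝ) (hτ0 : 0 ≤ τ) (hτ1 : τ < 1) (P : List E) (hP : P ∈ Ps) :
    ∃ e ∈ P, α e ≤ τ ∧ τ < α e + ρ e + μ e := by
  classical
  by_contra hcon
  push_neg at hcon
  set w : E → ℝ := fun e => μ e + ρ e with hw
  have hw0 : ∀ e, 0 ≤ w e := fun e => add_nonneg (hμ0 e) (hρ0 e)
  set Bad : List E → Prop := fun R => ∀ e ∈ R, α e ≤ τ → α e + ρ e + μ e ≤ τ with hBad
  set F := Ps.filter Bad with hF
  have hPF : P ∈ F := Finset.mem_filter.2 ⟨hP, hcon⟩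
  set Φ : List E → ℝ := fun R => ∑ e ∈ R.toFinset.filter (fun e => α e ≤ τ), w e with hΦ
  obtain ⟨R, hRF, hmin⟩ := F.exists_min_image Φ ⟨P, hPF⟩
  obtain ⟨hRPs, hBadR⟩ := Finset.mem_filter.1 hRF
  obtain ⟨hRne, hRnd⟩ := hAN.1 R hRPs
  -- the "below τ" prefix of R
  set pred : E → Bool := fun e => decide (α e ≤ τ) with hpred
  obtain ⟨t, d, htdef, hddef⟩ : ∃ t d, t = R.takeWhile pred ∧ d = R.dropWhile pred :=
    ⟨_, _, rfl, rfl⟩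
  have htd : t ++ d = R := by rw [htdef, hddef]; exact List.takeWhile_append_dropWhile ..
  have ht : ∀ f ∈ t, α f ≤ τ := by
    intro f hf
    rw [htdef] at hf
    have := List.mem_takeWhile_imp hf
    simpa [hpred] using this
  -- t is nonempty since the head of R has α ≤ 0 ≤ τ
  have htne : t ≠ [] := by
    obtain ⟨h0, tl, hR0⟩ : ∃ h0 tl, R = h0 :: tl := by
      cases R with
      | nil => exact absurd rfl hRne
      | cons a l => exact ⟨a, l, rfl⟩
    have hpre0 : listPre R h0 = ∅ := by
      rw [hR0]
      simpa using listPre_eq [] tl h0 (by simp)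
    have hα0 : α h0 ≤ τ := by
      have h1 := hα₂ h0 R hRPs (by rw [hR0]; simp)
      rw [hpre0] at h1
      simp only [Finset.sum_empty] at h1
      linarith
    intro h
    rw [htdef, hR0, List.takeWhile_cons] at h
    simp [hpred, hα0] at h
  set p := t.getLast htne with hpdef
  have hpt : p ∈ t := List.getLast_mem htne
  have hαp : α p ≤ τ := ht p hpt
  have hpR : p ∈ R := htd ▸ List.mem_append_left d hpt
  have hpbelow : α p + ρ p + μ p ≤ τ := hBadR p hpR hαp
  set t' := t.dropLast with ht'def
  have htt' : t' ++ [p] = t := List.dropLast_append_getLast htne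
  have hRt' : R = t' ++ p :: d := by rw [← htd, ← htt']; simp
  have htnd : t.Nodup := by
    rw [htdef]; exact ((List.takeWhile_prefix pred).sublist).nodup hRnd
  have hpt' : p ∉ t' := by
    have := htt' ▸ htnd
    rw [List.nodup_append] at this
    intro h
    exact this.2.2 p h p (by simp) rfl
  have hPreR : listPre R p = t'.toFinset := by rw [hRt']; exact listPre_eq t' d p hpt'
  have hSufR : listSufIncl R p = insert p d.toFinset := by
    rw [hRt']; exact listSufIncl_eq t' d p hpt'
  have ht'd : ∀ a ∈ t', a ∉ d := by
    have h2 := hRt' ▸ hRnd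
    rw [List.nodup_append] at h2
    intro a ha had
    exact h2.2.2 a ha a (List.mem_cons_of_mem p had) rfl
  have hpd : p ∉ d := by
    have h2 := hRt' ▸ hRnd
    rw [List.nodup_append] at h2
    have := h2.2.1
    rw [List.nodup_cons] at this
    exact this.1
  have hsumt : ∑ e ∈ t.toFinset, w e = w p + ∑ e ∈ listPre R p, w e := by
    rw [hPreR, ← htt']
    have : (t' ++ [p]).toFinset = insert p t'.toFinset := by
      rw [List.toFinset_append]
      simp only [List.toFinset_cons, List.toFinset_nil, LawfulSingleton.insert_empty_eq]
      rw [Finset.union_comm, ← Finset.insert_eq]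
    rw [this, Finset.sum_insert (by simpa using hpt')]
  -- gap: α p < ∑_{listPre R p} w
  have hgap : α p < ∑ e ∈ listPre R p, w e := by
    rcases hdd : d with _ | ⟨e', d'⟩
    · have hd : d = [] := hdd
      -- all of R is below τ
      have hRt : R.toFinset = t.toFinset := by rw [← htd, hd]; simp
      have h1 := hsum R hRPs
      rw [hRt] at h1
      have : (1:ℝ) ≤ w p + ∑ e ∈ listPre R p, w e := by
        rw [← hsumt]; simpa [hw] using h1
      simp only [hw] at this ⊢
      linarith
    · -- there is a first element e' of d with α e' > τ
      have hd : d = e' :: d' := hdd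
      have hde : pred e' = false := by
        refine dropWhile_head_false pred R e' d' ?_
        rw [← hddef, hd]
      have hαe' : τ < α e' := by
        simp only [hpred, decide_eq_false_iff_not, not_le] at hde
        exact hde
      have he'R : e' ∈ R := by rw [← htd, hd]; simp
      have he't : e' ∉ t := by
        have h2 := (htd ▸ hRnd : (t ++ d).Nodup)
        rw [List.nodup_append] at h2
        intro h
        exact h2.2.2 e' h e' (by simp [hd]) rfl
      have hPreE : listPre R e' = t.toFinset := by
        have : R = t ++ e' :: d' := by rw [← htd, hd]
        rw [this]; exact listPre_eq t d' e' he't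
      have h1 := hα₂ e' R hRPs he'R
      rw [hPreE] at h1
      rw [hsumt] at h1
      simp only [hw] at h1 hpbelow ⊢
      linarith
  -- α p is tight via some path Q
  have hQQ : ∃ Q ∈ Ps, p ∈ Q ∧ α p = ∑ f ∈ listPre Q p, (μ f + ρ f) := by
    rcases hα₃ p with h | h
    · exfalso; have := hμ0 p; linarith
    · exact h
  obtain ⟨Q, hQPs, hpQ, hαpQ⟩ := hQQ
  -- exchange via the abstract-network axiom
  obtain ⟨R', hR'Ps, hR'sub⟩ := hAN.2 Q hQPs R hRPs p hpQ hpR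
  -- all elements of Q's strict prefix of p are strictly below
  have hQpre : ∀ e ∈ listPre Q p, α e + ρ e + μ e ≤ τ := by
    intro e he
    obtain ⟨hsub, hnm⟩ := pre_mono Q p e hpQ he
    have h1 : α e ≤ ∑ f ∈ listPre Q e, w f :=
      hα₂ e Q hQPs (List.mem_toFinset.1 (listPre_subset Q p he))
    have h2 : ∑ f ∈ insert e (listPre Q e), w f ≤ ∑ f ∈ listPre Q p, w f :=
      Finset.sum_le_sum_of_subset_of_nonneg hsub (fun i _ _ => hw0 i)
    rw [Finset.sum_insert hnm] at h2
    have h3 : α e + w e ≤ α p := by rw [hαpQ]; simp only [hw] at h1 h2 ⊢; linarith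
    simp only [hw] at h3
    linarith
  -- R' is bad
  have hBadR' : Bad R' := by
    intro e heR' hαe
    rcases Finset.mem_union.1 (hR'sub (List.mem_toFinset.2 heR')) with h | h
    · rcases Finset.mem_union.1 h with h | h
      · exact hQpre e h
      · have : e = p := by simpa using h
        exact this ▸ hpbelow
    · exact hBadR e (List.mem_toFinset.1 (listSufIncl_subset R p h)) hαe
  have hR'F : R' ∈ F := Finset.mem_filter.2 ⟨hR'Ps, hBadR'⟩
  -- potential strictly decreases: Φ R' < Φ R
  set K := ((listSufIncl R p).erase p).filter (fun e => α e ≤ τ) with hK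
  have hΦR' : Φ R' ≤ w p + α p + ∑ e ∈ K, w e := by
    have hsub1 : R'.toFinset.filter (fun e => α e ≤ τ) ⊆ insert p (listPre Q p) ∪ K := by
      intro e he
      obtain ⟨heR', hαe⟩ := Finset.mem_filter.1 he
      rcases Finset.mem_union.1 (hR'sub heR') with h | h
      · rcases Finset.mem_union.1 h with h | h
        · exact Finset.mem_union.2 (Or.inl (Finset.mem_insert_of_mem h))
        · exact Finset.mem_union.2 (Or.inl (Finset.mem_insert.2 (Or.inl (by simpa using h))))
      · by_cases hep : e = p
        · exact Finset.mem_union.2 (Or.inl (Finset.mem_insert.2 (Or.inl hep)))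
        · exact Finset.mem_union.2 (Or.inr (Finset.mem_filter.2
            ⟨Finset.mem_erase.2 ⟨hep, h⟩, hαe⟩))
    have h1 : Φ R' ≤ ∑ e ∈ insert p (listPre Q p) ∪ K, w e :=
      Finset.sum_le_sum_of_subset_of_nonneg hsub1 (fun i _ _ => hw0 i)
    have h2 : ∑ e ∈ insert p (listPre Q p) ∪ K, w e
        ≤ ∑ e ∈ insert p (listPre Q p), w e + ∑ e ∈ K, w e := by
      rw [← Finset.union_sdiff_self_eq_union, Finset.sum_union Finset.disjoint_sdiff]
      have : ∑ e ∈ K \ insert p (listPre Q p), w e ≤ ∑ e ∈ K, w e :=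
        Finset.sum_le_sum_of_subset_of_nonneg (Finset.sdiff_subset) (fun i _ _ => hw0 i)
      linarith
    have h3 : ∑ e ∈ insert p (listPre Q p), w e = w p + α p := by
      rw [Finset.sum_insert (not_mem_listPre_self Q p), hαpQ]
    linarith
  have hΦR : w p + (∑ e ∈ listPre R p, w e) + ∑ e ∈ K, w e ≤ Φ R := by
    have hdisj : Disjoint (insert p (listPre R p)) K := by
      rw [Finset.disjoint_left]
      intro a ha haK
      obtain ⟨haE, _⟩ := Finset.mem_filter.1 haK
      obtain ⟨hap, haS⟩ := Finset.mem_erase.1 haE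
      rcases Finset.mem_insert.1 ha with h | h
      · exact hap h
      · rw [hPreR] at h
        rw [hSufR] at haS
        rcases Finset.mem_insert.1 haS with h2 | h2
        · exact hap h2
        · exact ht'd a (List.mem_toFinset.1 h) (List.mem_toFinset.1 h2)
    have hsub2 : insert p (listPre R p) ∪ K ⊆ R.toFinset.filter (fun e => α e ≤ τ) := by
      intro e he
      rcases Finset.mem_union.1 he with h | h
      · rcases Finset.mem_insert.1 h with h | h
        · exact Finset.mem_filter.2 ⟨List.mem_toFinset.2 (h ▸ hpR), h ▸ hαp⟩
        · refine Finset.mem_filter.2 ⟨listPre_subset R p h, ?_⟩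
          rw [hPreR] at h
          exact ht e (htt' ▸ List.mem_append_left [p] (List.mem_toFinset.1 h))
      · obtain ⟨heE, hαe⟩ := Finset.mem_filter.1 h
        exact Finset.mem_filter.2 ⟨listSufIncl_subset R p (Finset.mem_of_mem_erase heE), hαe⟩
    have h1 : ∑ e ∈ insert p (listPre R p) ∪ K, w e ≤ Φ R :=
      Finset.sum_le_sum_of_subset_of_nonneg hsub2 (fun i _ _ => hw0 i)
    rw [Finset.sum_union hdisj, Finset.sum_insert (by
      rw [hPreR]; simpa using hpt')] at h1
    linarith
  have := hmin R' hR'F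
  linarith

end AuxLemmas

/-- The interval assignment via truncated shortest-path labels `α` yields a feasible
decomposition of `ρ` for an abstract network with affine requirements
`π_P = 1 − ∑_{e∈P} μ_e`: for `τ` uniform in `[0,1)`, the distribution of
`S_τ = {e : α_e ≤ τ < α_e + ρ_e}` has marginals `ρ` and hits each path `P ∈ 𝒫`
with probability at least `π_P`. -/
theorem abstract_network_feasible_decomposition
    (Ps : Finset (List E)) (hAN : IsAbstractNetwork Ps)
    (ρ μ : E → ℝ) (hρ : ∀ e, 0 ≤ ρ e ∧ ρ e ≤ 1) (hμ : ∀ e, 0 ≤ μ e ∧ μ e ≤ 1)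
    (π : List E → ℝ) (hπ : ∀ P ∈ Ps, π P = 1 - ∑ e ∈ P.toFinset, μ e)
    (hcond : ∀ P ∈ Ps, π P ≤ ∑ e ∈ P.toFinset, ρ e)
    (α : E → ℝ)
    -- `α e = min { ∑_{f ∈ (Q,e)} (μ f + ρ f) : Q ∈ 𝒫, e ∈ Q } ∪ {1 - ρ e}`:
    (hα₁ : ∀ e, α e ≤ 1 - ρ e)
    (hα₂ : ∀ e, ∀ Q ∈ Ps, e ∈ Q → α e ≤ ∑ f ∈ listPre Q e, (μ f + ρ f))
    (hα₃ : ∀ e, α e = 1 - ρ e ∨ ∃ Q ∈ Ps, e ∈ Q ∧ α e = ∑ f ∈ listPre Q e, (μ f + ρ f))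
    (x : Finset E → ℝ)
    (hx : ∀ S : Finset E,
      x S = (volume {τ ∈ Set.Ico (0:ℝ) 1 | levelSet α ρ τ = S}).toReal) :
    (∀ S, 0 ≤ x S) ∧ (∑ S : Finset E, x S = 1) ∧
    (∀ e : E, ∑ S ∈ Finset.univ.filter (fun S : Finset E => e ∈ S), x S = ρ e) ∧
    (∀ P ∈ Ps, π P ≤
      ∑ S ∈ Finset.univ.filter (fun S : Finset E => (S ∩ P.toFinset).Nonempty), x S) := by
  classical
  set T : Finset E → Set ℝ := fun S => {τ ∈ Set.Ico (0:ℝ) 1 | levelSet α ρ τ = S} with hT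
  have hxT : ∀ S, x S = (volume (T S)).toReal := hx
  have hmemT : ∀ S τ, τ ∈ T S ↔ (τ ∈ Set.Ico (0:ℝ) 1 ∧ levelSet α ρ τ = S) := by
    intro S τ; rfl
  have hmemL : ∀ τ e, e ∈ levelSet α ρ τ ↔ (α e ≤ τ ∧ τ < α e + ρ e) := by
    intro τ e; simp [levelSet]
  -- measurability
  have hmeas : ∀ S, MeasurableSet (T S) := by
    intro S
    have heq : T S = Set.Ico (0:ℝ) 1 ∩
        ⋂ e : E, {τ : ℝ | (α e ≤ τ ∧ τ < α e + ρ e) ↔ e ∈ S} := by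
      ext τ
      rw [hmemT]
      simp only [Set.mem_inter_iff, Set.mem_iInter, Set.mem_setOf_eq]
      constructor
      · rintro ⟨h1, h2⟩
        exact ⟨h1, fun e => by rw [← h2, hmemL]⟩
      · rintro ⟨h1, h2⟩
        refine ⟨h1, ?_⟩
        ext e
        rw [hmemL]
        exact h2 e
    rw [heq]
    refine measurableSet_Ico.inter (MeasurableSet.iInter fun e => ?_)
    by_cases he : e ∈ S
    · have : {τ : ℝ | (α e ≤ τ ∧ τ < α e + ρ e) ↔ e ∈ S} = Set.Ico (α e) (α e + ρ e) := by
        ext τ; simp [he, Set.mem_Ico]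
      rw [this]; exact measurableSet_Ico
    · have : {τ : ℝ | (α e ≤ τ ∧ τ < α e + ρ e) ↔ e ∈ S} = (Set.Ico (α e) (α e + ρ e))ᶜ := by
        ext τ; simp [he, Set.mem_Ico]
      rw [this]; exact measurableSet_Ico.compl
  -- pairwise disjoint
  have hpair : Set.PairwiseDisjoint ((Finset.univ : Finset (Finset E)) : Set (Finset E)) T := by
    intro S _ S' _ hne
    refine Set.disjoint_left.2 fun {τ} h1 h2 => hne ?_
    rw [hmemT] at h1 h2
    rw [← h1.2, h2.2]
  -- total mass
  have hcoverall : ⋃ S ∈ (Finset.univ : Finset (Finset E)), T S = Set.Ico (0:ℝ) 1 := by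
    ext τ
    simp only [Set.mem_iUnion, Finset.mem_univ, exists_true_left, hmemT]
    constructor
    · rintro ⟨S, h1, _⟩; exact h1
    · intro h; exact ⟨levelSet α ρ τ, h, rfl⟩
  have htot : ∑ S : Finset E, volume (T S) = 1 := by
    rw [← measure_biUnion_finset hpair (fun S _ => hmeas S), hcoverall, Real.volume_Ico]
    simp
  have hle1 : ∀ S, volume (T S) ≤ 1 := by
    intro S
    calc volume (T S) ≤ volume (Set.Ico (0:ℝ) 1) := by
          refine measure_mono fun τ hτ => ?_
          rw [hmemT] at hτ; exact hτ.1
      _ = 1 := by rw [Real.volume_Ico]; simp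
  have hfin : ∀ S, volume (T S) ≠ ⊤ := fun S => ne_top_of_le_ne_top ENNReal.one_ne_top (hle1 S)
  have hnonneg : ∀ S, 0 ≤ x S := fun S => (hxT S) ▸ ENNReal.toReal_nonneg
  refine ⟨hnonneg, ?_, ?_, ?_⟩
  · -- total sum is 1
    have : ∑ S : Finset E, x S = (∑ S : Finset E, volume (T S)).toReal := by
      rw [ENNReal.toReal_sum (fun S _ => hfin S)]
      exact Finset.sum_congr rfl (fun S _ => hxT S)
    rw [this, htot]; simp
  · -- marginals
    intro e
    have hαe0 : 0 ≤ α e := by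
      rcases hα₃ e with h | ⟨Q, _, _, h⟩
      · rw [h]; linarith [(hρ e).2]
      · rw [h]; exact Finset.sum_nonneg fun f _ => add_nonneg (hμ f).1 (hρ f).1
    have hαe1 : α e + ρ e ≤ 1 := by linarith [hα₁ e]
    have hunion_e : ⋃ S ∈ Finset.univ.filter (fun S : Finset E => e ∈ S), T S
        = Set.Ico (α e) (α e + ρ e) := by
      ext τ
      simp only [Set.mem_iUnion, Finset.mem_filter, Finset.mem_univ, true_and]
      constructor
      · rintro ⟨S, heS, hτ⟩
        rw [hmemT] at hτ
        have := hτ.2 ▸ heS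
        rw [hmemL] at this
        exact Set.mem_Ico.2 this
      · intro hτ
        rw [Set.mem_Ico] at hτ
        refine ⟨levelSet α ρ τ, (hmemL τ e).2 hτ, ?_⟩
        rw [hmemT]
        exact ⟨Set.mem_Ico.2 ⟨le_trans hαe0 hτ.1, lt_of_lt_of_le hτ.2 hαe1⟩, rfl⟩
    have hsum_e : ∑ S ∈ Finset.univ.filter (fun S : Finset E => e ∈ S), volume (T S)
        = ENNReal.ofReal (ρ e) := by
      rw [← measure_biUnion_finset (hpair.subset (by intro S _; simp)) (fun S _ => hmeas S),
        hunion_e, Real.volume_Ico, add_sub_cancel_left]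
    calc ∑ S ∈ Finset.univ.filter (fun S : Finset E => e ∈ S), x S
        = (∑ S ∈ Finset.univ.filter (fun S : Finset E => e ∈ S), volume (T S)).toReal := by
          rw [ENNReal.toReal_sum (fun S _ => hfin S)]
          exact Finset.sum_congr rfl (fun S _ => hxT S)
      _ = ρ e := by rw [hsum_e, ENNReal.toReal_ofReal (hρ e).1]
  · -- hitting probabilities
    intro P hP
    set U : Set ℝ := ⋃ e ∈ P.toFinset, Set.Ico (α e) (α e + ρ e) with hU
    have hUmeas : MeasurableSet U :=
      (P.toFinset : Finset E).measurableSet_biUnion (fun e _ => measurableSet_Ico)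
    have hunion_P : ⋃ S ∈ Finset.univ.filter
        (fun S : Finset E => (S ∩ P.toFinset).Nonempty), T S = Set.Ico (0:ℝ) 1 ∩ U := by
      ext τ
      simp only [Set.mem_iUnion, Finset.mem_filter, Finset.mem_univ, true_and,
        Set.mem_inter_iff, hU]
      constructor
      · rintro ⟨S, hSne, hτ⟩
        rw [hmemT] at hτ
        obtain ⟨f, hf⟩ := hSne
        rw [Finset.mem_inter] at hf
        have hfL := hτ.2 ▸ hf.1
        rw [hmemL] at hfL
        exact ⟨hτ.1, ⟨f, hf.2, Set.mem_Ico.2 hfL⟩⟩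
      · rintro ⟨hτ1, hτU⟩
        obtain ⟨f, hfP, hfI⟩ := hτU
        refine ⟨levelSet α ρ τ, ⟨f, ?_⟩, (hmemT _ τ).2 ⟨hτ1, rfl⟩⟩
        rw [Finset.mem_inter]
        exact ⟨(hmemL τ f).2 (Set.mem_Ico.1 hfI), hfP⟩
    -- measure of the miss set is at most ∑ μ
    have hsum1 : ∀ Q ∈ Ps, (1:ℝ) ≤ ∑ e ∈ Q.toFinset, (μ e + ρ e) := by
      intro Q hQ
      have h1 := hcond Q hQ
      rw [hπ Q hQ] at h1
      rw [Finset.sum_add_distrib]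
      linarith
    have hmiss_sub : Set.Ico (0:ℝ) 1 \ U ⊆
        ⋃ e ∈ P.toFinset, Set.Ico (α e + ρ e) (α e + ρ e + μ e) := by
      rintro τ ⟨hτ1, hτU⟩
      rw [Set.mem_Ico] at hτ1
      obtain ⟨e, heP, he1, he2⟩ := key_cover Ps hAN ρ μ α (fun e => (hρ e).1) (fun e => (hμ e).1)
        hsum1 hα₂ hα₃ τ hτ1.1 hτ1.2 P hP
      have hnot : ¬(α e ≤ τ ∧ τ < α e + ρ e) := by
        intro hin
        exact hτU (Set.mem_iUnion₂.2 ⟨e, List.mem_toFinset.2 heP, Set.mem_Ico.2 hin⟩)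
      have : α e + ρ e ≤ τ := by
        by_contra hlt
        exact hnot ⟨he1, lt_of_not_ge hlt⟩
      exact Set.mem_iUnion₂.2 ⟨e, List.mem_toFinset.2 heP, Set.mem_Ico.2 ⟨this, by linarith⟩⟩
    have hmiss_le : volume (Set.Ico (0:ℝ) 1 \ U) ≤ ENNReal.ofReal (∑ e ∈ P.toFinset, μ e) := by
      calc volume (Set.Ico (0:ℝ) 1 \ U)
          ≤ volume (⋃ e ∈ P.toFinset, Set.Ico (α e + ρ e) (α e + ρ e + μ e)) :=
            measure_mono hmiss_sub
        _ ≤ ∑ e ∈ P.toFinset, volume (Set.Ico (α e + ρ e) (α e + ρ e + μ e)) :=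
            measure_biUnion_finset_le _ _
        _ = ∑ e ∈ P.toFinset, ENNReal.ofReal (μ e) := by
            refine Finset.sum_congr rfl fun e _ => ?_
            rw [Real.volume_Ico, add_sub_cancel_left]
        _ = ENNReal.ofReal (∑ e ∈ P.toFinset, μ e) :=
            (ENNReal.ofReal_sum_of_nonneg (fun e _ => (hμ e).1)).symm
    have hsplit : volume (Set.Ico (0:ℝ) 1 ∩ U) + volume (Set.Ico (0:ℝ) 1 \ U) = 1 := by
      rw [measure_inter_add_diff _ hUmeas, Real.volume_Ico]; simp
    have hhitfin : volume (Set.Ico (0:ℝ) 1 ∩ U) ≠ ⊤ := by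
      refine ne_top_of_le_ne_top ENNReal.one_ne_top ?_
      rw [← hsplit]; exact le_self_add
    have hmissfin : volume (Set.Ico (0:ℝ) 1 \ U) ≠ ⊤ := by
      refine ne_top_of_le_ne_top ENNReal.one_ne_top ?_
      rw [← hsplit]; exact le_add_self
    have hreal : (volume (Set.Ico (0:ℝ) 1 ∩ U)).toReal
        + (volume (Set.Ico (0:ℝ) 1 \ U)).toReal = 1 := by
      rw [← ENNReal.toReal_add hhitfin hmissfin, hsplit]; simp
    have hmissr : (volume (Set.Ico (0:ℝ) 1 \ U)).toReal ≤ ∑ e ∈ P.toFinset, μ e :=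
      ENNReal.toReal_le_of_le_ofReal
        (Finset.sum_nonneg fun e _ => (hμ e).1) hmiss_le
    have hfinal : ∑ S ∈ Finset.univ.filter
        (fun S : Finset E => (S ∩ P.toFinset).Nonempty), x S
        = (volume (Set.Ico (0:ℝ) 1 ∩ U)).toReal := by
      rw [← hunion_P, measure_biUnion_finset (hpair.subset (by intro S _; simp))
        (fun S _ => hmeas S), ENNReal.toReal_sum (fun S _ => hfin S)]
      exact Finset.sum_congr rfl (fun S _ => hxT S)
    rw [hfinal, hπ P hP]
    linarith
end

section
/- Let (E, 𝒫, ⪯) be an abstract network in which all paths share a common first element s (i.e., s_P = s for all P) and let γ ∈ ℝ_+^E. Suppose T ⊆ E and ψ ∈ (ℝ ∪ {∞})^E satisfy the invariant: for every P ∈ 𝒫 there is e ∈ P with [e,P] ∩ T = ∅ and ψ_e ≤ ∑_{f ∈ [P,e]} γ_f. If additionally ψ_t ≤ ψ_f for all f ∈ E \ T, where t is the common last element of all paths, and ψ_t = ∑_{f ∈ Q} γ_f for some Q ∈ 𝒫, then Q is a shortest path: ∑_{f∈Q} γ_f ≤ ∑_{f∈P} γ_f for all P ∈ 𝒫. -/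
open Finset

variable {E : Type*} [Fintype E] [DecidableEq E]

/-- Correctness at termination of the abstract Dijkstra algorithm: if the labels `ψ`
and scanned set `T` satisfy the invariant (every path `P` has some element `e` with
`[e,P] ∩ T = ∅` and `ψ_e ≤ ∑_{f ∈ [P,e]} γ_f`), `ψ_t` is minimal among unscanned
elements, and `ψ_t` is realized by the path `Q`, then `Q` is a shortest path. -/
theorem abstract_dijkstra_termination
    (Ps : Finset (List E)) (hAN : IsAbstractNetwork Ps)
    (s t : E) (hs : ∀ P ∈ Ps, P.head? = some s) (ht : ∀ P ∈ Ps, P.getLast? = some t)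
    (γ : E → ℝ) (hγ : ∀ e, 0 ≤ γ e)
    (T : Finset E) (ψ : E → EReal)
    (hinv : ∀ P ∈ Ps, ∃ e ∈ P, (listSufIncl P e ∩ T = ∅) ∧
      ψ e ≤ ((∑ f ∈ listPreIncl P e, γ f : ℝ) : EReal))
    (hmin : ∀ f ∉ T, ψ t ≤ ψ f)
    (Q : List E) (hQ : Q ∈ Ps)
    (hψt : ψ t = ((∑ f ∈ Q.toFinset, γ f : ℝ) : EReal)) :
    ∀ P ∈ Ps, ∑ f ∈ Q.toFinset, γ f ≤ ∑ f ∈ P.toFinset, γ f := by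
  intro P hP
  obtain ⟨e, heP, hTe, hψe⟩ := hinv P hP
  -- e ∈ listSufIncl P e
  have heSuf : e ∈ listSufIncl P e := by
    simp only [listSufIncl, List.mem_toFinset]
    have hsplit := List.takeWhile_append_dropWhile (p := fun x => decide (x ≠ e)) (l := P)
    have : e ∈ P.takeWhile (fun x => decide (x ≠ e)) ++ P.dropWhile (fun x => decide (x ≠ e)) := by
      rw [hsplit]; exact heP
    rcases List.mem_append.mp this with h | h
    · have := List.mem_takeWhile_imp h; simp at this
    · exact h
  have heT : e ∉ T := by
    intro hmem
    have : e ∈ listSufIncl P e ∩ T := Finset.mem_inter.mpr ⟨heSuf, hmem⟩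
    simp [hTe] at this
  have h1 : ψ t ≤ ((∑ f ∈ listPreIncl P e, γ f : ℝ) : EReal) :=
    le_trans (hmin e heT) hψe
  have hsub : listPreIncl P e ⊆ P.toFinset := by
    intro x hx
    rcases Finset.mem_union.mp hx with h | h
    · exact List.mem_toFinset.mpr ((P.takeWhile_sublist _).mem (List.mem_toFinset.mp h))
    · simp only [Finset.mem_singleton] at h
      exact List.mem_toFinset.mpr (h ▸ heP)
  have h2 : (∑ f ∈ listPreIncl P e, γ f) ≤ ∑ f ∈ P.toFinset, γ f :=
    Finset.sum_le_sum_of_subset_of_nonneg hsub (fun i _ _ => hγ i)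
  have h3 : ((∑ f ∈ Q.toFinset, γ f : ℝ) : EReal) ≤ ((∑ f ∈ P.toFinset, γ f : ℝ) : EReal) :=
    hψt ▸ le_trans h1 (by exact_mod_cast h2)
  exact_mod_cast h3
end

section
/- Let D = (V,A) be a directed acyclic graph with designated nodes s, t, and let 𝒫 be the set of s-t-paths (each identified with its set of nodes and arcs). Let π : 𝒫 → [0,1] satisfy the conservation law π_P + π_Q = π_{P×_e Q} + π_{Q×_e P} for all P, Q ∈ 𝒫 and e ∈ P ∩ Q, where P×_e Q denotes the s-t-path following P up to e and Q after e. Then there exists μ ∈ [0,1]^{V∪A} such that π_P = 1 − ∑_{e∈P} μ_e for all P ∈ 𝒫. -/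
open Finset

variable {V : Type*} [Fintype V] [DecidableEq V]

/-- `p` is a simple path from `s` to `v` in the digraph with arc set `Arcs`,
given as its sequence of nodes. -/
def IsPathOn (Arcs : Finset (V × V)) (s v : V) (p : List V) : Prop :=
  p.head? = some s ∧ p.getLast? = some v ∧ p.Nodup ∧
    p.Chain' (fun u w => (u, w) ∈ Arcs)

/-- The set of elements (nodes and arcs) of a path given by its node sequence. -/
def pathElems (p : List V) : Finset (V ⊕ V × V) :=
  p.toFinset.image Sum.inl ∪ (p.zip p.tail).toFinset.image Sum.inr

/-- The splice `P ×_e Q` of two paths at a common element `e`: follow `P` up to `e`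
and `Q` from `e` onwards. -/
def splice (p q : List V) (v : V) : List V :=
  p.takeWhile (· ≠ v) ++ q.dropWhile (· ≠ v)

/-- The digraph is acyclic. -/
def IsAcyclic (Arcs : Finset (V × V)) : Prop :=
  ∀ (v : V) (l : List V), List.Chain (fun u w => (u, w) ∈ Arcs) v l → v ∉ l

set_option linter.unusedSectionVars false

section AuxLemmas

lemma tw_dw (v : V) (a d : List V) (h : v ∉ a) :
    (a ++ v :: d).takeWhile (· ≠ v) = a ∧ (a ++ v :: d).dropWhile (· ≠ v) = v :: d := by
  induction a with
  | nil => simp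
  | cons x xs ih =>
    have hx : (decide (x ≠ v)) = true := by simpa using fun hxv => h (by simp [hxv])
    have := ih (fun hv => h (List.mem_cons_of_mem _ hv))
    refine ⟨?_, ?_⟩ <;>
      simp only [List.cons_append, List.takeWhile_cons, List.dropWhile_cons, hx, if_true,
        this.1, this.2]

lemma splice_explicit {v : V} {a b c d : List V} (ha : v ∉ a) (hc : v ∉ c) :
    splice (a ++ v :: b) (c ++ v :: d) v = a ++ v :: d := by
  rw [splice, (tw_dw v a b ha).1, (tw_dw v c d hc).2]

lemma decomp {v : V} {p : List V} (hn : p.Nodup) (hv : v ∈ p) :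
    ∃ a d, p = a ++ v :: d ∧ v ∉ a := by
  obtain ⟨a, d, rfl⟩ := List.append_of_mem hv
  exact ⟨a, d, rfl, fun hva => (List.disjoint_of_nodup_append hn) hva List.mem_cons_self⟩

lemma splice_head_left {s : V} {p q : List V} (hq : q.head? = some s) (hp : p.head? = some s) :
    splice q p s = p := by
  cases q with
  | nil => simp at hq
  | cons a q =>
    cases p with
    | nil => simp at hp
    | cons b p =>
      simp only [List.head?_cons, Option.some.injEq] at hq hp
      subst hq; subst hp
      simp [splice]

lemma mem_zip_tail {u w : V} (l1 l2 : List V) :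
    (u, w) ∈ (l1 ++ u :: w :: l2).zip (l1 ++ u :: w :: l2).tail := by
  induction l1 with
  | nil => simp
  | cons x xs ih =>
    obtain ⟨h, rt, hr⟩ : ∃ h rt, xs ++ u :: w :: l2 = h :: rt := by
      cases xs <;> exact ⟨_, _, rfl⟩
    simp only [List.cons_append, List.tail_cons, hr, List.zip_cons_cons]
    refine List.mem_cons_of_mem _ ?_
    have := ih
    rw [hr] at this
    simpa using this

lemma of_mem_zip_tail : ∀ {p : List V} {u w : V}, (u, w) ∈ p.zip p.tail →
    ∃ l1 l2, p = l1 ++ u :: w :: l2 := by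
  intro p
  induction p with
  | nil => simp
  | cons x xs ih =>
    intro u w h
    cases xs with
    | nil => simp at h
    | cons y ys =>
      rw [List.tail_cons, List.zip_cons_cons] at h
      rcases List.mem_cons.1 h with h1 | h2
      · obtain ⟨rfl, rfl⟩ := Prod.mk.injEq .. ▸ h1
        exact ⟨[], ys, by simp⟩
      · have : (u, w) ∈ (y :: ys).zip (y :: ys).tail := by simpa using h2
        obtain ⟨l1, l2, hl⟩ := ih this
        exact ⟨x :: l1, l2, by simp [hl]⟩

lemma nodup_zip_tail : ∀ {p : List V}, p.Nodup → (p.zip p.tail).Nodup := by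
  intro p
  induction p with
  | nil => simp
  | cons x xs ih =>
    intro h
    cases xs with
    | nil => simp
    | cons y ys =>
      rw [List.tail_cons, List.zip_cons_cons]
      refine List.Nodup.cons ?_ (by simpa using ih h.of_cons)
      intro hmem
      exact (List.nodup_cons.1 h).1 ((List.of_mem_zip hmem).1)

lemma zip_tail_snoc (u v : V) (l : List V) :
    (l ++ [u, v]).zip (l ++ [u, v]).tail = ((l ++ [u]).zip (l ++ [u]).tail) ++ [(u, v)] := by
  induction l with
  | nil => simp
  | cons x xs ih =>
    obtain ⟨h, r, hr⟩ : ∃ h r, xs ++ [u] = h :: r := by cases xs <;> exact ⟨_, _, rfl⟩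
    have hr2 : xs ++ [u, v] = h :: (r ++ [v]) := by
      have h1 : xs ++ [u, v] = (xs ++ [u]) ++ [v] := by simp
      rw [h1, hr]; simp
    have t1 : (xs ++ [u, v]).tail = r ++ [v] := by rw [hr2]; rfl
    have t2 : (xs ++ [u]).tail = r := by rw [hr]; rfl
    simp only [List.cons_append, List.tail_cons, hr2, hr, List.zip_cons_cons]
    rw [t1, t2, hr2, hr] at ih
    rw [ih]

section arcs
variable {Arcs : Finset (V × V)} {s t : V}

lemma no_cross (hacyc : IsAcyclic Arcs) {v x : V} {a b c d : List V}
    (hc1 : List.Chain' (fun u w => (u, w) ∈ Arcs) (a ++ v :: b))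
    (hc2 : List.Chain' (fun u w => (u, w) ∈ Arcs) (c ++ v :: d))
    (hxa : x ∈ a) (hxd : x ∈ d) : False := by
  set R : V → V → Prop := fun u w => (u, w) ∈ Arcs with hR
  obtain ⟨a1, a2, rfl⟩ := List.append_of_mem hxa
  obtain ⟨d1, d2, rfl⟩ := List.append_of_mem hxd
  have h1 : List.Chain R x (a2 ++ v :: b) := by
    have := hc1
    rw [List.append_assoc, List.cons_append] at this
    exact this.right_of_append
  have h2 : List.Chain R v (d1 ++ x :: d2) := hc2.right_of_append
  replace h2 := List.isChain_cons_split.1 h2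
  have h3 : List.Chain R v (d1 ++ x :: (a2 ++ v :: b)) :=
    List.isChain_cons_split.2 ⟨h2.1, h1⟩
  exact hacyc v _ h3 (by simp)

lemma splice_isPath (hacyc : IsAcyclic Arcs) {p q : List V} {v : V}
    (hp : IsPathOn Arcs s t p) (hq : IsPathOn Arcs s t q)
    (hvp : v ∈ p) (hvq : v ∈ q) : IsPathOn Arcs s t (splice p q v) := by
  obtain ⟨a, b, rfl, hva⟩ := decomp hp.2.2.1 hvp
  obtain ⟨c, d, rfl, hvc⟩ := decomp hq.2.2.1 hvq
  rw [splice_explicit hva hvc]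
  obtain ⟨hph, hpl, hpn, hpc⟩ := hp
  obtain ⟨hqh, hql, hqn, hqc⟩ := hq
  refine ⟨?_, ?_, ?_, ?_⟩
  · have : (a ++ v :: d).head? = (a ++ v :: b).head? := by cases a <;> simp
    rw [this, hph]
  · rw [List.getLast?_append_of_ne_nil _ (by simp), ← hql,
      List.getLast?_append_of_ne_nil _ (by simp)]
  · rw [List.nodup_append]
    refine ⟨hpn.of_append_left, (List.Nodup.of_append_right hqn), ?_⟩
    intro x hxa y hxvd hxy
    subst hxy
    rcases List.mem_cons.1 hxvd with rfl | hxd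
    · exact hva hxa
    · exact no_cross hacyc hpc hqc hxa hxd
  · refine List.isChain_append.2 ?_
    replace hpc := List.isChain_append.1 hpc
    exact ⟨hpc.1, hqc.right_of_append, fun x hx y hy => hpc.2.2 x hx y (by simpa using hy)⟩

lemma mem_head_path {p : List V} (hp : IsPathOn Arcs s t p) : s ∈ p := by
  cases p with
  | nil => simp [IsPathOn] at hp
  | cons a q =>
    have := hp.1
    simp only [List.head?_cons, Option.some.injEq] at this
    simp [this]

lemma mem_last_path {p : List V} (hp : IsPathOn Arcs s t p) : t ∈ p := by
  have := hp.2.1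
  have hne : p ≠ [] := by rintro rfl; simp at this
  rw [List.getLast?_eq_getLast hne, Option.some.injEq] at this
  rw [← this]
  exact List.getLast_mem hne

end arcs

end AuxLemmas

/-- If a requirement function `π ∈ [0,1]^𝒫` on the `s`-`t`-paths of a DAG satisfies
the conservation law `π_P + π_Q = π_{P×_e Q} + π_{Q×_e P}` at every common element,
then `π` is affine: there are weights `μ ∈ [0,1]` on nodes and arcs with
`π_P = 1 − ∑_{e∈P} μ_e` for every path `P`. -/
theorem conservation_law_implies_affine
    (Arcs : Finset (V × V)) (s t : V) (hacyc : IsAcyclic Arcs)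
    (π : List V → ℝ)
    (hπ01 : ∀ p : List V, IsPathOn Arcs s t p → 0 ≤ π p ∧ π p ≤ 1)
    (hcons : ∀ p q : List V, IsPathOn Arcs s t p → IsPathOn Arcs s t q →
      ∀ v : V, v ∈ p → v ∈ q → π (splice p q v) + π (splice q p v) = π p + π q) :
    ∃ μ : V ⊕ V × V → ℝ, (∀ e, 0 ≤ μ e ∧ μ e ≤ 1) ∧
      ∀ p : List V, IsPathOn Arcs s t p → π p = 1 - ∑ e ∈ pathElems p, μ e := by
  classical
  by_cases hS : ∃ p0 : List V, IsPathOn Arcs s t p0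
  swap
  · exact ⟨fun _ => 0, fun e => by norm_num, fun p hp => absurd ⟨p, hp⟩ hS⟩
  obtain ⟨p0, hp0⟩ := hS
  set c : List V → ℝ := fun p => 1 - π p with hcdef
  have hc01 : ∀ p : List V, IsPathOn Arcs s t p → 0 ≤ c p ∧ c p ≤ 1 := by
    intro p hp
    have := hπ01 p hp
    constructor <;> simp [hcdef] <;> linarith [this.1, this.2]
  have hcons' : ∀ p q : List V, IsPathOn Arcs s t p → IsPathOn Arcs s t q →
      ∀ v : V, v ∈ p → v ∈ q → c (splice p q v) + c (splice q p v) = c p + c q := by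
    intro p q hp hq v hvp hvq
    have := hcons p q hp hq v hvp hvq
    simp only [hcdef]
    linarith
  have hfin : {p : List V | IsPathOn Arcs s t p}.Finite := by
    apply (List.finite_length_le V (Fintype.card V)).subset
    intro p hp
    exact hp.2.2.1.length_le_card
  -- choose canonical suffix-minimal paths
  have hRex : ∀ v : V, ∃ r : List V, (∃ p, IsPathOn Arcs s t p ∧ v ∈ p) →
      IsPathOn Arcs s t r ∧ v ∈ r ∧
        ∀ p, IsPathOn Arcs s t p → v ∈ p → c r ≤ c (splice r p v) := by
    intro v
    by_cases h : ∃ p, IsPathOn Arcs s t p ∧ v ∈ p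
    swap
    · exact ⟨[], fun hh => absurd hh h⟩
    obtain ⟨q0, hq0, hvq0⟩ := h
    have hfin2 : {p : List V | IsPathOn Arcs s t p ∧ v ∈ p}.Finite :=
      hfin.subset fun p hp => hp.1
    obtain ⟨pm, hpm, hmin⟩ := Set.exists_min_image _ (fun p => c (splice q0 p v)) hfin2
      ⟨q0, hq0, hvq0⟩
    obtain ⟨hpmP, hvpm⟩ := hpm
    obtain ⟨a, b, hq0e, hva⟩ := decomp hq0.2.2.1 hvq0
    obtain ⟨e, f, hpme, hve⟩ := decomp hpmP.2.2.1 hvpm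
    have hsp : splice q0 pm v = a ++ v :: f := by rw [hq0e, hpme, splice_explicit hva hve]
    refine ⟨splice q0 pm v, fun _ => ⟨splice_isPath hacyc hq0 hpmP hvq0 hvpm, ?_, ?_⟩⟩
    · rw [hsp]; simp
    · intro p hp hvp
      obtain ⟨g, k, hpe, hvg⟩ := decomp hp.2.2.1 hvp
      have h1 : splice (splice q0 pm v) p v = splice q0 p v := by
        rw [hsp, hpe, hq0e, splice_explicit hva hvg, splice_explicit hva hvg]
      rw [h1]
      exact hmin p ⟨hp, hvp⟩
  choose R hR using hRex
  have hRs := hR s ⟨p0, hp0, mem_head_path hp0⟩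
  set cmin : ℝ := c (R s) with hcmin
  -- canonical path through an arc
  set arcPath : V → V → List V :=
    fun u w => (R u).takeWhile (· ≠ u) ++ u :: (R w).dropWhile (· ≠ w) with harcPath
  set usable : V × V → Prop :=
    fun a => ∃ p, IsPathOn Arcs s t p ∧ a ∈ p.zip p.tail with husable
  set φ : V × V → ℝ :=
    fun a => if usable a then c (arcPath a.1 a.2) - c (R a.1) else 0 with hφ
  -- the key one-step lemma
  have key_arc : ∀ (u w : V) (l1 l2 p : List V), p = l1 ++ u :: w :: l2 →
      IsPathOn Arcs s t p →
      IsPathOn Arcs s t (arcPath u w) ∧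
      c (splice p (R w) w) = c (splice p (R u) u) + (c (arcPath u w) - c (R u)) ∧
      c (R u) ≤ c (arcPath u w) := by
    intro u w l1 l2 p hpe hp
    subst hpe
    have hu_mem : u ∈ l1 ++ u :: w :: l2 := by simp
    have hw_mem : w ∈ l1 ++ u :: w :: l2 := by simp
    have hTu := hR u ⟨_, hp, hu_mem⟩
    have hTw := hR w ⟨_, hp, hw_mem⟩
    have hnp := hp.2.2.1
    have hul1 : u ∉ l1 := fun h =>
      (List.disjoint_of_nodup_append hnp) h (by simp)
    have hwl1u : w ∉ l1 ++ [u] := by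
      intro h
      rcases List.mem_append.1 h with h | h
      · exact (List.disjoint_of_nodup_append hnp) h (by simp)
      · have : w = u := by simpa using h
        subst this
        have := List.Nodup.of_append_right hnp
        simp at this
      -- done
    obtain ⟨cw, dw, hRwe, hwcw⟩ := decomp hTw.1.2.2.1 hTw.2.1
    have hdwRw : (R w).dropWhile (· ≠ w) = w :: dw := by rw [hRwe]; exact (tw_dw w cw dw hwcw).2
    have hYeq : splice (l1 ++ u :: w :: l2) (R w) w = l1 ++ u :: w :: dw := by
      have hrw : l1 ++ u :: w :: l2 = (l1 ++ [u]) ++ w :: l2 := by simp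
      rw [splice, hrw, (tw_dw w (l1 ++ [u]) l2 hwl1u).1, hdwRw]
      simp
    have hY : IsPathOn Arcs s t (l1 ++ u :: w :: dw) := by
      rw [← hYeq]
      exact splice_isPath hacyc hp hTw.1 hw_mem hTw.2.1
    have huY : u ∈ l1 ++ u :: w :: dw := by simp
    obtain ⟨au, bu, hRue, hucu⟩ := decomp hTu.1.2.2.1 hTu.2.1
    have htwRu : (R u).takeWhile (· ≠ u) = au := by rw [hRue]; exact (tw_dw u au bu hucu).1
    have harc_eq2 : arcPath u w = au ++ u :: w :: dw := by
      simp only [harcPath]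
      rw [htwRu, hdwRw]
    have harc_eq : splice (R u) (l1 ++ u :: w :: dw) u = arcPath u w := by
      rw [harc_eq2, hRue, splice_explicit hucu hul1]
    have harcP : IsPathOn Arcs s t (arcPath u w) := by
      rw [← harc_eq]
      exact splice_isPath hacyc hTu.1 hY hTu.2.1 huY
    have hsplY : splice (l1 ++ u :: w :: dw) (R u) u = l1 ++ u :: bu := by
      rw [hRue, splice_explicit hul1 hucu]
    have hsplP : splice (l1 ++ u :: w :: l2) (R u) u = l1 ++ u :: bu := by
      rw [hRue, splice_explicit hul1 hucu]
    have hmin : c (R u) ≤ c (arcPath u w) := by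
      have := hTu.2.2 _ hY huY
      rwa [harc_eq] at this
    refine ⟨harcP, ?_, hmin⟩
    have hcc := hcons' _ (R u) hY hTu.1 u huY hTu.2.1
    rw [hsplY, harc_eq] at hcc
    rw [hYeq, hsplP]
    linarith
  -- telescoping along a path
  have tele : ∀ p : List V, IsPathOn Arcs s t p → ∀ l1, ∀ (v : V) (l2 : List V),
      p = l1 ++ v :: l2 →
      c (splice p (R v) v) = cmin + (((l1 ++ [v]).zip (l1 ++ [v]).tail).map φ).sum := by
    intro p hp l1
    induction l1 using List.reverseRecOn with
    | nil =>
      intro v l2 hpe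
      have hv : v = s := by
        have := hp.1
        rw [hpe] at this
        simpa using this
      subst hv
      have : splice p (R v) v = R v := splice_head_left hp.1 hRs.1.1
      rw [this]
      simp [hcmin]
    | append_singleton l1 u ih =>
      intro v l2 hpe
      have hpe' : p = l1 ++ u :: (v :: l2) := by simp [hpe]
      have h1 := ih u (v :: l2) hpe'
      have h2 := key_arc u v l1 l2 p hpe' hp
      have husv : usable (u, v) := ⟨p, hp, by rw [hpe']; exact mem_zip_tail l1 l2⟩
      have hφuv : φ (u, v) = c (arcPath u v) - c (R u) := by rw [hφ]; simp [husv]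
      have hassoc : (l1 ++ [u]) ++ [v] = l1 ++ [u, v] := by simp
      rw [h2.2.1, h1, hassoc, zip_tail_snoc, List.map_append, List.sum_append]
      simp only [List.map_cons, List.map_nil, List.sum_cons, List.sum_nil, hφuv]
      ring
  -- the weight function
  refine ⟨Sum.elim (fun v => if v = s then cmin else 0) φ, ?_, ?_⟩
  · rintro (v | a)
    · have h1 := hc01 (R s) hRs.1
      by_cases hv : v = s <;> simp [hv, hcmin] <;> constructor <;> linarith [h1.1, h1.2]
    · simp only [Sum.elim_inr]
      by_cases ha : usable a
      · obtain ⟨p, hp, hmem⟩ := ha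
        obtain ⟨l1, l2, hpe⟩ := of_mem_zip_tail hmem
        have hk := key_arc a.1 a.2 l1 l2 p hpe hp
        have hu_mem : a.1 ∈ p := by rw [hpe]; simp
        have hTu := hR a.1 ⟨p, hp, hu_mem⟩
        have h1 := hc01 _ hk.1
        have h2 := hc01 _ hTu.1
        have hφa : φ a = c (arcPath a.1 a.2) - c (R a.1) := by
          rw [hφ]; exact if_pos (⟨p, hp, hmem⟩ : usable a)
        rw [hφa]
        constructor <;> linarith [hk.2.2, h1.2, h2.1]
      · simp [hφ, ha]
  · intro p hp
    -- p = dropLast ++ [t]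
    have hne : p ≠ [] := by rintro rfl; simp [IsPathOn] at hp
    have hlast : p.getLast hne = t := by
      have := hp.2.1
      rw [List.getLast?_eq_getLast hne, Option.some.injEq] at this
      exact this
    have hsplit : p = p.dropLast ++ t :: [] := by
      conv_lhs => rw [← List.dropLast_append_getLast hne]
      rw [hlast]
    have htp : t ∈ p := mem_last_path hp
    have hTt := hR t ⟨p, hp, htp⟩
    have htdl : t ∉ p.dropLast := by
      intro h
      have hnp := hp.2.2.1
      rw [hsplit] at hnp
      exact (List.disjoint_of_nodup_append hnp) h (by simp)
    obtain ⟨ct, dt, hRte, htct⟩ := decomp hTt.1.2.2.1 hTt.2.1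
    have hdt_nil : dt = [] := by
      have hlast' := hTt.1.2.1
      rw [hRte, List.getLast?_append_of_ne_nil _ (by simp)] at hlast'
      cases dt with
      | nil => rfl
      | cons x xs =>
        exfalso
        rw [List.getLast?_cons_cons] at hlast'
        have hne2 : (x :: xs) ≠ ([] : List V) := by simp
        rw [List.getLast?_eq_getLast hne2, Option.some.injEq] at hlast'
        have htmem : t ∈ x :: xs := hlast' ▸ List.getLast_mem hne2
        have hnd := hTt.1.2.2.1
        rw [hRte] at hnd
        have hnd2 := List.Nodup.of_append_right hnd
        exact (List.nodup_cons.1 hnd2).1 htmem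
    have hteleP := tele p hp p.dropLast t [] hsplit
    have h1 : p.takeWhile (· ≠ t) = p.dropLast := by
      conv_lhs => rw [hsplit]
      exact (tw_dw t _ [] htdl).1
    have h2 : (R t).dropWhile (· ≠ t) = [t] := by
      rw [hRte, hdt_nil]
      exact (tw_dw t ct [] htct).2
    have hsplice_p : splice p (R t) t = p := by
      rw [splice, h1, h2, ← hsplit]
    rw [hsplice_p, ← hsplit] at hteleP
    have hdisj : Disjoint (p.toFinset.image Sum.inl) ((p.zip p.tail).toFinset.image Sum.inr) := by
      simp only [Finset.disjoint_left, Finset.mem_image]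
      rintro a ⟨x, _, rfl⟩ ⟨y, _, h⟩
      simp at h
    have hsum : ∑ e ∈ pathElems p, (Sum.elim (fun v => if v = s then cmin else 0) φ) e
        = cmin + ((p.zip p.tail).map φ).sum := by
      rw [pathElems, Finset.sum_union hdisj,
        Finset.sum_image (fun x _ y _ h => Sum.inl.inj h),
        Finset.sum_image (fun x _ y _ h => Sum.inr.inj h)]
      simp only [Sum.elim_inl, Sum.elim_inr]
      congr 1
      · rw [Finset.sum_ite_eq' p.toFinset s (fun _ => cmin)]
        rw [if_pos (List.mem_toFinset.2 (mem_head_path hp))]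
      · exact List.sum_toFinset φ (nodup_zip_tail hp.2.2.1)
    rw [hsum]
    have hcp : c p = 1 - π p := rfl
    linarith [hteleP, hcp.symm.le]
end

section
/- Let (E, 𝒫) be a set system with the weak MFMC property (the polyhedron Y_𝒫 := {y ∈ ℝ_+^E : ∑_{e∈P} y_e ≥ 1 ∀P ∈ 𝒫} is integral), let μ ∈ (0,1]^E be strictly positive, and let π_P := 1 − ∑_{e∈P} μ_e. Suppose ρ ∈ [0,1]^E satisfies ∑_{e∈P} ρ_e ≥ π_P for all P ∈ 𝒫, and for every e ∈ E with ρ_e > 0 there is P ∈ 𝒫 with e ∈ P and ∑_{f∈P} ρ_f = π_P. Then there exists a feasible decomposition x of ρ for (E, 𝒫, π) with x_∅ > 0. -/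
set_option linter.unusedSectionVars false

open Finset Filter Topology

section Helpers

variable {V : Type*} [AddCommGroup V] [Module ℝ V]

theorem symm_of_extremePoint {A : Set V} {x : V}
    (hx : x ∈ A.extremePoints ℝ) {δ : V} (h1 : x + δ ∈ A) (h2 : x - δ ∈ A) : δ = 0 := by
  have hseg : x ∈ openSegment ℝ (x + δ) (x - δ) := by
    refine ⟨1/2, 1/2, by norm_num, by norm_num, by norm_num, ?_⟩
    module
  have h := hx.2 h1 h2 hseg
  exact add_eq_left.mp h

theorem extremePoint_of_symm {A : Set V} (hA : Convex ℝ A) {x : V} (hx : x ∈ A)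
    (h : ∀ δ : V, x + δ ∈ A → x - δ ∈ A → δ = 0) : x ∈ A.extremePoints ℝ := by
  refine ⟨hx, fun x₁ hx₁ x₂ hx₂ hseg => ?_⟩
  obtain ⟨a, b, ha, hb, hab, hsum⟩ := hseg
  set c := min a b with hc
  have hc0 : 0 < c := lt_min ha hb
  have hca : c ≤ a := min_le_left _ _
  have hcb : c ≤ b := min_le_right _ _
  have kp : x + c • (x₂ - x₁) ∈ A := by
    have : x + c • (x₂ - x₁) = (a - c) • x₁ + (b + c) • x₂ := by
      rw [← hsum]; module
    rw [this]
    exact hA hx₁ hx₂ (by linarith) (by linarith) (by linarith)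
  have km : x - c • (x₂ - x₁) ∈ A := by
    have : x - c • (x₂ - x₁) = (a + c) • x₁ + (b - c) • x₂ := by
      rw [← hsum]; module
    rw [this]
    exact hA hx₁ hx₂ (by linarith) (by linarith) (by linarith)
  have hd := h _ kp km
  rcases smul_eq_zero.1 hd with hc' | hd'
  · exact absurd hc' (ne_of_gt hc0)
  · have hx12 : x₁ = x₂ := by
      have : x₂ - x₁ = 0 := hd'
      have := sub_eq_zero.1 this
      exact this.symm
    subst hx12
    have hxx : x = x₁ := by
      rw [← hsum]
      rw [← add_smul, hab, one_smul]
    exact hxx.symm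

end Helpers

section QSet

variable {E : Type*} [Fintype E] [DecidableEq E]

/-- the truncated polytope -/
def QSet (Ps : Finset (Finset E)) : Set (E → ℝ) :=
  coverPolyhedron Ps ∩ {y | ∀ e, y e ≤ 1}

theorem coverPolyhedron_convex (Ps : Finset (Finset E)) : Convex ℝ (coverPolyhedron Ps) := by
  intro u hu v hv a b ha hb hab
  refine ⟨fun e => ?_, fun P hP => ?_⟩
  · have := hu.1 e; have := hv.1 e
    simp only [Pi.add_apply, Pi.smul_apply, smul_eq_mul]
    nlinarith
  · have h1 := hu.2 P hP
    have h2 := hv.2 P hP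
    simp only [Pi.add_apply, Pi.smul_apply, smul_eq_mul]
    rw [Finset.sum_add_distrib, ← Finset.mul_sum, ← Finset.mul_sum]
    nlinarith
theorem QSet_convex (Ps : Finset (Finset E)) : Convex ℝ (QSet Ps) := by
  apply (coverPolyhedron_convex Ps).inter
  intro u hu v hv a b ha hb hab
  intro e
  have := hu e; have := hv e
  simp only [Pi.add_apply, Pi.smul_apply, smul_eq_mul]
  nlinarith

theorem QSet_isCompact (Ps : Finset (Finset E)) : IsCompact (QSet Ps) := by
  have hsub : QSet Ps ⊆ Set.pi Set.univ (fun _ : E => Set.Icc (0:ℝ) 1) := by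
    rintro y ⟨⟨h0, _⟩, h1⟩ e _
    exact ⟨h0 e, h1 e⟩
  have hclosed : IsClosed (QSet Ps) := by
    have h1 : IsClosed {y : E → ℝ | ∀ e, 0 ≤ y e} := by
      have : {y : E → ℝ | ∀ e, 0 ≤ y e} = ⋂ e, {y : E → ℝ | 0 ≤ y e} := by
        ext y; simp
      rw [this]
      exact isClosed_iInter fun e => isClosed_le continuous_const (continuous_apply e)
    have h2 : IsClosed {y : E → ℝ | ∀ P ∈ Ps, 1 ≤ ∑ e ∈ P, y e} := by
      have : {y : E → ℝ | ∀ P ∈ Ps, 1 ≤ ∑ e ∈ P, y e}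
          = ⋂ P ∈ (Ps : Set (Finset E)), {y : E → ℝ | 1 ≤ ∑ e ∈ P, y e} := by
        ext y; simp
      rw [this]
      refine isClosed_biInter fun P _ => isClosed_le continuous_const ?_
      exact continuous_finset_sum _ fun e _ => continuous_apply e
    have h3 : IsClosed {y : E → ℝ | ∀ e, y e ≤ 1} := by
      have : {y : E → ℝ | ∀ e, y e ≤ 1} = ⋂ e, {y : E → ℝ | y e ≤ 1} := by
        ext y; simp
      rw [this]
      exact isClosed_iInter fun e => isClosed_le (continuous_apply e) continuous_const
    exact ((h1.inter h2).inter h3)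
  exact (isCompact_univ_pi fun _ => isCompact_Icc).of_isClosed_subset hclosed hsub

end QSet
section Rank

variable {E : Type*} [Fintype E] [DecidableEq E]

/-- helper: an affine function positive at 0 is eventually positive near 0 -/
theorem eventually_pos_affine (c d : ℝ) (hc : 0 < c) :
    ∀ᶠ t in 𝓝 (0:ℝ), 0 < c + t * d := by
  have hcont : Continuous (fun t : ℝ => c + t * d) := by continuity
  have htend : Filter.Tendsto (fun t : ℝ => c + t * d) (𝓝 0) (𝓝 c) := by
    have := hcont.tendsto 0
    simpa using this
  exact htend.eventually (lt_mem_nhds hc)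

/-- At an extreme point of `QSet`, any perturbation vanishing on the
coordinates at 0 and 1 and in the kernel of all tight covering constraints is 0. -/
theorem rank_lemma (Ps : Finset (Finset E)) {z : E → ℝ}
    (hz : z ∈ Set.extremePoints ℝ (QSet Ps)) {δ : E → ℝ}
    (h0 : ∀ e, z e = 0 → δ e = 0) (h1 : ∀ e, z e = 1 → δ e = 0)
    (ht : ∀ P ∈ Ps, (∑ e ∈ P, z e) = 1 → (∑ e ∈ P, δ e) = 0) : δ = 0 := by
  obtain ⟨⟨hznn, hzcov⟩, hzub⟩ := hz.1
  -- eventually membership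
  have hcoord : ∀ e : E, ∀ᶠ t in 𝓝 (0:ℝ),
      (0 ≤ z e + t * δ e ∧ z e + t * δ e ≤ 1) ∧
      (0 ≤ z e - t * δ e ∧ z e - t * δ e ≤ 1) := by
    intro e
    by_cases he0 : z e = 0
    · have : δ e = 0 := h0 e he0
      filter_upwards with t
      simp [he0, this]
    by_cases he1 : z e = 1
    · have : δ e = 0 := h1 e he1
      filter_upwards with t
      simp [he1, this]
    · have hlt : 0 < z e := lt_of_le_of_ne (hznn e) (Ne.symm he0)
      have hlt1 : z e < 1 := lt_of_le_of_ne (hzub e) he1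
      have e1 := eventually_pos_affine (z e) (δ e) hlt
      have e2 := eventually_pos_affine (1 - z e) (-(δ e)) (by linarith)
      have e3 := eventually_pos_affine (z e) (-(δ e)) hlt
      have e4 := eventually_pos_affine (1 - z e) (δ e) (by linarith)
      filter_upwards [e1, e2, e3, e4] with t k1 k2 k3 k4
      constructor
      · constructor <;> nlinarith
      · constructor <;> nlinarith
  have hpath : ∀ P ∈ Ps, ∀ᶠ t in 𝓝 (0:ℝ),
      1 ≤ ∑ e ∈ P, (z e + t * δ e) ∧ 1 ≤ ∑ e ∈ P, (z e - t * δ e) := by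
    intro P hP
    by_cases htight : (∑ e ∈ P, z e) = 1
    · have hd := ht P hP htight
      filter_upwards with t
      rw [Finset.sum_add_distrib, ← Finset.mul_sum, hd, htight]
      rw [Finset.sum_sub_distrib, ← Finset.mul_sum, hd, htight]
      norm_num
    · have hslack : 1 < ∑ e ∈ P, z e := lt_of_le_of_ne (hzcov P hP) (Ne.symm htight)
      have e1 := eventually_pos_affine ((∑ e ∈ P, z e) - 1) (∑ e ∈ P, δ e) (by linarith)
      have e2 := eventually_pos_affine ((∑ e ∈ P, z e) - 1) (-(∑ e ∈ P, δ e)) (by linarith)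
      filter_upwards [e1, e2] with t k1 k2
      rw [Finset.sum_add_distrib, ← Finset.mul_sum]
      rw [Finset.sum_sub_distrib, ← Finset.mul_sum]
      constructor <;> nlinarith
  have hall : ∀ᶠ t in 𝓝 (0:ℝ), (z + t • δ) ∈ QSet Ps ∧ (z - t • δ) ∈ QSet Ps := by
    have hc := (Filter.eventually_all (ι := E)).2 hcoord
    have hp : ∀ᶠ t in 𝓝 (0:ℝ), ∀ P ∈ Ps, 1 ≤ ∑ e ∈ P, (z e + t * δ e) ∧
        1 ≤ ∑ e ∈ P, (z e - t * δ e) := by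
      rw [Filter.eventually_all_finset]
      exact hpath
    filter_upwards [hc, hp] with t hct hpt
    constructor
    · exact ⟨⟨fun e => (hct e).1.1, fun P hP => (hpt P hP).1⟩, fun e => (hct e).1.2⟩
    · exact ⟨⟨fun e => (hct e).2.1, fun P hP => (hpt P hP).2⟩, fun e => (hct e).2.2⟩
  have hall' : ∀ᶠ t in 𝓝[>] (0:ℝ), (z + t • δ) ∈ QSet Ps ∧ (z - t • δ) ∈ QSet Ps :=
    hall.filter_mono nhdsWithin_le_nhds
  obtain ⟨t, htm, ht0⟩ := (hall'.and eventually_mem_nhdsWithin).exists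
  have hz0 : t • δ = 0 := symm_of_extremePoint hz htm.1 htm.2
  rcases smul_eq_zero.1 hz0 with h | h
  · exact absurd h (ne_of_gt ht0)
  · exact h

end Rank
section H2

variable {E : Type*} [Fintype E] [DecidableEq E]

set_option maxHeartbeats 1000000 in
theorem extremePoints_QSet_zero_one (Ps : Finset (Finset E))
    (hMFMC : ∀ y ∈ Set.extremePoints ℝ (coverPolyhedron Ps), ∀ e, ∃ n : ℤ, y e = n)
    {z : E → ℝ} (hz : z ∈ Set.extremePoints ℝ (QSet Ps)) :
    ∀ e, z e = 0 ∨ z e = 1 := by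
  classical
  by_contra hcon
  push_neg at hcon
  obtain ⟨e₀, he0, he1⟩ := hcon
  obtain ⟨⟨hznn, hzcov⟩, hzub⟩ := hz.1
  set T : Set E := {e | z e = 1 ∧ ∀ P ∈ Ps, e ∈ P → 1 < ∑ f ∈ P, z f} with hT
  set W : Set (E → ℝ) := {w | (∀ e, 0 ≤ w e) ∧ (∀ P ∈ Ps, 1 ≤ ∑ e ∈ P, w e) ∧
      (∀ e, e ∉ T → w e = z e) ∧ (∀ e, w e ≤ 2)} with hWdef
  have hzW : z ∈ W := ⟨hznn, hzcov, fun e _ => rfl, fun e => le_trans (hzub e) one_le_two⟩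
  have hWconv : Convex ℝ W := by
    intro u hu v hv a b ha hb hab
    obtain ⟨hu1, hu2, hu3, hu4⟩ := hu
    obtain ⟨hv1, hv2, hv3, hv4⟩ := hv
    refine ⟨fun e => ?_, fun P hP => ?_, fun e he => ?_, fun e => ?_⟩
    · simp only [Pi.add_apply, Pi.smul_apply, smul_eq_mul]
      nlinarith [hu1 e, hv1 e]
    · simp only [Pi.add_apply, Pi.smul_apply, smul_eq_mul]
      rw [Finset.sum_add_distrib, ← Finset.mul_sum, ← Finset.mul_sum]
      nlinarith [hu2 P hP, hv2 P hP]
    · simp only [Pi.add_apply, Pi.smul_apply, smul_eq_mul]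
      rw [hu3 e he, hv3 e he]
      linear_combination (z e) * hab
    · simp only [Pi.add_apply, Pi.smul_apply, smul_eq_mul]
      nlinarith [hu4 e, hv4 e, hu1 e, hv1 e]
  have hWcomp : IsCompact W := by
    have hsub : W ⊆ Set.pi Set.univ (fun _ : E => Set.Icc (0:ℝ) 2) := by
      rintro w ⟨h1, _, _, h4⟩ e _
      exact ⟨h1 e, h4 e⟩
    have hclosed : IsClosed W := by
      have c1 : IsClosed {w : E → ℝ | ∀ e, 0 ≤ w e} := by
        have : {w : E → ℝ | ∀ e, 0 ≤ w e} = ⋂ e, {w : E → ℝ | 0 ≤ w e} := by ext; simp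
        rw [this]
        exact isClosed_iInter fun e => isClosed_le continuous_const (continuous_apply e)
      have c2 : IsClosed {w : E → ℝ | ∀ P ∈ Ps, 1 ≤ ∑ e ∈ P, w e} := by
        have : {w : E → ℝ | ∀ P ∈ Ps, 1 ≤ ∑ e ∈ P, w e}
            = ⋂ P ∈ (Ps : Set (Finset E)), {w : E → ℝ | 1 ≤ ∑ e ∈ P, w e} := by ext; simp
        rw [this]
        exact isClosed_biInter fun P _ =>
          isClosed_le continuous_const (continuous_finset_sum _ fun e _ => continuous_apply e)
      have c3 : IsClosed {w : E → ℝ | ∀ e, e ∉ T → w e = z e} := by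
        have : {w : E → ℝ | ∀ e, e ∉ T → w e = z e}
            = ⋂ e ∈ {e : E | e ∉ T}, {w : E → ℝ | w e = z e} := by ext; simp
        rw [this]
        exact isClosed_biInter fun e _ => isClosed_eq (continuous_apply e) continuous_const
      have c4 : IsClosed {w : E → ℝ | ∀ e, w e ≤ 2} := by
        have : {w : E → ℝ | ∀ e, w e ≤ 2} = ⋂ e, {w : E → ℝ | w e ≤ 2} := by ext; simp
        rw [this]
        exact isClosed_iInter fun e => isClosed_le (continuous_apply e) continuous_const
      have : W = {w : E → ℝ | ∀ e, 0 ≤ w e} ∩ ({w | ∀ P ∈ Ps, 1 ≤ ∑ e ∈ P, w e} ∩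
          ({w | ∀ e, e ∉ T → w e = z e} ∩ {w | ∀ e, w e ≤ 2})) := by
        ext w
        simp only [hWdef, Set.mem_setOf_eq, Set.mem_inter_iff]
        try tauto
      rw [this]
      exact c1.inter (c2.inter (c3.inter c4))
    exact (isCompact_univ_pi fun _ => isCompact_Icc).of_isClosed_subset hclosed hsub
  have hfcont : Continuous (fun w : E → ℝ => ∑ e, w e) :=
    continuous_finset_sum _ fun e _ => continuous_apply e
  obtain ⟨w₀, hw₀W, hw₀min⟩ := hWcomp.exists_isMinOn ⟨z, hzW⟩ hfcont.continuousOn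
  rw [isMinOn_iff] at hw₀min
  set m : ℝ := ∑ e, w₀ e with hm
  set A : Set (E → ℝ) := W ∩ {w | ∑ e, w e = m} with hA
  have hAconv : Convex ℝ A := by
    apply hWconv.inter
    intro u hu v hv a b ha hb hab
    simp only [Set.mem_setOf_eq, Pi.add_apply, Pi.smul_apply, smul_eq_mul] at *
    rw [Finset.sum_add_distrib, ← Finset.mul_sum, ← Finset.mul_sum, hu, hv]
    linear_combination m * hab
  have hAcomp : IsCompact A :=
    hWcomp.inter_right (isClosed_eq hfcont continuous_const)
  have hAne : A.Nonempty := ⟨w₀, hw₀W, rfl⟩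
  obtain ⟨wst, hwst⟩ := hAcomp.extremePoints_nonempty hAne
  obtain ⟨hwstW, hwstm⟩ := hwst.1
  obtain ⟨hwnn, hwcov, hwoff, hwub⟩ := hwstW
  -- no coordinate of T sits at the artificial bound 2
  have h2bound : ∀ e, e ∈ T → wst e < 2 := by
    intro e heT
    rcases lt_or_eq_of_le (hwub e) with h | h
    · exact h
    exfalso
    set w' : E → ℝ := fun f => wst f + (if f = e then (-1 : ℝ) else 0) with hw'
    have hsum : ∀ s : Finset E,
        ∑ f ∈ s, w' f = (∑ f ∈ s, wst f) + (if e ∈ s then (-1:ℝ) else 0) := by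
      intro s
      rw [hw']
      rw [Finset.sum_add_distrib, Finset.sum_ite_eq' s e (fun _ => (-1:ℝ))]
    have hw'W : w' ∈ W := by
      refine ⟨fun f => ?_, fun P hP => ?_, fun f hf => ?_, fun f => ?_⟩
      · by_cases hf : f = e
        · subst hf
          simp only [hw', eq_self_iff_true, if_true]
          linarith
        · simp only [hw', if_neg hf]; linarith [hwnn f]
      · rw [hsum P]
        by_cases heP : e ∈ P
        · have h2le : wst e ≤ ∑ f ∈ P, wst f :=
            Finset.single_le_sum (fun f _ => hwnn f) heP
          rw [if_pos heP]
          linarith [h.symm ▸ h2le]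
        · rw [if_neg heP]
          linarith [hwcov P hP]
      · have hfe : f ≠ e := fun hfe => hf (hfe ▸ heT)
        simp only [hw', if_neg hfe, add_zero]
        exact hwoff f hf
      · by_cases hf : f = e
        · subst hf
          simp only [hw', eq_self_iff_true, if_true]
          linarith
        · simp only [hw', if_neg hf, add_zero]; exact hwub f
    have hlt : ∑ f, w' f = m - 1 := by
      rw [hsum Finset.univ, if_pos (Finset.mem_univ e), hwstm]
      ring
    have := hw₀min w' hw'W
    rw [hlt] at this
    linarith
  -- vanishing of symmetric perturbations off T
  have hsupp : ∀ δ : E → ℝ, wst + δ ∈ coverPolyhedron Ps → wst - δ ∈ coverPolyhedron Ps →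
      ∀ e, e ∉ T → δ e = 0 := by
    intro δ hp hmm
    have s1 : ∀ e, z e = 0 → δ e = 0 := by
      intro e hze
      have heT : e ∉ T := by
        intro hT'
        have h1' := hT'.1
        rw [hze] at h1'
        exact zero_ne_one h1'
      have hwe : wst e = 0 := (hwoff e heT).trans hze
      have h1 := hp.1 e; have h2 := hmm.1 e
      simp only [Pi.add_apply, Pi.sub_apply, hwe] at h1 h2
      linarith
    have s2 : ∀ P ∈ Ps, (∑ f ∈ P, z f) = 1 → (∑ f ∈ P, δ f) = 0 := by
      intro P hP htight
      have hPT : ∀ f ∈ P, f ∉ T := by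
        intro f hf hfT
        exact absurd htight (ne_of_gt (hfT.2 P hP hf))
      have hws : ∑ f ∈ P, wst f = 1 := by
        rw [Finset.sum_congr rfl fun f hf => hwoff f (hPT f hf)]
        exact htight
      have h1 := hp.2 P hP; have h2 := hmm.2 P hP
      simp only [Pi.add_apply, Pi.sub_apply, Finset.sum_add_distrib,
        Finset.sum_sub_distrib, hws] at h1 h2
      linarith
    have s3 : ∀ e, z e = 1 → e ∉ T → δ e = 0 := by
      intro e hze heT
      have hnt : ¬ ∀ P ∈ Ps, e ∈ P → 1 < ∑ f ∈ P, z f := by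
        intro hall; exact heT ⟨hze, hall⟩
      push_neg at hnt
      obtain ⟨P, hP, heP, hle⟩ := hnt
      have htight : (∑ f ∈ P, z f) = 1 := le_antisymm hle (hzcov P hP)
      have herase : ∑ f ∈ P.erase e, z f = 0 := by
        have hadd := Finset.add_sum_erase P z heP
        rw [htight, hze] at hadd
        linarith
      have hz0 : ∀ f ∈ P.erase e, z f = 0 :=
        (Finset.sum_eq_zero_iff_of_nonneg fun f _ => hznn f).1 herase
      have hδ0 : ∀ f ∈ P.erase e, δ f = 0 := fun f hf => s1 f (hz0 f hf)
      have hsumδ := s2 P hP htight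
      have hadd : δ e + ∑ f ∈ P.erase e, δ f = ∑ f ∈ P, δ f := Finset.add_sum_erase P δ heP
      rw [Finset.sum_eq_zero hδ0, hsumδ] at hadd
      linarith
    set δ' : E → ℝ := fun e => if e ∈ T then 0 else δ e with hδ'
    have hδ'0 : δ' = 0 := by
      apply rank_lemma Ps hz
      · intro e hze
        by_cases heT : e ∈ T
        · simp [hδ', heT]
        · simp only [hδ', if_neg heT]
          exact s1 e hze
      · intro e hze
        by_cases heT : e ∈ T
        · simp [hδ', heT]
        · simp only [hδ', if_neg heT]
          exact s3 e hze heT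
      · intro P hP htight
        have hPT : ∀ f ∈ P, f ∉ T := fun f hf hfT =>
          absurd htight (ne_of_gt (hfT.2 P hP hf))
        have hcg : ∑ f ∈ P, δ' f = ∑ f ∈ P, δ f :=
          Finset.sum_congr rfl fun f hf => by simp only [hδ', if_neg (hPT f hf)]
        rw [hcg]
        exact s2 P hP htight
    intro e heT
    have := congrFun hδ'0 e
    simpa only [hδ', if_neg heT, Pi.zero_apply] using this
  -- wst is an extreme point of the cover polyhedron
  have hwext : wst ∈ Set.extremePoints ℝ (coverPolyhedron Ps) := by
    apply extremePoint_of_symm (coverPolyhedron_convex Ps) ⟨hwnn, hwcov⟩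
    intro δ hp hmm
    have hoff := hsupp δ hp hmm
    have hcoord : ∀ e : E, ∀ᶠ t in 𝓝 (0:ℝ),
        wst e + t * δ e ≤ 2 ∧ wst e - t * δ e ≤ 2 := by
      intro e
      by_cases hδe : δ e = 0
      · filter_upwards with t
        simp only [hδe, mul_zero, add_zero, sub_zero]
        exact ⟨hwub e, hwub e⟩
      · have heT : e ∈ T := by
          by_contra h
          exact hδe (hoff e h)
        have hlt := h2bound e heT
        have e1 := eventually_pos_affine (2 - wst e) (-(δ e)) (by linarith)
        have e2 := eventually_pos_affine (2 - wst e) (δ e) (by linarith)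
        filter_upwards [e1, e2] with t k1 k2
        constructor <;> nlinarith
    have hone : ∀ᶠ t in 𝓝 (0:ℝ), t < 1 := by
      have := gt_mem_nhds (zero_lt_one (α := ℝ))
      exact this
    have hsmall : ∀ᶠ t in 𝓝 (0:ℝ),
        (∀ e, wst e + t * δ e ≤ 2 ∧ wst e - t * δ e ≤ 2) ∧ t < 1 :=
      ((Filter.eventually_all).2 hcoord).and hone
    obtain ⟨t, ⟨hbnd, ht1⟩, ht0⟩ :=
      ((hsmall.filter_mono (nhdsWithin_le_nhds (s := Set.Ioi (0:ℝ)))).and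
        eventually_mem_nhdsWithin).exists
    have ht0' : (0:ℝ) < t := ht0
    have hp' : wst + t • δ ∈ coverPolyhedron Ps := by
      have heq : wst + t • δ = (1 - t) • wst + t • (wst + δ) := by module
      rw [heq]
      exact coverPolyhedron_convex Ps ⟨hwnn, hwcov⟩ hp (by linarith) (le_of_lt ht0') (by ring)
    have hm' : wst - t • δ ∈ coverPolyhedron Ps := by
      have heq : wst - t • δ = (1 - t) • wst + t • (wst - δ) := by module
      rw [heq]
      exact coverPolyhedron_convex Ps ⟨hwnn, hwcov⟩ hmm (by linarith) (le_of_lt ht0') (by ring)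
    have hpW : wst + t • δ ∈ W := by
      refine ⟨hp'.1, hp'.2, fun e he => ?_, fun e => ?_⟩
      · simp only [Pi.add_apply, Pi.smul_apply, smul_eq_mul, hoff e he, mul_zero, add_zero]
        exact hwoff e he
      · simpa using (hbnd e).1
    have hmW : wst - t • δ ∈ W := by
      refine ⟨hm'.1, hm'.2, fun e he => ?_, fun e => ?_⟩
      · simp only [Pi.sub_apply, Pi.smul_apply, smul_eq_mul, hoff e he, mul_zero, sub_zero]
        exact hwoff e he
      · simpa using (hbnd e).2
    have hsp : ∑ e, (wst + t • δ) e = m + t * ∑ e, δ e := by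
      simp only [Pi.add_apply, Pi.smul_apply, smul_eq_mul]
      rw [Finset.sum_add_distrib, ← Finset.mul_sum, hwstm]
    have hsm : ∑ e, (wst - t • δ) e = m - t * ∑ e, δ e := by
      simp only [Pi.sub_apply, Pi.smul_apply, smul_eq_mul]
      rw [Finset.sum_sub_distrib, ← Finset.mul_sum, hwstm]
    have hge1 := hw₀min _ hpW
    have hge2 := hw₀min _ hmW
    rw [hsp] at hge1
    rw [hsm] at hge2
    have hδsum : t * (∑ e, δ e) = 0 := by linarith
    have hpA : wst + t • δ ∈ A := ⟨hpW, by simp only [Set.mem_setOf_eq]; rw [hsp, hδsum]; ring⟩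
    have hmA : wst - t • δ ∈ A := ⟨hmW, by simp only [Set.mem_setOf_eq]; rw [hsm, hδsum]; ring⟩
    have hz0 : t • δ = 0 := symm_of_extremePoint hwst hpA hmA
    rcases smul_eq_zero.1 hz0 with h | h
    · exact absurd h (ne_of_gt ht0')
    · exact h
  -- contradiction with integrality
  obtain ⟨n, hn⟩ := hMFMC wst hwext e₀
  have he₀T : e₀ ∉ T := fun h => he1 h.1
  have hwz : wst e₀ = z e₀ := hwoff e₀ he₀T
  rw [hwz] at hn
  have h0' : (0:ℝ) < (n:ℝ) := by
    rw [← hn]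
    exact lt_of_le_of_ne (hznn e₀) (Ne.symm he0)
  have h1' : (n:ℝ) < 1 := by
    rw [← hn]
    exact lt_of_le_of_ne (hzub e₀) he1
  have hn0 : (0:ℤ) < n := by exact_mod_cast h0'
  have hn1 : n < (1:ℤ) := by exact_mod_cast h1'
  omega

end H2
section KM

variable {E : Type*} [Fintype E] [DecidableEq E]

theorem QSet_subset_convexHull (Ps : Finset (Finset E))
    (hMFMC : ∀ y ∈ Set.extremePoints ℝ (coverPolyhedron Ps), ∀ e, ∃ n : ℤ, y e = n) :
    QSet Ps ⊆ convexHull ℝ {v : E → ℝ | v ∈ QSet Ps ∧ ∀ e, v e = 0 ∨ v e = 1} := by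
  classical
  set S01 : Set (E → ℝ) := {v | v ∈ QSet Ps ∧ ∀ e, v e = 0 ∨ v e = 1} with hS01
  have hfin : S01.Finite := by
    have hsub : S01 ⊆ Set.range (fun A : Finset E => (fun e => if e ∈ A then (1:ℝ) else 0)) := by
      rintro v ⟨_, hv01⟩
      refine ⟨Finset.univ.filter (fun e => v e = 1), ?_⟩
      funext e
      by_cases h : v e = 1
      · simp [Finset.mem_filter, h]
      · rcases hv01 e with h0 | h1
        · simp [Finset.mem_filter, h, h0]
        · exact absurd h1 h
    exact (Set.finite_range _).subset hsub
  have hKM := closure_convexHull_extremePoints (QSet_isCompact Ps) (QSet_convex Ps)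
  have hsub : Set.extremePoints ℝ (QSet Ps) ⊆ S01 := fun z hzz =>
    ⟨hzz.1, extremePoints_QSet_zero_one Ps hMFMC hzz⟩
  calc QSet Ps = closure (convexHull ℝ (Set.extremePoints ℝ (QSet Ps))) := hKM.symm
    _ ⊆ closure (convexHull ℝ S01) := closure_mono (convexHull_mono hsub)
    _ = convexHull ℝ S01 := (hfin.isClosed_convexHull (𝕜 := ℝ)).closure_eq

end KM

section Measure

open MeasureTheory

variable {E : Type*} [Fintype E] [DecidableEq E]

/-- set of thresholds `u` realizing the prefix set `S` of the cover `C` -/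
def segSet (q : E → ℝ) (C S : Finset E) : Set ℝ :=
  {u | u ∈ Set.Ico (0:ℝ) 1 ∧ C.filter (fun e => q e ≤ u) = S}

noncomputable def segLen (q : E → ℝ) (C S : Finset E) : ℝ :=
  (volume (segSet q C S)).toReal

theorem segSet_subset (q : E → ℝ) (C S : Finset E) : segSet q C S ⊆ Set.Ico (0:ℝ) 1 :=
  fun _ h => h.1

theorem volume_segSet_ne_top (q : E → ℝ) (C S : Finset E) : volume (segSet q C S) ≠ ⊤ := by
  refine ne_top_of_le_ne_top ?_ (measure_mono (segSet_subset q C S))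
  rw [Real.volume_Ico]
  exact ENNReal.ofReal_ne_top

theorem segLen_nonneg (q : E → ℝ) (C S : Finset E) : 0 ≤ segLen q C S :=
  ENNReal.toReal_nonneg

theorem measurableSet_segSet (q : E → ℝ) (C S : Finset E) :
    MeasurableSet (segSet q C S) := by
  classical
  have hrw : segSet q C S =
      Set.Ico (0:ℝ) 1 ∩ ⋂ e : E, {u : ℝ | (e ∈ C ∧ q e ≤ u) ↔ e ∈ S} := by
    ext u
    simp only [segSet, Set.mem_inter_iff, Set.mem_iInter, Set.mem_setOf_eq]
    constructor
    · rintro ⟨h1, h2⟩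
      refine ⟨h1, fun e => ?_⟩
      rw [← h2]
      simp [Finset.mem_filter]
    · rintro ⟨h1, h2⟩
      refine ⟨h1, ?_⟩
      ext e
      rw [Finset.mem_filter]
      exact h2 e
  rw [hrw]
  refine measurableSet_Ico.inter (MeasurableSet.iInter fun e => ?_)
  by_cases hC : e ∈ C <;> by_cases hS : e ∈ S
  · have : {u : ℝ | (e ∈ C ∧ q e ≤ u) ↔ e ∈ S} = Set.Ici (q e) := by
      ext u; simp [hC, hS]
    rw [this]; exact measurableSet_Ici
  · have : {u : ℝ | (e ∈ C ∧ q e ≤ u) ↔ e ∈ S} = Set.Iio (q e) := by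
      ext u; simp [hC, hS, not_le]
    rw [this]; exact measurableSet_Iio
  · have : {u : ℝ | (e ∈ C ∧ q e ≤ u) ↔ e ∈ S} = ∅ := by
      ext u; simp [hC, hS]
    rw [this]; exact MeasurableSet.empty
  · have : {u : ℝ | (e ∈ C ∧ q e ≤ u) ↔ e ∈ S} = Set.univ := by
      ext u; simp [hC, hS]
    rw [this]; exact MeasurableSet.univ

theorem sum_volume_segSet (q : E → ℝ) (C : Finset E) (t : Finset (Finset E)) :
    ∑ S ∈ t, volume (segSet q C S) = volume (⋃ S ∈ t, segSet q C S) := by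
  refine (measure_biUnion_finset ?_ fun S _ => measurableSet_segSet q C S).symm
  intro S _ S' _ hne
  rw [Function.onFun, Set.disjoint_left]
  rintro u ⟨_, h1⟩ ⟨_, h2⟩
  exact hne (h1.symm.trans h2)

theorem sum_segLen_filter (q : E → ℝ) (C : Finset E) (t : Finset (Finset E)) :
    ∑ S ∈ t, segLen q C S = (volume (⋃ S ∈ t, segSet q C S)).toReal := by
  rw [← sum_volume_segSet]
  exact (ENNReal.toReal_sum fun S _ => volume_segSet_ne_top q C S).symm

theorem sum_segLen_univ (q : E → ℝ) (C : Finset E) :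
    ∑ S : Finset E, segLen q C S = 1 := by
  rw [sum_segLen_filter]
  have : (⋃ S ∈ (Finset.univ : Finset (Finset E)), segSet q C S) = Set.Ico (0:ℝ) 1 := by
    apply Set.Subset.antisymm
    · refine Set.iUnion₂_subset fun S _ => segSet_subset q C S
    · intro u hu
      exact Set.mem_biUnion (Finset.mem_univ (C.filter (fun e => q e ≤ u))) ⟨hu, rfl⟩
  rw [this, Real.volume_Ico]
  norm_num

theorem sum_segLen_mem (q : E → ℝ) (C : Finset E) (e : E)
    (hq0 : 0 ≤ q e) (hq1 : q e ≤ 1) :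
    ∑ S ∈ Finset.univ.filter (fun S : Finset E => e ∈ S), segLen q C S
      = if e ∈ C then 1 - q e else 0 := by
  classical
  rw [sum_segLen_filter]
  have huni : (⋃ S ∈ Finset.univ.filter (fun S : Finset E => e ∈ S), segSet q C S)
      = {u : ℝ | u ∈ Set.Ico (0:ℝ) 1 ∧ e ∈ C ∧ q e ≤ u} := by
    apply Set.Subset.antisymm
    · refine Set.iUnion₂_subset fun S hS => ?_
      rintro u ⟨hu, hf⟩
      have heS : e ∈ S := (Finset.mem_filter.1 hS).2
      rw [← hf] at heS
      rw [Finset.mem_filter] at heS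
      exact ⟨hu, heS⟩
    · rintro u ⟨hu, heC, hqu⟩
      have hSmem : (C.filter fun f => q f ≤ u) ∈
          Finset.univ.filter (fun S : Finset E => e ∈ S) :=
        Finset.mem_filter.2 ⟨Finset.mem_univ _, Finset.mem_filter.2 ⟨heC, hqu⟩⟩
      exact Set.mem_biUnion hSmem ⟨hu, rfl⟩
  rw [huni]
  by_cases heC : e ∈ C
  · have : {u : ℝ | u ∈ Set.Ico (0:ℝ) 1 ∧ e ∈ C ∧ q e ≤ u} = Set.Ico (q e) 1 := by
      ext u
      simp only [Set.mem_setOf_eq, Set.mem_Ico, heC, true_and]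
      constructor
      · rintro ⟨⟨_, h2⟩, h3⟩; exact ⟨h3, h2⟩
      · rintro ⟨h1, h2⟩; exact ⟨⟨le_trans hq0 h1, h2⟩, h1⟩
    rw [this, Real.volume_Ico, if_pos heC, ENNReal.toReal_ofReal (by linarith)]
  · have : {u : ℝ | u ∈ Set.Ico (0:ℝ) 1 ∧ e ∈ C ∧ q e ≤ u} = ∅ := by
      ext u; simp [heC]
    rw [this, if_neg heC]
    simp

theorem sum_segLen_hit (q : E → ℝ) (C : Finset E) (P : Finset E) (e : E)
    (heC : e ∈ C) (heP : e ∈ P) (hq0 : 0 ≤ q e) (hq1 : q e ≤ 1) :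
    1 - q e ≤ ∑ S ∈ Finset.univ.filter (fun S : Finset E => (S ∩ P).Nonempty), segLen q C S := by
  classical
  rw [sum_segLen_filter]
  have hsub : Set.Ico (q e) 1 ⊆
      ⋃ S ∈ Finset.univ.filter (fun S : Finset E => (S ∩ P).Nonempty), segSet q C S := by
    intro u hu
    obtain ⟨h1, h2⟩ := hu
    have huI : u ∈ Set.Ico (0:ℝ) 1 := ⟨le_trans hq0 h1, h2⟩
    have hSmem : (C.filter fun f => q f ≤ u) ∈
        Finset.univ.filter (fun S : Finset E => (S ∩ P).Nonempty) := by
      refine Finset.mem_filter.2 ⟨Finset.mem_univ _, ⟨e, ?_⟩⟩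
      rw [Finset.mem_inter, Finset.mem_filter]
      exact ⟨⟨heC, h1⟩, heP⟩
    exact Set.mem_biUnion hSmem (⟨huI, rfl⟩ : u ∈ segSet q C (C.filter (fun f => q f ≤ u)))
  have hmono : volume (Set.Ico (q e) 1) ≤ volume (⋃ S ∈ Finset.univ.filter
      (fun S : Finset E => (S ∩ P).Nonempty), segSet q C S) := measure_mono hsub
  have hne : volume (⋃ S ∈ Finset.univ.filter
      (fun S : Finset E => (S ∩ P).Nonempty), segSet q C S) ≠ ⊤ := by
    have hle : volume (⋃ S ∈ Finset.univ.filter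
        (fun S : Finset E => (S ∩ P).Nonempty), segSet q C S) ≤ volume (Set.Ico (0:ℝ) 1) :=
      measure_mono (Set.iUnion₂_subset fun S _ => segSet_subset q C S)
    refine ne_top_of_le_ne_top ?_ hle
    rw [Real.volume_Ico]; exact ENNReal.ofReal_ne_top
  calc 1 - q e = (volume (Set.Ico (q e) 1)).toReal := by
        rw [Real.volume_Ico, ENNReal.toReal_ofReal (by linarith)]
    _ ≤ _ := (ENNReal.toReal_le_toReal (by rw [Real.volume_Ico]; exact ENNReal.ofReal_ne_top) hne).2 hmono

theorem segLen_empty_pos (q : E → ℝ) (C : Finset E) (hq : ∀ e, 0 < q e) :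
    0 < segLen q C ∅ := by
  classical
  set m0 : ℝ := if h : C.Nonempty then min 1 (C.inf' h q) else 1 with hm0
  have hm0pos : 0 < m0 := by
    rw [hm0]
    split
    · rename_i h
      obtain ⟨f, hf, hfq⟩ := Finset.exists_mem_eq_inf' h q
      exact lt_min zero_lt_one (by rw [hfq]; exact hq f)
    · exact zero_lt_one
  have hm0le1 : m0 ≤ 1 := by
    rw [hm0]; split
    · exact min_le_left _ _
    · exact le_rfl
  have hsub : Set.Ico (0:ℝ) m0 ⊆ segSet q C ∅ := by
    intro u hu
    obtain ⟨h1, h2⟩ := hu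
    refine ⟨⟨h1, lt_of_lt_of_le h2 hm0le1⟩, ?_⟩
    rw [Finset.filter_eq_empty_iff]
    intro f hf
    have : m0 ≤ q f := by
      rw [hm0]
      rw [dif_pos ⟨f, hf⟩]
      exact le_trans (min_le_right _ _) (Finset.inf'_le q hf)
    exact not_le.2 (lt_of_lt_of_le h2 this)
  have hmono : volume (Set.Ico (0:ℝ) m0) ≤ volume (segSet q C ∅) := measure_mono hsub
  rw [Real.volume_Ico] at hmono
  have h0' : (0:ENNReal) < ENNReal.ofReal (m0 - 0) := by
    rw [ENNReal.ofReal_pos]; linarith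
  have hpos : 0 < volume (segSet q C ∅) := lt_of_lt_of_le h0' hmono
  exact ENNReal.toReal_pos (ne_of_gt hpos) (volume_segSet_ne_top q C ∅)

end Measure
set_option maxHeartbeats 1000000 in
/-- If `(E,𝒫)` has the weak MFMC property, `μ` is strictly positive, `ρ` satisfies
condition (⋆) for `π_P = 1 − ∑_{e∈P} μ_e`, and every element with positive marginal
lies on a tight path, then `ρ` admits a feasible decomposition placing positive
probability on the empty set. -/
theorem feasible_decomposition_with_empty_set {E : Type*} [Fintype E] [DecidableEq E]
    (Ps : Finset (Finset E))
    (hMFMC : ∀ y ∈ Set.extremePoints ℝ (coverPolyhedron Ps), ∀ e, ∃ n : ℤ, y e = n)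
    (μ : E → ℝ) (hμ : ∀ e, 0 < μ e ∧ μ e ≤ 1)
    (π : Finset E → ℝ) (hπ : ∀ P ∈ Ps, π P = 1 - ∑ e ∈ P, μ e)
    (ρ : E → ℝ) (hρ : ∀ e, 0 ≤ ρ e ∧ ρ e ≤ 1)
    (hcond : ∀ P ∈ Ps, π P ≤ ∑ e ∈ P, ρ e)
    (htight : ∀ e : E, 0 < ρ e → ∃ P ∈ Ps, e ∈ P ∧ ∑ f ∈ P, ρ f = π P) :
    ∃ x : Finset E → ℝ, IsFeasibleDecomp Ps π ρ x ∧ 0 < x ∅ := by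
  classical
  set y : E → ℝ := fun e => min (ρ e + μ e) 1 with hy
  have hρlt1 : ∀ e, ρ e < 1 := by
    intro e
    rcases eq_or_lt_of_le (hρ e).1 with h | h
    · rw [← h]; exact zero_lt_one
    · obtain ⟨P, hP, heP, hts⟩ := htight e h
      have h1 : ρ e ≤ ∑ f ∈ P, ρ f := Finset.single_le_sum (fun f _ => (hρ f).1) heP
      have h2 : μ e ≤ ∑ f ∈ P, μ f := Finset.single_le_sum (fun f _ => (hμ f).1.le) heP
      rw [hts, hπ P hP] at h1
      linarith [(hμ e).1]
  have hy_pos : ∀ e, 0 < y e := fun e =>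
    lt_min (by linarith [(hρ e).1, (hμ e).1]) zero_lt_one
  have hy_le1 : ∀ e, y e ≤ 1 := fun e => min_le_right _ _
  have hρ_lt_y : ∀ e, ρ e < y e := fun e => lt_min (by linarith [(hμ e).1]) (hρlt1 e)
  have hy_le : ∀ e, y e ≤ ρ e + μ e := fun e => min_le_left _ _
  set q : E → ℝ := fun e => 1 - ρ e / y e with hq
  have hq_pos : ∀ e, 0 < q e := by
    intro e
    have h1 : ρ e / y e < 1 := (div_lt_one (hy_pos e)).2 (hρ_lt_y e)
    simp only [hq]; linarith
  have hq_le1 : ∀ e, q e ≤ 1 := by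
    intro e
    have h0 : 0 ≤ ρ e / y e := div_nonneg (hρ e).1 (hy_pos e).le
    simp only [hq]; linarith
  have hq_mul : ∀ e, (1 - q e) * y e = ρ e := by
    intro e
    simp only [hq, sub_sub_cancel]
    rw [div_mul_cancel₀]
    exact ne_of_gt (hy_pos e)
  have hq_mul' : ∀ e, q e * y e = y e - ρ e := by
    intro e
    have := hq_mul e
    nlinarith [hq_mul e]
  -- y lies in the truncated polytope
  have hyQ : y ∈ QSet Ps := by
    refine ⟨⟨fun e => (hy_pos e).le, fun P hP => ?_⟩, hy_le1⟩
    by_cases hall : ∀ e ∈ P, ρ e + μ e < 1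
    · have heq : ∑ e ∈ P, y e = ∑ e ∈ P, (ρ e + μ e) :=
        Finset.sum_congr rfl fun e he => min_eq_left (hall e he).le
      rw [heq, Finset.sum_add_distrib]
      have hc := hcond P hP
      rw [hπ P hP] at hc
      linarith
    · push_neg at hall
      obtain ⟨e, heP, hge⟩ := hall
      have hye : y e = 1 := min_eq_right hge
      have hle := Finset.single_le_sum (fun f _ => (hy_pos f).le) heP
      linarith
  -- convex decomposition into 0-1 covers
  have hconv := QSet_subset_convexHull Ps hMFMC hyQ
  rw [_root_.convexHull_eq] at hconv
  obtain ⟨ι, t, w, zf, hw0, hw1, hzS, hcm⟩ := hconv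
  have hcm' : ∑ i ∈ t, w i • zf i = y := by
    rw [← Finset.centerMass_eq_of_sum_1 t zf hw1]
    exact hcm
  set Cov : ι → Finset E := fun i => Finset.univ.filter (fun e => zf i e = 1) with hCov
  have hmemCov : ∀ i, ∀ e, e ∈ Cov i ↔ zf i e = 1 := by
    intro i e; simp [hCov]
  have hz0 : ∀ i ∈ t, ∀ e, e ∉ Cov i → zf i e = 0 := by
    intro i hi e he
    rcases (hzS i hi).2 e with h | h
    · exact h
    · exact absurd ((hmemCov i e).2 h) he
  have hznn : ∀ i ∈ t, ∀ e, 0 ≤ zf i e := by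
    intro i hi e
    rcases (hzS i hi).2 e with h | h <;> rw [h] <;> norm_num
  have hyeq : ∀ e, ∑ i ∈ t, w i * zf i e = y e := by
    intro e
    have hc := congrFun hcm' e
    rw [← hc]
    simp
  set x : Finset E → ℝ := fun S => ∑ i ∈ t, w i * segLen q (Cov i) S with hx
  have hxnn : ∀ S, 0 ≤ x S := fun S =>
    Finset.sum_nonneg fun i hi => mul_nonneg (hw0 i hi) (segLen_nonneg _ _ _)
  refine ⟨x, ⟨hxnn, ?_, ?_, ?_⟩, ?_⟩
  · -- total mass
    rw [hx]
    rw [Finset.sum_comm]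
    have : ∀ i ∈ t, ∑ S : Finset E, w i * segLen q (Cov i) S = w i := by
      intro i hi
      rw [← Finset.mul_sum, sum_segLen_univ q (Cov i), mul_one]
    rw [Finset.sum_congr rfl this]
    exact hw1
  · -- marginals
    intro e
    have hswap : ∑ S ∈ Finset.univ.filter (fun S : Finset E => e ∈ S), x S
        = ∑ i ∈ t, w i * ∑ S ∈ Finset.univ.filter (fun S : Finset E => e ∈ S),
            segLen q (Cov i) S := by
      rw [hx, Finset.sum_comm]
      exact Finset.sum_congr rfl fun i _ => by rw [Finset.mul_sum]
    rw [hswap]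
    have hterm : ∀ i ∈ t, w i * ∑ S ∈ Finset.univ.filter (fun S : Finset E => e ∈ S),
        segLen q (Cov i) S = (1 - q e) * (w i * zf i e) := by
      intro i hi
      rw [sum_segLen_mem q (Cov i) e (hq_pos e).le (hq_le1 e)]
      by_cases hc : e ∈ Cov i
      · rw [if_pos hc, (hmemCov i e).1 hc]
        ring
      · rw [if_neg hc, hz0 i hi e hc]
        ring
    rw [Finset.sum_congr rfl hterm, ← Finset.mul_sum, hyeq e, hq_mul e]
  · -- hitting probabilities
    intro P hP
    have htne : t.Nonempty := by
      rcases t.eq_empty_or_nonempty with h | h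
      · rw [h] at hw1; simp at hw1
      · exact h
    have hex : ∀ i ∈ t, ∃ e, e ∈ P ∧ e ∈ Cov i := by
      intro i hi
      by_contra hno
      push_neg at hno
      have hzero : ∑ e ∈ P, zf i e = 0 :=
        Finset.sum_eq_zero fun e he => hz0 i hi e (hno e he)
      have hone := ((hzS i hi).1).1.2 P hP
      rw [hzero] at hone
      linarith
    have hEne : Nonempty E := by
      obtain ⟨i, hi⟩ := htne
      obtain ⟨e, _, _⟩ := hex i hi
      exact ⟨e⟩
    set ec : ι → E := fun i => if h : ∃ e, e ∈ P ∧ e ∈ Cov i then h.choose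
      else Classical.arbitrary E with hec
    have hecP : ∀ i ∈ t, ec i ∈ P := by
      intro i hi
      rw [hec]
      simp only [dif_pos (hex i hi)]
      exact (hex i hi).choose_spec.1
    have hecC : ∀ i ∈ t, ec i ∈ Cov i := by
      intro i hi
      rw [hec]
      simp only [dif_pos (hex i hi)]
      exact (hex i hi).choose_spec.2
    -- the double-counting bound
    have hdc : ∑ i ∈ t, w i * q (ec i) ≤ ∑ e ∈ P, (y e - ρ e) := by
      have hstep : ∀ i ∈ t, w i * q (ec i)
          = ∑ e ∈ P, (if e = ec i then w i * q e else 0) := by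
        intro i hi
        rw [Finset.sum_ite_eq' P (ec i) (fun e => w i * q e), if_pos (hecP i hi)]
      rw [Finset.sum_congr rfl hstep, Finset.sum_comm]
      refine Finset.sum_le_sum fun e heP => ?_
      have hperm : ∑ i ∈ t, (if e = ec i then w i * q e else 0)
          ≤ ∑ i ∈ t, q e * (w i * zf i e) := by
        refine Finset.sum_le_sum fun i hi => ?_
        by_cases hcase : e = ec i
        · rw [if_pos hcase]
          have : zf i e = 1 := (hmemCov i e).1 (hcase ▸ hecC i hi)
          rw [this]
          ring_nf
          exact le_refl _
        · rw [if_neg hcase]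
          exact mul_nonneg (hq_pos e).le (mul_nonneg (hw0 i hi) (hznn i hi e))
      refine le_trans hperm ?_
      rw [← Finset.mul_sum, hyeq e, hq_mul' e]
    have hhit : ∀ i ∈ t, 1 - q (ec i) ≤ ∑ S ∈ Finset.univ.filter
        (fun S : Finset E => (S ∩ P).Nonempty), segLen q (Cov i) S := by
      intro i hi
      exact sum_segLen_hit q (Cov i) P (ec i) (hecC i hi) (hecP i hi)
        (hq_pos (ec i)).le (hq_le1 (ec i))
    have hswap : ∑ S ∈ Finset.univ.filter (fun S : Finset E => (S ∩ P).Nonempty), x S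
        = ∑ i ∈ t, w i * ∑ S ∈ Finset.univ.filter (fun S : Finset E => (S ∩ P).Nonempty),
            segLen q (Cov i) S := by
      rw [hx, Finset.sum_comm]
      exact Finset.sum_congr rfl fun i _ => by rw [Finset.mul_sum]
    rw [hswap]
    have hlow : ∑ i ∈ t, w i * (1 - q (ec i))
        ≤ ∑ i ∈ t, w i * ∑ S ∈ Finset.univ.filter
            (fun S : Finset E => (S ∩ P).Nonempty), segLen q (Cov i) S :=
      Finset.sum_le_sum fun i hi => mul_le_mul_of_nonneg_left (hhit i hi) (hw0 i hi)
    have hval : ∑ i ∈ t, w i * (1 - q (ec i)) = 1 - ∑ i ∈ t, w i * q (ec i) := by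
      have : ∀ i ∈ t, w i * (1 - q (ec i)) = w i - w i * q (ec i) := fun i _ => by ring
      rw [Finset.sum_congr rfl this, Finset.sum_sub_distrib, hw1]
    have hμbound : ∑ e ∈ P, (y e - ρ e) ≤ ∑ e ∈ P, μ e :=
      Finset.sum_le_sum fun e _ => by linarith [hy_le e]
    rw [hπ P hP]
    have : 1 - ∑ e ∈ P, μ e ≤ ∑ i ∈ t, w i * (1 - q (ec i)) := by
      rw [hval]
      linarith
    linarith
  · -- positive probability of the empty set
    obtain ⟨i0, hi0, hwi0⟩ : ∃ i ∈ t, 0 < w i := by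
      by_contra hno
      push_neg at hno
      have : ∑ i ∈ t, w i ≤ 0 :=
        Finset.sum_nonpos fun i hi => hno i hi
      rw [hw1] at this
      linarith
    have hpos : 0 < w i0 * segLen q (Cov i0) ∅ :=
      mul_pos hwi0 (segLen_empty_pos q (Cov i0) hq_pos)
    have hsingle : w i0 * segLen q (Cov i0) ∅ ≤ x ∅ :=
      Finset.single_le_sum (fun i hi => mul_nonneg (hw0 i hi) (segLen_nonneg _ _ _)) hi0
    linarith
end

section
/- Let D = (V,A) be a DAG with s,t ∈ V, 𝒫 the set of s-t-paths, and π ∈ [0,1]^𝒫 satisfying the conservation law π_P + π_Q = π_{P×_e Q} + π_{Q×_e P} for all P,Q ∈ 𝒫 and e ∈ P∩Q. Define π̄(y) := ∑_{P∈𝒫} (1−π_P) y_P for y ∈ ℝ^𝒫 and y_e := ∑_{P∋e} y_P for e ∈ V∪A. Then for all z, z' ∈ ℝ_+^𝒫 with z_e ≥ z'_e for all e ∈ V∪A, it holds that π̄(z) ≥ π̄(z'). -/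
open Finset

variable {V : Type*} [Fintype V] [DecidableEq V]

namespace PbAux
open List

set_option linter.unusedSectionVars false

section lists
variable {α : Type*} [DecidableEq α]

lemma takeWhile_append_of_forall {p : α → Bool} {l₁ : List α} (l₂ : List α)
    (h : ∀ x ∈ l₁, p x = true) :
    (l₁ ++ l₂).takeWhile p = l₁ ++ l₂.takeWhile p := by
  induction l₁ with
  | nil => simp
  | cons a l ih =>
      simp only [List.cons_append, takeWhile_cons, h a (by simp)]
      rw [ih (fun x hx => h x (by simp [hx]))]
      simp

lemma dropWhile_append_of_forall {p : α → Bool} {l₁ : List α} (h : ∀ x ∈ l₁, p x = true)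
    (l₂ : List α) :
    (l₁ ++ l₂).dropWhile p = l₂.dropWhile p := by
  induction l₁ with
  | nil => simp
  | cons a l ih =>
      simp only [List.cons_append, dropWhile_cons, h a (by simp)]
      exact ih (fun x hx => h x (by simp [hx]))

lemma ne_of_mem_takeWhile {v x : α} {l : List α} (h : x ∈ l.takeWhile (· ≠ v)) : x ≠ v := by
  simpa using mem_takeWhile_imp h

lemma takeWhile_dropWhile_decomp {v : α} {l : List α} (h : v ∈ l) :
    ∃ r, l = l.takeWhile (· ≠ v) ++ v :: r ∧ l.dropWhile (· ≠ v) = v :: r := by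
  induction l with
  | nil => simp at h
  | cons a l ih =>
      by_cases hav : a = v
      · subst hav; exact ⟨l, by simp, by simp⟩
      · rcases List.mem_cons.1 h with h' | h'
        · exact absurd h'.symm hav
        · rcases ih h' with ⟨r, hr1, hr2⟩
          refine ⟨r, ?_, ?_⟩
          · simp only [takeWhile_cons]
            simp only [show (decide (a ≠ v)) = true by simp [hav], if_true]
            simpa using hr1
          · simpa [dropWhile_cons, hav] using hr2

lemma takeWhile_eq_of_nodup {u : α} {l l₁ l₂ : List α} (hn : l.Nodup)
    (hl : l = l₁ ++ u :: l₂) :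
    l.takeWhile (· ≠ u) = l₁ ∧ l.dropWhile (· ≠ u) = u :: l₂ := by
  have hu : ∀ x ∈ l₁, (decide (x ≠ u)) = true := by
    intro x hx
    have hd := disjoint_of_nodup_append (hl ▸ hn)
    simp only [decide_eq_true_eq]
    intro hxu; exact hd hx (hxu ▸ List.mem_cons_self)
  constructor
  · rw [hl, takeWhile_append_of_forall _ hu]
    simp
  · rw [hl, dropWhile_append_of_forall hu]
    simp

lemma mem_zip_tail {u v : α} {l : List α} :
    (u, v) ∈ l.zip l.tail ↔ ∃ l₁ l₂, l = l₁ ++ u :: v :: l₂ := by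
  constructor
  · intro h
    induction l with
    | nil => simp at h
    | cons a l ih =>
        cases l with
        | nil => simp at h
        | cons b m =>
            simp only [tail_cons, zip_cons_cons, List.mem_cons] at h
            rcases h with h | h
            · obtain ⟨h1, h2⟩ := Prod.mk.injEq u v a b ▸ h
              exact ⟨[], m, by simp [← h1, ← h2]⟩
            · rcases ih (by simpa using h) with ⟨l₁, l₂, hl⟩
              exact ⟨a :: l₁, l₂, by simp [hl]⟩
  · rintro ⟨l₁, l₂, rfl⟩
    induction l₁ with
    | nil => simp [zip_cons_cons]
    | cons a m ih =>
        cases m with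
        | nil =>
            simp only [List.nil_append, List.cons_append] at ih ⊢
            cases l₂ <;> simp [zip_cons_cons] at ih ⊢
        | cons b m' =>
            simp only [List.cons_append, tail_cons, zip_cons_cons, List.mem_cons] at ih ⊢
            tauto

lemma mem_of_zip_tail {u v : α} {l : List α} (h : (u, v) ∈ l.zip l.tail) :
    u ∈ l ∧ v ∈ l := by
  rcases mem_zip_tail.1 h with ⟨l₁, l₂, rfl⟩
  constructor <;> simp

lemma zip_tail_nodup : ∀ {l : List α}, l.Nodup → (l.zip l.tail).Nodup := by
  intro l
  induction l with
  | nil => simp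
  | cons a l ih =>
      intro h
      cases l with
      | nil => simp
      | cons b m =>
          simp only [tail_cons, zip_cons_cons]
          refine List.nodup_cons.2 ⟨?_, ih (List.nodup_cons.1 h).2⟩
          intro hmem
          have := (List.of_mem_zip hmem).1
          exact (List.nodup_cons.1 h).1 (by simpa using this)

lemma sum_zip_tail_tele (f : α → ℝ) :
    ∀ (l : List α) (a : α),
      (((a :: l).zip l).map (fun e => f e.2 - f e.1)).sum
        = f ((a :: l).getLast (by simp)) - f a := by
  intro l
  induction l with
  | nil => intro a; simp
  | cons b m ih =>
      intro a
      simp only [zip_cons_cons, List.map_cons, List.sum_cons]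
      rw [ih b]
      have : (a :: b :: m).getLast (by simp) = (b :: m).getLast (by simp) := by
        simp [List.getLast_cons]
      rw [this]
      ring

lemma sum_zip_tail_tele' (f : α → ℝ) {l : List α} {s t : α}
    (hh : l.head? = some s) (hl : l.getLast? = some t) :
    ((l.zip l.tail).map (fun e => f e.2 - f e.1)).sum = f t - f s := by
  cases l with
  | nil => simp at hh
  | cons a m =>
      have ha : s = a := by
        simp only [head?_cons, Option.some.injEq] at hh
        exact hh.symm
      have h2 : (a :: m).getLast (by simp) = t := by
        have h' := List.getLast?_eq_getLast (l := a :: m) (by simp)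
        rw [h'] at hl
        simpa using hl
      rw [ha]
      simpa [h2] using sum_zip_tail_tele f m a

end lists

/-- splice computed on explicit decompositions. -/
lemma splice_eq_glue {p q : List V} {v : V} {p1 p2 q1 q2 : List V}
    (hpn : p.Nodup) (hqn : q.Nodup)
    (hpdec : p = p1 ++ v :: p2) (hqdec : q = q1 ++ v :: q2) :
    splice p q v = p1 ++ v :: q2 := by
  rw [splice, (takeWhile_eq_of_nodup hpn hpdec).1, (takeWhile_eq_of_nodup hqn hqdec).2]

/-- Gluing two paths at a common node yields a path (needs acyclicity). -/
lemma glue_isPathOn {Arcs : Finset (V × V)} {s t : V} (hacyc : IsAcyclic Arcs)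
    {v : V} {p1 p2 q1 q2 : List V}
    (hp : IsPathOn Arcs s t (p1 ++ v :: p2)) (hq : IsPathOn Arcs s t (q1 ++ v :: q2)) :
    IsPathOn Arcs s t (p1 ++ v :: q2) := by
  obtain ⟨hph, hpl, hpn, hpc⟩ := hp
  obtain ⟨hqh, hql, hqn, hqc⟩ := hq
  refine ⟨?_, ?_, ?_, ?_⟩
  · rw [head?_append] at hph ⊢
    cases p1 with
    | nil => simpa using hph
    | cons a l => simpa using hph
  · rw [getLast?_append] at hql ⊢
    rw [getLast?_append] at hpl
    cases hq2 : (v :: q2).getLast? with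
    | none => simp at hq2
    | some w =>
        rw [hq2] at hql
        rw [show ∀ (b : Option V), (some w).or b = some w from fun b => rfl] at hql ⊢
        exact hql
  · rw [List.nodup_append]
    refine ⟨hpn.sublist (sublist_append_left _ _), hqn.sublist (sublist_append_right _ _), ?_⟩
    rintro x hx1 _ hx2 rfl
    have hxv : x ≠ v := by
      rintro rfl
      exact (disjoint_of_nodup_append hpn) hx1 List.mem_cons_self
    have hxq2 : x ∈ q2 := by
      rcases List.mem_cons.1 hx2 with h | h
      · exact absurd h hxv
      · exact h
    obtain ⟨a, b, hab⟩ := List.append_of_mem hx1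
    obtain ⟨c, d, hcd⟩ := List.append_of_mem hxq2
    have hchain1 : Chain (fun u w => (u, w) ∈ Arcs) x (b ++ v :: p2) := by
      have hsub : x :: (b ++ v :: p2) <:+ p1 ++ v :: p2 := ⟨a, by rw [hab]; simp⟩
      exact hpc.suffix hsub
    have hxv' := (isChain_cons_split.1 hchain1).1
    have hchain2 : Chain (fun u w => (u, w) ∈ Arcs) v (c ++ x :: d) := by
      have hsub : v :: (c ++ x :: d) <:+ q1 ++ v :: q2 := ⟨q1, by rw [hcd]⟩
      exact hqc.suffix hsub
    have hvx := (isChain_cons_split.1 hchain2).1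
    have hcyc : Chain (fun u w => (u, w) ∈ Arcs) x (b ++ v :: (c ++ [x])) :=
      isChain_cons_split.2 ⟨hxv', hvx⟩
    exact hacyc x _ hcyc (by simp)
  · unfold Chain' at hpc hqc ⊢
    rw [isChain_append] at hpc hqc ⊢
    exact ⟨hpc.1, hqc.2.1, hpc.2.2⟩

/-- Splice closure. -/
lemma splice_isPathOn {Arcs : Finset (V × V)} {s t : V} (hacyc : IsAcyclic Arcs)
    {p q : List V} (hp : IsPathOn Arcs s t p) (hq : IsPathOn Arcs s t q)
    {v : V} (hvp : v ∈ p) (hvq : v ∈ q) :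
    IsPathOn Arcs s t (splice p q v) := by
  obtain ⟨p2, hpdec, -⟩ := takeWhile_dropWhile_decomp hvp
  obtain ⟨q2, hqdec, -⟩ := takeWhile_dropWhile_decomp hvq
  rw [splice_eq_glue hp.2.2.1 hq.2.2.1 hpdec hqdec]
  exact glue_isPathOn hacyc (hpdec ▸ hp) (hqdec ▸ hq)

end PbAux

open PbAux List in
/-- Monotonicity of `π̄(y) = ∑_P (1−π_P) y_P` under the conservation law: if
`z, z' ≥ 0` and the load of `z` dominates the load of `z'` on every node and arc,
then `π̄(z) ≥ π̄(z')`. -/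
theorem pibar_monotone
    (Arcs : Finset (V × V)) (s t : V) (hacyc : IsAcyclic Arcs)
    (Ps : Finset (List V)) (hPs : ∀ p : List V, p ∈ Ps ↔ IsPathOn Arcs s t p)
    (π : List V → ℝ) (hπ01 : ∀ p ∈ Ps, 0 ≤ π p ∧ π p ≤ 1)
    (hcons : ∀ p ∈ Ps, ∀ q ∈ Ps, ∀ v : V, v ∈ p → v ∈ q →
      π (splice p q v) + π (splice q p v) = π p + π q)
    (z z' : List V → ℝ)
    (hz : ∀ p ∈ Ps, 0 ≤ z p) (hz' : ∀ p ∈ Ps, 0 ≤ z' p)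
    (hload : ∀ e : V ⊕ V × V,
      ∑ p ∈ Ps.filter (fun p => e ∈ pathElems p), z' p ≤
        ∑ p ∈ Ps.filter (fun p => e ∈ pathElems p), z p) :
    ∑ p ∈ Ps, (1 - π p) * z' p ≤ ∑ p ∈ Ps, (1 - π p) * z p := by
  classical
  rcases Ps.eq_empty_or_nonempty with rfl | hne
  · simp
  obtain ⟨p₀, hp₀⟩ := hne
  have hne : Ps.Nonempty := ⟨p₀, hp₀⟩
  -- Basic facts about paths in Ps
  have hpath : ∀ p ∈ Ps, IsPathOn Arcs s t p := fun p hp => (hPs p).1 hp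
  have hnodup : ∀ p ∈ Ps, p.Nodup := fun p hp => (hpath p hp).2.2.1
  have hheadd : ∀ p ∈ Ps, ∃ r, p = s :: r := by
    intro p hp
    cases hP : p with
    | nil => rw [hP] at hp; have := (hpath _ hp).1; simp at this
    | cons a r =>
        have := (hpath p hp).1
        rw [hP] at this
        simp only [head?_cons, Option.some.injEq] at this
        exact ⟨r, by rw [this]⟩
  have hlastd : ∀ p ∈ Ps, ∃ l', p = l' ++ [t] := by
    intro p hp
    exact List.getLast?_eq_some_iff.1 (hpath p hp).2.1
  have hsmem : ∀ p ∈ Ps, s ∈ p := by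
    intro p hp; obtain ⟨r, hr⟩ := hheadd p hp; rw [hr]; simp
  have htmem : ∀ p ∈ Ps, t ∈ p := by
    intro p hp; obtain ⟨l', hl'⟩ := hlastd p hp; rw [hl']; simp
  have hclose : ∀ p ∈ Ps, ∀ q ∈ Ps, ∀ v : V, v ∈ p → v ∈ q → splice p q v ∈ Ps := by
    intro p hp q hq v hvp hvq
    exact (hPs _).2 (splice_isPathOn hacyc (hpath p hp) (hpath q hq) hvp hvq)
  -- degenerate splices
  have hsplice_s : ∀ p ∈ Ps, ∀ q ∈ Ps, splice p q s = q := by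
    intro p hp q hq
    obtain ⟨r, hr⟩ := hheadd p hp
    obtain ⟨r', hr'⟩ := hheadd q hq
    rw [splice, hr, hr']
    simp
  have hsplice_t : ∀ p ∈ Ps, ∀ q ∈ Ps, splice p q t = p := by
    intro p hp q hq
    obtain ⟨l', hl'⟩ := hlastd p hp
    obtain ⟨m', hm'⟩ := hlastd q hq
    rw [splice, (takeWhile_eq_of_nodup (hnodup p hp) hl').1,
      (takeWhile_eq_of_nodup (hnodup q hq) hm').2, ← hl']
  -- reference paths
  obtain ⟨R, hR⟩ : ∃ R : V → List V, ∀ v : V, (∃ p ∈ Ps, v ∈ p) → R v ∈ Ps ∧ v ∈ R v := by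
    refine ⟨fun v => if h : ∃ p ∈ Ps, v ∈ p then h.choose else [], fun v h => ?_⟩
    dsimp only
    rw [dif_pos h]
    exact ⟨h.choose_spec.1, h.choose_spec.2⟩
  -- the ν constant
  obtain ⟨ν, hνle, q₀, hq₀, hνeq⟩ :
      ∃ ν : ℝ, (∀ p ∈ Ps, ν ≤ 1 - π p) ∧ ∃ q ∈ Ps, ν = 1 - π q := by
    refine ⟨(Ps.image (fun p => 1 - π p)).min' (hne.image (fun p => 1 - π p)), ?_, ?_⟩
    · intro p hp
      exact Finset.min'_le _ _ (Finset.mem_image_of_mem _ hp)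
    · obtain ⟨q, hq, hq'⟩ := Finset.mem_image.1 (Finset.min'_mem _ (hne.image (fun p => 1 - π p)))
      exact ⟨q, hq, hq'.symm⟩
  have hν0 : 0 ≤ ν := by
    rw [hνeq]; linarith [(hπ01 q₀ hq₀).2]
  -- the potential D
  obtain ⟨D, hDle, hDmem⟩ :
      ∃ D : V → ℝ,
        (∀ v : V, ∀ q ∈ Ps, v ∈ q →
          (1 - π (R v)) - (1 - π (splice q (R v) v)) ≤ D v) ∧
        (∀ v : V, (∃ p ∈ Ps, v ∈ p) →
          ∃ q ∈ Ps, v ∈ q ∧ D v = (1 - π (R v)) - (1 - π (splice q (R v) v))) := by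
    refine ⟨fun v => if h : (Ps.filter (fun q => v ∈ q)).Nonempty then
        ((Ps.filter (fun q => v ∈ q)).image
          (fun q => (1 - π (R v)) - (1 - π (splice q (R v) v)))).max'
          (h.image (fun q => (1 - π (R v)) - (1 - π (splice q (R v) v))))
      else 0, ?_, ?_⟩
    · intro v q hq hvq
      have hnonempty : (Ps.filter (fun q => v ∈ q)).Nonempty :=
        ⟨q, Finset.mem_filter.2 ⟨hq, hvq⟩⟩
      dsimp only
      rw [dif_pos hnonempty]
      apply Finset.le_max'
      exact Finset.mem_image_of_mem _ (Finset.mem_filter.2 ⟨hq, hvq⟩)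
    · intro v hv
      obtain ⟨p, hp, hvp⟩ := hv
      have hnonempty : (Ps.filter (fun q => v ∈ q)).Nonempty :=
        ⟨p, Finset.mem_filter.2 ⟨hp, hvp⟩⟩
      dsimp only
      rw [dif_pos hnonempty]
      obtain ⟨q, hq, hq'⟩ := Finset.mem_image.1 (Finset.max'_mem
        ((Ps.filter (fun q => v ∈ q)).image
          (fun q => (1 - π (R v)) - (1 - π (splice q (R v) v))))
        (hnonempty.image (fun q => (1 - π (R v)) - (1 - π (splice q (R v) v)))))
      exact ⟨q, (Finset.mem_filter.1 hq).1, (Finset.mem_filter.1 hq).2, hq'.symm⟩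
  -- D at s and t
  have hDs : D s = 0 := by
    obtain ⟨q, hq, hvq, hDeq⟩ := hDmem s ⟨p₀, hp₀, hsmem p₀ hp₀⟩
    have hRs := hR s ⟨p₀, hp₀, hsmem p₀ hp₀⟩
    have h1 : splice q (R s) s = R s := hsplice_s q hq (R s) hRs.1
    have h2 : splice p₀ (R s) s = R s := hsplice_s p₀ hp₀ (R s) hRs.1
    have hle := hDle s p₀ hp₀ (hsmem p₀ hp₀)
    rw [h2] at hle
    rw [h1] at hDeq
    rw [hDeq]
    linarith
  have hDt : D t = (1 - π (R t)) - ν := by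
    have hRt := hR t ⟨p₀, hp₀, htmem p₀ hp₀⟩
    obtain ⟨q, hq, hvq, hDeq⟩ := hDmem t ⟨p₀, hp₀, htmem p₀ hp₀⟩
    have h1 : splice q (R t) t = q := hsplice_t q hq (R t) hRt.1
    have h2 : splice q₀ (R t) t = q₀ := hsplice_t q₀ hq₀ (R t) hRt.1
    have hle := hDle t q₀ hq₀ (htmem q₀ hq₀)
    rw [h2, ← hνeq] at hle
    have := hνle q hq
    rw [h1] at hDeq
    rw [hDeq]
    linarith
  -- the key well-definedness identity
  have hkey : ∀ (u v : V) (p : List V), p ∈ Ps → (u, v) ∈ p.zip p.tail →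
      (1 - π (splice (R v) p v)) - (1 - π (splice (R u) p u))
        = (1 - π (R v)) -
          (1 - π ((R u).takeWhile (· ≠ u) ++ u :: (R v).dropWhile (· ≠ v))) := by
    intro u v p hp hzip
    obtain ⟨l1, l2, hpdec⟩ := mem_zip_tail.1 hzip
    have hup : u ∈ p := (mem_of_zip_tail hzip).1
    have hvp : v ∈ p := (mem_of_zip_tail hzip).2
    have hRu := hR u ⟨p, hp, hup⟩
    have hRv := hR v ⟨p, hp, hvp⟩
    -- A := splice (R u) p u
    have hAmem : splice (R u) p u ∈ Ps := hclose (R u) hRu.1 p hp u hRu.2 hup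
    have hpu : p.dropWhile (· ≠ u) = u :: v :: l2 :=
      (takeWhile_eq_of_nodup (hnodup p hp) hpdec).2
    have hAeq : splice (R u) p u = (R u).takeWhile (· ≠ u) ++ u :: v :: l2 := by
      simp only [splice]
      rw [hpu]
    have hAv : v ∈ splice (R u) p u := by rw [hAeq]; simp
    have hAdec : splice (R u) p u = ((R u).takeWhile (· ≠ u) ++ [u]) ++ v :: l2 := by
      rw [hAeq]; simp
    have hAdrop : (splice (R u) p u).dropWhile (· ≠ v) = v :: l2 :=
      (takeWhile_eq_of_nodup (hnodup _ hAmem) hAdec).2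
    have hAtake : (splice (R u) p u).takeWhile (· ≠ v) = (R u).takeWhile (· ≠ u) ++ [u] :=
      (takeWhile_eq_of_nodup (hnodup _ hAmem) hAdec).1
    have hpdec2 : p = (l1 ++ [u]) ++ v :: l2 := by rw [hpdec]; simp
    have hpdrop : p.dropWhile (· ≠ v) = v :: l2 :=
      (takeWhile_eq_of_nodup (hnodup p hp) hpdec2).2
    -- splice (R v) A v = splice (R v) p v
    have hswap : splice (R v) (splice (R u) p u) v = splice (R v) p v := by
      simp only [splice] at hAdrop hpdrop ⊢
      rw [hAdrop, hpdrop]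
    -- splice A (R v) v is the constant list
    have hconst : splice (splice (R u) p u) (R v) v
        = (R u).takeWhile (· ≠ u) ++ u :: (R v).dropWhile (· ≠ v) := by
      simp only [splice] at hAtake ⊢
      rw [hAtake]
      simp
    have hcsv := hcons (splice (R u) p u) hAmem (R v) hRv.1 v hAv hRv.2
    rw [hswap, hconst] at hcsv
    linarith
  -- existence of μ
  obtain ⟨μ, hμnode, hμarc0, hμarc⟩ :
      ∃ μ : V ⊕ V × V → ℝ,
        (∀ w : V, μ (Sum.inl w) = if w = t then ν else 0) ∧
        (∀ uv : V × V, (¬ ∃ p ∈ Ps, uv ∈ p.zip p.tail) → μ (Sum.inr uv) = 0) ∧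
        (∀ uv : V × V, ∀ p ∈ Ps, uv ∈ p.zip p.tail →
          μ (Sum.inr uv) = (D uv.2 - (1 - π (splice (R uv.2) p uv.2)))
            - (D uv.1 - (1 - π (splice (R uv.1) p uv.1)))) := by
    refine ⟨Sum.elim (fun w => if w = t then ν else 0)
      (fun uv =>
          if h : ∃ p ∈ Ps, uv ∈ p.zip p.tail then
            (D uv.2 - (1 - π (splice (R uv.2) h.choose uv.2)))
              - (D uv.1 - (1 - π (splice (R uv.1) h.choose uv.1)))
          else 0), fun w => rfl, ?_, ?_⟩
    · intro uv h
      simp only [Sum.elim_inr]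
      rw [dif_neg h]
    · rintro ⟨u, v⟩ p hp hzip
      have h : ∃ p ∈ Ps, (u, v) ∈ p.zip p.tail := ⟨p, hp, hzip⟩
      simp only [Sum.elim_inr]
      rw [dif_pos h]
      have hc := h.choose_spec
      have h1 := hkey u v p hp hzip
      have h2 := hkey u v h.choose hc.1 hc.2
      obtain ⟨hc1, hc2⟩ := hc
      linarith
  -- nonnegativity of μ
  have hμnonneg : ∀ e : V ⊕ V × V, 0 ≤ μ e := by
    rintro (w | ⟨u, v⟩)
    · rw [hμnode]
      split <;> [exact hν0; exact le_refl 0]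
    · by_cases h : ∃ p ∈ Ps, (u, v) ∈ p.zip p.tail
      · obtain ⟨p, hp, hzip⟩ := h
        rw [hμarc (u, v) p hp hzip]
        obtain ⟨l1, l2, hpdec⟩ := mem_zip_tail.1 hzip
        have hup : u ∈ p := (mem_of_zip_tail hzip).1
        have hvp : v ∈ p := (mem_of_zip_tail hzip).2
        have hRu := hR u ⟨p, hp, hup⟩
        have hRv := hR v ⟨p, hp, hvp⟩
        -- the attaining path for D u
        obtain ⟨Q, hQ, hQu, hDu⟩ := hDmem u ⟨p, hp, hup⟩
        -- W := splice Q p u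
        have hWmem : splice Q p u ∈ Ps := hclose Q hQ p hp u hQu hup
        have hpu : p.dropWhile (· ≠ u) = u :: v :: l2 :=
          (takeWhile_eq_of_nodup (hnodup p hp) hpdec).2
        have hWeq : splice Q p u = Q.takeWhile (· ≠ u) ++ u :: v :: l2 := by
          simp only [splice]
          rw [hpu]
        have hWv : v ∈ splice Q p u := by rw [hWeq]; simp
        have hWu : u ∈ splice Q p u := by rw [hWeq]; simp
        have hWdec : splice Q p u = (Q.takeWhile (· ≠ u) ++ [u]) ++ v :: l2 := by
          rw [hWeq]; simp
        have hWdropv : (splice Q p u).dropWhile (· ≠ v) = v :: l2 :=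
          (takeWhile_eq_of_nodup (hnodup _ hWmem) hWdec).2
        have hWtakeu : (splice Q p u).takeWhile (· ≠ u) = Q.takeWhile (· ≠ u) :=
          (takeWhile_eq_of_nodup (hnodup _ hWmem) hWeq).1
        have hWdropu : (splice Q p u).dropWhile (· ≠ u) = u :: v :: l2 :=
          (takeWhile_eq_of_nodup (hnodup _ hWmem) hWeq).2
        have hpdec2 : p = (l1 ++ [u]) ++ v :: l2 := by rw [hpdec]; simp
        have hpdrop : p.dropWhile (· ≠ v) = v :: l2 :=
          (takeWhile_eq_of_nodup (hnodup p hp) hpdec2).2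
        -- splice (R v) W v = splice (R v) p v
        have hswap : splice (R v) (splice Q p u) v = splice (R v) p v := by
          simp only [splice] at hWdropv hpdrop ⊢
          rw [hWdropv, hpdrop]
        -- splice W (R u) u = splice Q (R u) u
        have hWRu : splice (splice Q p u) (R u) u = splice Q (R u) u := by
          simp only [splice] at hWtakeu ⊢
          rw [hWtakeu]
        -- splice (R u) W u = splice (R u) p u
        have hRuW : splice (R u) (splice Q p u) u = splice (R u) p u := by
          simp only [splice] at hWdropu ⊢
          rw [hWdropu, hpu]
        -- conservation at v with (W, R v)
        have hc1 := hcons (splice Q p u) hWmem (R v) hRv.1 v hWv hRv.2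
        rw [hswap] at hc1
        -- conservation at u with (W, R u)
        have hc2 := hcons (splice Q p u) hWmem (R u) hRu.1 u hWu hRu.2
        rw [hWRu, hRuW] at hc2
        -- D v bound
        have hDv := hDle v (splice Q p u) hWmem hWv
        dsimp only
        linarith
      · rw [hμarc0 _ h]
  -- sum of μ along a path equals 1 - π p
  have hsum_path : ∀ p ∈ Ps, ∑ e ∈ pathElems p, μ e = 1 - π p := by
    intro p hp
    have hdisj : Disjoint (p.toFinset.image Sum.inl)
        ((p.zip p.tail).toFinset.image (Sum.inr : V × V → V ⊕ V × V)) := by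
      simp only [Finset.disjoint_left, Finset.mem_image]
      rintro e ⟨w, hw, rfl⟩ ⟨uv, huv, h⟩
      exact absurd h (by simp)
    rw [pathElems, Finset.sum_union hdisj]
    have hnode : ∑ e ∈ p.toFinset.image Sum.inl, μ e = ν := by
      rw [Finset.sum_image (fun x _ y _ h => Sum.inl.inj h)]
      have : ∀ w ∈ p.toFinset, μ (Sum.inl w) = if w = t then ν else 0 :=
        fun w _ => hμnode w
      rw [Finset.sum_congr rfl this, Finset.sum_ite_eq' p.toFinset t (fun _ => ν)]
      simp [List.mem_toFinset.2 (htmem p hp)]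
    have harc : ∑ e ∈ (p.zip p.tail).toFinset.image Sum.inr, μ e
        = (1 - π p) - ν := by
      rw [Finset.sum_image (fun x _ y _ h => Sum.inr.inj h)]
      rw [List.sum_toFinset _ (zip_tail_nodup (hnodup p hp))]
      set f : V → ℝ := fun w => D w - (1 - π (splice (R w) p w)) with hf
      have hmapeq : (p.zip p.tail).map (fun uv => μ (Sum.inr uv))
          = (p.zip p.tail).map (fun e => f e.2 - f e.1) := by
        apply List.map_congr_left
        intro uv huv
        exact hμarc uv p hp huv
      rw [hmapeq, sum_zip_tail_tele' f (hpath p hp).1 (hpath p hp).2.1]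
      have hRt := hR t ⟨p, hp, htmem p hp⟩
      have hRs := hR s ⟨p, hp, hsmem p hp⟩
      have h1 : splice (R t) p t = R t := hsplice_t (R t) hRt.1 p hp
      have h2 : splice (R s) p s = p := hsplice_s (R s) hRs.1 p hp
      simp only [hf]
      rw [h1, h2, hDs, hDt]
      ring
    rw [hnode, harc]
    ring
  -- final computation
  rw [← sub_nonneg, ← Finset.sum_sub_distrib]
  have hgoal : ∑ p ∈ Ps, ((1 - π p) * z p - (1 - π p) * z' p)
      = ∑ p ∈ Ps, (1 - π p) * (z p - z' p) := by
    apply Finset.sum_congr rfl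
    intro p _
    ring
  rw [hgoal]
  have hexpand : ∑ p ∈ Ps, (1 - π p) * (z p - z' p)
      = ∑ e : V ⊕ V × V, μ e *
          (∑ p ∈ Ps.filter (fun p => e ∈ pathElems p), (z p - z' p)) := by
    have step1 : ∀ p ∈ Ps, (1 - π p) * (z p - z' p)
        = ∑ e ∈ pathElems p, μ e * (z p - z' p) := by
      intro p hp
      rw [← Finset.sum_mul, hsum_path p hp]
    rw [Finset.sum_congr rfl step1]
    have step2 : ∀ p ∈ Ps, ∑ e ∈ pathElems p, μ e * (z p - z' p)
        = ∑ e : V ⊕ V × V, if e ∈ pathElems p then μ e * (z p - z' p) else 0 := by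
      intro p _
      rw [← Finset.sum_filter]
      congr 1
      ext e
      simp
    rw [Finset.sum_congr rfl step2, Finset.sum_comm]
    apply Finset.sum_congr rfl
    intro e _
    rw [Finset.mul_sum, ← Finset.sum_filter]
  rw [hexpand]
  apply Finset.sum_nonneg
  intro e _
  apply mul_nonneg (hμnonneg e)
  rw [Finset.sum_sub_distrib]
  linarith [hload e]
end
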